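/- arXiv:math/0610616 — 6 statements merged into one kernel-verified Lean document; each statement's English description precedes it below -/
import Mathlib

section
/- For all n, m and k, the number of permutations of [n] with m cycles and exactly k cyclic occurrences of the consecutive pattern 213, the number with m cycles and exactly k cyclic occurrences of the consecutive pattern 231, and the number with m cycles and exactly k cyclic occurrences of the consecutive pattern 312 are all equal. -/
open scoped Classical

noncomputable section

/-- `x` is the minimal element of its cycle under `π`. -/
def isCycMin {n : ℕ} (π : Equiv.Perm (Fin n)) (x : Fin n) : Prop :=
  ∀ y : Fin n, π.SameCycle x y → x ≤ y

/-- The minimal elements of the cycles of `π`, listed in decreasing order. -/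
def cycMins {n : ℕ} (π : Equiv.Perm (Fin n)) : List (Fin n) :=
  ((List.finRange n).filter fun x => decide (isCycMin π x)).reverse

/-- The number of elements in the cycle of `x` under `π` (a fixed point has cycle length 1). -/
def cycLen {n : ℕ} (π : Equiv.Perm (Fin n)) (x : Fin n) : ℕ :=
  Nat.card {y : Fin n // π.SameCycle x y}

/-- The cycle of `x` under `π`, written as the list `x, π x, π² x, …`. -/
def seg {n : ℕ} (π : Equiv.Perm (Fin n)) (x : Fin n) : List (Fin n) :=
  (List.range (cycLen π x)).map fun j => (π ^ j) x

/-- `Ψ(π)`: the word obtained by erasing the parentheses from the standard cycle form of `π`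
(each cycle starts with its smallest element; cycles are in decreasing order of their minima). -/
def psiList {n : ℕ} (π : Equiv.Perm (Fin n)) : List (Fin n) :=
  (cycMins π).foldr (fun m acc => seg π m ++ acc) []

/-- The word `Ψ(π)` as a function `ℕ → ℕ` (positions and values both 0-indexed). -/
def wordN {n : ℕ} (π : Equiv.Perm (Fin n)) (i : ℕ) : ℕ :=
  ((psiList π).map fun x => (x : ℕ)).getD i 0

/-- Positions `i` and `j` of the word `Ψ(π)` hold elements lying in the same cycle of `π`. -/
def sameCycleAt {n : ℕ} (π : Equiv.Perm (Fin n)) (i j : ℕ) : Prop :=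
  ∃ a b : Fin n, (psiList π)[i]? = some a ∧ (psiList π)[j]? = some b ∧ π.SameCycle a b

/-- The number of cycles of `π`, fixed points included. -/
def cyc {n : ℕ} (π : Equiv.Perm (Fin n)) : ℕ :=
  Nat.card {x : Fin n // isCycMin π x}

/-- The number of cyclic occurrences of the length-3 consecutive pattern described by `P`
in `π`: positions `i, i+1, i+2` of `Ψ(π)` whose values satisfy `P` and which all lie in the
same cycle of `π`. -/
def consecC {n : ℕ} (π : Equiv.Perm (Fin n)) (P : ℕ → ℕ → ℕ → Prop) : ℕ :=
  Nat.card {i : ℕ // i + 2 < n ∧ P (wordN π i) (wordN π (i + 1)) (wordN π (i + 2)) ∧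
    sameCycleAt π i (i + 1) ∧ sameCycleAt π (i + 1) (i + 2)}

/-- The number of positions `i` so that `w i, w (i+1), w (i+2)` (all positions `< m`)
satisfy `P`. -/
def consecLine (m : ℕ) (w : ℕ → ℕ) (P : ℕ → ℕ → ℕ → Prop) : ℕ :=
  Nat.card {i : ℕ // i + 2 < m ∧ P (w i) (w (i + 1)) (w (i + 2))}

namespace EqOcc

variable {n : ℕ}

/-- The cycle class of `x` as a finset. -/
def Cl (π : Equiv.Perm (Fin n)) (x : Fin n) : Finset (Fin n) :=
  Finset.univ.filter fun y => π.SameCycle x y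

lemma mem_Cl {π : Equiv.Perm (Fin n)} {x y : Fin n} : y ∈ Cl π x ↔ π.SameCycle x y := by
  simp [Cl]

lemma self_mem_Cl {π : Equiv.Perm (Fin n)} {x : Fin n} : x ∈ Cl π x :=
  mem_Cl.2 (Equiv.Perm.SameCycle.refl _ _)

lemma Cl_eq_of_sameCycle {π : Equiv.Perm (Fin n)} {x y : Fin n}
    (h : π.SameCycle x y) : Cl π x = Cl π y := by
  ext z; simp only [mem_Cl]
  exact ⟨fun hz => h.symm.trans hz, fun hz => h.trans hz⟩

lemma cycLen_eq_card_Cl (π : Equiv.Perm (Fin n)) (x : Fin n) :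
    cycLen π x = (Cl π x).card := by
  simp [cycLen, Cl, Nat.card_eq_fintype_card, Fintype.card_subtype]

lemma Cl_eq_of_fixed {π : Equiv.Perm (Fin n)} {x : Fin n} (hx : π x = x) :
    Cl π x = {x} := by
  ext y
  simp only [mem_Cl, Finset.mem_singleton]
  constructor
  · rintro ⟨k, hk⟩
    rw [← hk, Equiv.Perm.zpow_apply_eq_self_of_apply_eq_self hx]
  · rintro rfl; exact Equiv.Perm.SameCycle.refl _ _

lemma Cl_eq_of_moved {π : Equiv.Perm (Fin n)} {x : Fin n} (hx : π x ≠ x) :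
    Cl π x = (π.cycleOf x).support := by
  ext y
  rw [mem_Cl, Equiv.Perm.mem_support_cycleOf_iff]
  exact ⟨fun h => ⟨h, Equiv.Perm.mem_support.2 hx⟩, fun h => h.1⟩

lemma cycLen_fixed {π : Equiv.Perm (Fin n)} {x : Fin n} (hx : π x = x) :
    cycLen π x = 1 := by
  rw [cycLen_eq_card_Cl, Cl_eq_of_fixed hx, Finset.card_singleton]

lemma cycLen_moved {π : Equiv.Perm (Fin n)} {x : Fin n} (hx : π x ≠ x) :
    cycLen π x = (π.cycleOf x).support.card := by
  rw [cycLen_eq_card_Cl, Cl_eq_of_moved hx]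

lemma seg_fixed {π : Equiv.Perm (Fin n)} {x : Fin n} (hx : π x = x) :
    seg π x = [x] := by
  simp [seg, cycLen_fixed hx, List.range_succ]

lemma seg_eq_toList {π : Equiv.Perm (Fin n)} {x : Fin n} (hx : π x ≠ x) :
    seg π x = π.toList x := by
  rw [seg, Equiv.Perm.toList, cycLen_moved hx]
  exact List.ext_getElem (by simp) (fun i h1 h2 => by
    simp [List.getElem_iterate, Equiv.Perm.iterate_eq_pow])

lemma length_seg (π : Equiv.Perm (Fin n)) (x : Fin n) :
    (seg π x).length = cycLen π x := by simp [seg]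

lemma mem_seg {π : Equiv.Perm (Fin n)} {x y : Fin n} :
    y ∈ seg π x ↔ π.SameCycle x y := by
  by_cases hx : π x = x
  · rw [seg_fixed hx]
    constructor
    · intro h; simp only [List.mem_singleton] at h; subst h
      exact Equiv.Perm.SameCycle.refl _ _
    · intro h
      have : y ∈ Cl π x := mem_Cl.2 h
      rw [Cl_eq_of_fixed hx] at this
      simpa using this
  · rw [seg_eq_toList hx, Equiv.Perm.mem_toList_iff]
    simp [Equiv.Perm.mem_support, hx]

lemma nodup_seg (π : Equiv.Perm (Fin n)) (x : Fin n) : (seg π x).Nodup := by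
  by_cases hx : π x = x
  · rw [seg_fixed hx]; simp
  · rw [seg_eq_toList hx]; exact Equiv.Perm.nodup_toList π x

lemma seg_getElem (π : Equiv.Perm (Fin n)) (x : Fin n) {j : ℕ} (hj : j < cycLen π x) :
    (seg π x)[j]? = some ((π ^ j) x) := by
  simp [seg, List.getElem?_map, List.getElem?_range, hj]

lemma pow_inj_of_lt_cycLen {π : Equiv.Perm (Fin n)} {x : Fin n} {i j : ℕ}
    (hi : i < cycLen π x) (hj : j < cycLen π x) (h : (π ^ i) x = (π ^ j) x) : i = j := by
  have hnd := nodup_seg π x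
  rw [seg] at hnd
  have hlen : ((List.range (cycLen π x)).map fun j => (π ^ j) x).length = cycLen π x := by simp
  have := (List.Nodup.getElem_inj_iff hnd (hi := by simpa [hlen] using hi)
    (hj := by simpa [hlen] using hj)).1 (by simpa using h)
  simpa using this

lemma pow_cycLen_apply_self (π : Equiv.Perm (Fin n)) (x : Fin n) :
    (π ^ cycLen π x) x = x := by
  by_cases hx : π x = x
  · rw [cycLen_fixed hx, pow_one, hx]
  · have hc : (π.cycleOf x).IsCycle := π.isCycle_cycleOf hx
    rw [cycLen_moved hx, ← Equiv.Perm.cycleOf_pow_apply_self, ← hc.orderOf,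
      pow_orderOf_eq_one, Equiv.Perm.one_apply]


/-- minimum of the cycle class of `x`. -/
def mcl (π : Equiv.Perm (Fin n)) (x : Fin n) : Fin n :=
  (Cl π x).min' ⟨x, self_mem_Cl⟩

lemma mcl_mem_Cl (π : Equiv.Perm (Fin n)) (x : Fin n) : mcl π x ∈ Cl π x :=
  Finset.min'_mem _ _

lemma sameCycle_mcl (π : Equiv.Perm (Fin n)) (x : Fin n) : π.SameCycle x (mcl π x) :=
  mem_Cl.1 (mcl_mem_Cl π x)

lemma mcl_le {π : Equiv.Perm (Fin n)} {x y : Fin n} (h : π.SameCycle x y) :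
    mcl π x ≤ y :=
  Finset.min'_le _ _ (mem_Cl.2 h)

lemma mcl_eq_of_sameCycle {π : Equiv.Perm (Fin n)} {x y : Fin n} (h : π.SameCycle x y) :
    mcl π x = mcl π y := by
  unfold mcl; congr 1; exact Cl_eq_of_sameCycle h

lemma isCycMin_iff_mcl_eq {π : Equiv.Perm (Fin n)} {x : Fin n} :
    isCycMin π x ↔ mcl π x = x := by
  constructor
  · intro h
    exact le_antisymm (mcl_le (Equiv.Perm.SameCycle.refl _ _)) (h _ (sameCycle_mcl π x))
  · intro h y hy
    rw [← h]; exact mcl_le hy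

lemma isCycMin_mcl (π : Equiv.Perm (Fin n)) (x : Fin n) : isCycMin π (mcl π x) := by
  rw [isCycMin_iff_mcl_eq, ← mcl_eq_of_sameCycle (sameCycle_mcl π x)]

lemma mem_cycMins {π : Equiv.Perm (Fin n)} {x : Fin n} :
    x ∈ cycMins π ↔ isCycMin π x := by
  simp [cycMins, List.mem_filter, List.mem_finRange]

lemma nodup_cycMins (π : Equiv.Perm (Fin n)) : (cycMins π).Nodup :=
  List.nodup_reverse.2 ((List.nodup_finRange n).filter _)

lemma mcl_eq_self_of_isCycMin {π : Equiv.Perm (Fin n)} {x : Fin n} (h : isCycMin π x) :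
    mcl π x = x := isCycMin_iff_mcl_eq.1 h

lemma mcl_lt_of_ne {π : Equiv.Perm (Fin n)} {x : Fin n} (h : x ≠ mcl π x) :
    mcl π x < x :=
  lt_of_le_of_ne (mcl_le (Equiv.Perm.SameCycle.refl _ _)) (Ne.symm h)

/-- order-reversing involution of a finset, identity outside. -/
def compFin (S : Finset (Fin n)) (a : Fin n) : Fin n :=
  if h : a ∈ S then (S.orderIsoOfFin rfl (((S.orderIsoOfFin rfl).symm ⟨a, h⟩).rev) : Fin n) else a

lemma compFin_eq {S : Finset (Fin n)} {a : Fin n} (h : a ∈ S) :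
    compFin S a = (S.orderIsoOfFin rfl (((S.orderIsoOfFin rfl).symm ⟨a, h⟩).rev) : Fin n) :=
  dif_pos h

lemma compFin_mem {S : Finset (Fin n)} {a : Fin n} (h : a ∈ S) : compFin S a ∈ S := by
  rw [compFin, dif_pos h]; exact (S.orderIsoOfFin rfl _).2

lemma compFin_compFin {S : Finset (Fin n)} {a : Fin n} (h : a ∈ S) :
    compFin S (compFin S a) = a := by
  rw [compFin_eq (compFin_mem h)]
  have key : (⟨compFin S a, compFin_mem h⟩ : {x // x ∈ S}) =
      (S.orderIsoOfFin rfl) (((S.orderIsoOfFin rfl).symm ⟨a, h⟩).rev) :=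
    Subtype.ext (compFin_eq h)
  rw [key, OrderIso.symm_apply_apply, Fin.rev_rev, OrderIso.apply_symm_apply]

lemma compFin_anti {S : Finset (Fin n)} {a b : Fin n} (ha : a ∈ S) (hb : b ∈ S) :
    a < b ↔ compFin S b < compFin S a := by
  rw [compFin_eq ha, compFin_eq hb]
  rw [Subtype.coe_lt_coe, OrderIso.lt_iff_lt, Fin.rev_lt_rev, OrderIso.lt_iff_lt,
    Subtype.mk_lt_mk]

/-- the tail of the cycle class (class minus its min) -/
def Tl (π : Equiv.Perm (Fin n)) (x : Fin n) : Finset (Fin n) :=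
  (Cl π x).erase (mcl π x)

/-- complement each cycle within its class-minus-min; fix the minima -/
def tau (π : Equiv.Perm (Fin n)) (x : Fin n) : Fin n :=
  if x = mcl π x then x else compFin (Tl π x) x

lemma tau_eq_of_ne {π : Equiv.Perm (Fin n)} {x : Fin n} (h : x ≠ mcl π x) :
    tau π x = compFin (Tl π x) x := if_neg h

lemma mem_Tl_of_ne {π : Equiv.Perm (Fin n)} {x : Fin n} (h : x ≠ mcl π x) :
    x ∈ Tl π x := Finset.mem_erase.2 ⟨h, self_mem_Cl⟩

lemma tau_eq_self_of_min {π : Equiv.Perm (Fin n)} {x : Fin n} (h : x = mcl π x) :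
    tau π x = x := by rw [tau, if_pos h]

lemma tau_mem_Tl {π : Equiv.Perm (Fin n)} {x : Fin n} (h : x ≠ mcl π x) :
    tau π x ∈ Tl π x := by
  rw [tau, if_neg h]; exact compFin_mem (mem_Tl_of_ne h)

lemma sameCycle_tau (π : Equiv.Perm (Fin n)) (x : Fin n) : π.SameCycle x (tau π x) := by
  by_cases h : x = mcl π x
  · rw [tau_eq_self_of_min h]
  · exact mem_Cl.1 (Finset.mem_of_mem_erase (tau_mem_Tl h))

lemma Cl_tau (π : Equiv.Perm (Fin n)) (x : Fin n) : Cl π (tau π x) = Cl π x :=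
  (Cl_eq_of_sameCycle (sameCycle_tau π x)).symm

lemma mcl_tau (π : Equiv.Perm (Fin n)) (x : Fin n) : mcl π (tau π x) = mcl π x := by
  unfold mcl; congr 1; exact Cl_tau π x

lemma Tl_tau (π : Equiv.Perm (Fin n)) (x : Fin n) : Tl π (tau π x) = Tl π x := by
  unfold Tl; rw [Cl_tau, mcl_tau]

lemma Tl_eq_of_sameCycle {π : Equiv.Perm (Fin n)} {x y : Fin n} (h : π.SameCycle x y) :
    Tl π x = Tl π y := by
  unfold Tl; rw [Cl_eq_of_sameCycle h, mcl_eq_of_sameCycle h]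

lemma tau_involutive (π : Equiv.Perm (Fin n)) : Function.Involutive (tau π) := by
  intro x
  by_cases h : x = mcl π x
  · rw [tau_eq_self_of_min h, tau_eq_self_of_min h]
  · have hmem := tau_mem_Tl h
    have h2 : tau π x ≠ mcl π (tau π x) := by
      rw [mcl_tau]; exact (Finset.mem_erase.1 hmem).1
    rw [tau, if_neg h2, Tl_tau, tau, if_neg h]
    exact compFin_compFin (mem_Tl_of_ne h)

lemma tau_ne_mcl {π : Equiv.Perm (Fin n)} {x : Fin n} (h : x ≠ mcl π x) :
    tau π x ≠ mcl π x := (Finset.mem_erase.1 (tau_mem_Tl h)).1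

lemma tau_anti {π : Equiv.Perm (Fin n)} {a b : Fin n} (hab : π.SameCycle a b)
    (ha : a ≠ mcl π a) (hb : b ≠ mcl π b) : (a < b ↔ tau π b < tau π a) := by
  have hTl : Tl π a = Tl π b := Tl_eq_of_sameCycle hab
  rw [tau_eq_of_ne ha, tau_eq_of_ne hb, ← hTl]
  exact compFin_anti (mem_Tl_of_ne ha) (hTl ▸ mem_Tl_of_ne hb)

/-- tau as a permutation -/
def tauPerm (π : Equiv.Perm (Fin n)) : Equiv.Perm (Fin n) :=
  (tau_involutive π).toPerm

@[simp] lemma tauPerm_apply (π : Equiv.Perm (Fin n)) (x : Fin n) : tauPerm π x = tau π x := rfl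

lemma tauPerm_mul_self (π : Equiv.Perm (Fin n)) : tauPerm π * tauPerm π = 1 := by
  ext x; simp [tau_involutive π x]

lemma tauPerm_inv (π : Equiv.Perm (Fin n)) : (tauPerm π)⁻¹ = tauPerm π := by
  rw [inv_eq_iff_mul_eq_one, tauPerm_mul_self]

/-- the conjugate of `π` complementing each cycle's tail -/
def cj (π : Equiv.Perm (Fin n)) : Equiv.Perm (Fin n) :=
  tauPerm π * π * tauPerm π

lemma cj_sameCycle_iff (π : Equiv.Perm (Fin n)) (x y : Fin n) :
    (cj π).SameCycle x y ↔ π.SameCycle x y := by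
  have : cj π = tauPerm π * π * (tauPerm π)⁻¹ := by rw [tauPerm_inv]; rfl
  rw [this, Equiv.Perm.sameCycle_conj, tauPerm_inv]
  simp only [tauPerm_apply]
  constructor
  · intro h
    exact ((sameCycle_tau π x).trans h).trans (sameCycle_tau π y).symm
  · intro h
    exact ((sameCycle_tau π x).symm.trans h).trans (sameCycle_tau π y)

lemma Cl_cj (π : Equiv.Perm (Fin n)) (x : Fin n) : Cl (cj π) x = Cl π x := by
  ext y; simp [mem_Cl, cj_sameCycle_iff]

lemma isCycMin_cj_iff (π : Equiv.Perm (Fin n)) (x : Fin n) :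
    isCycMin (cj π) x ↔ isCycMin π x := by
  unfold isCycMin
  constructor
  · intro h y hy; exact h y ((cj_sameCycle_iff π x y).2 hy)
  · intro h y hy; exact h y ((cj_sameCycle_iff π x y).1 hy)

lemma cycMins_cj (π : Equiv.Perm (Fin n)) : cycMins (cj π) = cycMins π := by
  unfold cycMins
  congr 1
  apply List.filter_congr
  intro x _
  exact decide_eq_decide.2 (isCycMin_cj_iff π x)

lemma cycLen_cj (π : Equiv.Perm (Fin n)) (x : Fin n) : cycLen (cj π) x = cycLen π x := by
  rw [cycLen_eq_card_Cl, cycLen_eq_card_Cl, Cl_cj]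

lemma cyc_congr_of_Cl {π ρ : Equiv.Perm (Fin n)}
    (h : ∀ x, isCycMin ρ x ↔ isCycMin π x) :
    Nat.card {x : Fin n // isCycMin ρ x} = Nat.card {x : Fin n // isCycMin π x} :=
  Nat.card_congr (Equiv.subtypeEquivRight h)

lemma mcl_cj (π : Equiv.Perm (Fin n)) (x : Fin n) : mcl (cj π) x = mcl π x := by
  unfold mcl; congr 1; exact Cl_cj π x

lemma Tl_cj (π : Equiv.Perm (Fin n)) (x : Fin n) : Tl (cj π) x = Tl π x := by
  unfold Tl; rw [Cl_cj, mcl_cj]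

lemma tau_cj (π : Equiv.Perm (Fin n)) : tau (cj π) = tau π := by
  funext x; unfold tau; rw [mcl_cj, Tl_cj]

lemma tauPerm_cj (π : Equiv.Perm (Fin n)) : tauPerm (cj π) = tauPerm π := by
  ext x; simp [tauPerm, Function.Involutive.toPerm, tau_cj]

lemma tau_tau (π : Equiv.Perm (Fin n)) (x : Fin n) : tau π (tau π x) = x :=
  tau_involutive π x

lemma cj_involutive : Function.Involutive (cj (n := n)) := by
  intro π
  have h : cj (cj π) = tauPerm (cj π) * cj π * tauPerm (cj π) := rfl
  rw [tauPerm_cj] at h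
  rw [h]
  ext x
  simp only [Equiv.Perm.mul_apply, tauPerm_apply, cj, tau_tau]

lemma cj_pow_apply (π : Equiv.Perm (Fin n)) (j : ℕ) (x : Fin n) :
    ((cj π) ^ j) x = tau π ((π ^ j) (tau π x)) := by
  induction j with
  | zero => simp [tau_involutive π x]
  | succ j ih =>
      rw [pow_succ', Equiv.Perm.mul_apply, ih]
      simp only [cj, Equiv.Perm.mul_apply, tauPerm_apply, tau_tau]
      rw [pow_succ', Equiv.Perm.mul_apply]

-- inverse facts
lemma Cl_inv (π : Equiv.Perm (Fin n)) (x : Fin n) : Cl π⁻¹ x = Cl π x := by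
  ext y; simp [mem_Cl, Equiv.Perm.sameCycle_inv]

lemma isCycMin_inv_iff (π : Equiv.Perm (Fin n)) (x : Fin n) :
    isCycMin π⁻¹ x ↔ isCycMin π x := by
  unfold isCycMin
  constructor
  · intro h y hy; exact h y (Equiv.Perm.sameCycle_inv.2 hy)
  · intro h y hy; exact h y (Equiv.Perm.sameCycle_inv.1 hy)

lemma cycMins_inv (π : Equiv.Perm (Fin n)) : cycMins π⁻¹ = cycMins π := by
  unfold cycMins
  congr 1
  apply List.filter_congr
  intro x _
  exact decide_eq_decide.2 (isCycMin_inv_iff π x)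

lemma cycLen_inv (π : Equiv.Perm (Fin n)) (x : Fin n) : cycLen π⁻¹ x = cycLen π x := by
  rw [cycLen_eq_card_Cl, cycLen_eq_card_Cl, Cl_inv]

lemma inv_pow_apply (π : Equiv.Perm (Fin n)) (x : Fin n) {j : ℕ} (hj : j ≤ cycLen π x) :
    ((π⁻¹) ^ j) x = (π ^ (cycLen π x - j)) x := by
  have h1 : (π ^ j) (((π⁻¹) ^ j) x) = x := by
    rw [← Equiv.Perm.mul_apply, inv_pow, mul_inv_cancel, Equiv.Perm.one_apply]
  have h2 : (π ^ j) ((π ^ (cycLen π x - j)) x) = x := by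
    rw [← Equiv.Perm.mul_apply, ← pow_add, Nat.add_sub_cancel' hj, pow_cycLen_apply_self]
  exact (π ^ j).injective (h1.trans h2.symm)



lemma psiList_eq_flatten (π : Equiv.Perm (Fin n)) :
    psiList π = ((cycMins π).map (seg π)).flatten := by
  unfold psiList
  generalize cycMins π = l
  induction l with
  | nil => rfl
  | cons m l ih => simp [ih]

lemma mem_psiList (π : Equiv.Perm (Fin n)) (x : Fin n) : x ∈ psiList π := by
  rw [psiList_eq_flatten, List.mem_flatten]
  refine ⟨seg π (mcl π x), List.mem_map.2 ⟨mcl π x, mem_cycMins.2 (isCycMin_mcl π x), rfl⟩, ?_⟩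
  exact mem_seg.2 (sameCycle_mcl π x).symm

lemma seg_disjoint {π : Equiv.Perm (Fin n)} {m1 m2 : Fin n}
    (h1 : isCycMin π m1) (h2 : isCycMin π m2) (hne : m1 ≠ m2) {a b : Fin n}
    (ha : a ∈ seg π m1) (hb : b ∈ seg π m2) : ¬ π.SameCycle a b := by
  intro hab
  apply hne
  have c1 : π.SameCycle m1 m2 :=
    ((mem_seg.1 ha).trans hab).trans (mem_seg.1 hb).symm
  have := mcl_eq_of_sameCycle c1
  rw [mcl_eq_self_of_isCycMin h1, mcl_eq_self_of_isCycMin h2] at this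
  exact this

lemma pairwise_not_sameCycle (π : Equiv.Perm (Fin n)) :
    ((cycMins π).map (seg π)).Pairwise fun l1 l2 => ∀ a ∈ l1, ∀ b ∈ l2, ¬ π.SameCycle a b := by
  rw [List.pairwise_map]
  refine List.Pairwise.imp_of_mem ?_ (nodup_cycMins π)
  intro m1 m2 hm1 hm2 hne a ha b hb
  exact seg_disjoint (mem_cycMins.1 hm1) (mem_cycMins.1 hm2) hne ha hb

lemma nodup_psiList (π : Equiv.Perm (Fin n)) : (psiList π).Nodup := by
  rw [psiList_eq_flatten, List.nodup_flatten]
  constructor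
  · intro l hl
    obtain ⟨m, _, rfl⟩ := List.mem_map.1 hl
    exact nodup_seg π m
  · refine (pairwise_not_sameCycle π).imp ?_
    intro l1 l2 h
    intro a ha hb
    exact absurd (Equiv.Perm.SameCycle.refl _ _) (h a ha a hb)

lemma length_psiList (π : Equiv.Perm (Fin n)) : (psiList π).length = n := by
  have h1 : (psiList π).toFinset = Finset.univ :=
    Finset.eq_univ_iff_forall.2 fun x => List.mem_toFinset.2 (mem_psiList π x)
  have h2 := List.toFinset_card_of_nodup (nodup_psiList π)
  rw [h1] at h2
  simpa using h2.symm

lemma coe_list_eq (l : List (Fin n)) : (l.map fun x => (x : ℕ)) = List.map Fin.val l := by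
  induction l with
  | nil => rfl
  | cons a l ih => simpa using ih

/-- value (as ℕ) at position `i` of a word -/
def vN (l : List (Fin n)) (i : ℕ) : ℕ := (List.map Fin.val l).getD i 0

lemma vN_eq_of_getElem? {l : List (Fin n)} {i : ℕ} {a : Fin n} (h : l[i]? = some a) :
    vN l i = (a : ℕ) := by
  rw [vN, List.getD_eq_getElem?_getD, List.getElem?_map, h]; rfl

lemma vN_congr {w l : List (Fin n)} {s t : ℕ} (h : w[s]? = l[t]?) : vN w s = vN l t := by
  rw [vN, vN, List.getD_eq_getElem?_getD, List.getD_eq_getElem?_getD,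
    List.getElem?_map, List.getElem?_map, h]

def adjR (R : Fin n → Fin n → Prop) (w : List (Fin n)) (i j : ℕ) : Prop :=
  ∃ a b : Fin n, w[i]? = some a ∧ w[j]? = some b ∧ R a b

def condW (R : Fin n → Fin n → Prop) (P : ℕ → ℕ → ℕ → Prop) (w : List (Fin n)) (i : ℕ) : Prop :=
  i + 2 < w.length ∧ P (vN w i) (vN w (i + 1)) (vN w (i + 2)) ∧
    adjR R w i (i + 1) ∧ adjR R w (i + 1) (i + 2)

def segCnt (P : ℕ → ℕ → ℕ → Prop) (l : List (Fin n)) : ℕ :=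
  ((Finset.range l.length).filter fun j =>
    j + 2 < l.length ∧ P (vN l j) (vN l (j + 1)) (vN l (j + 2))).card

lemma cnt_flatten (R : Fin n → Fin n → Prop) (P : ℕ → ℕ → ℕ → Prop) :
    ∀ LL : List (List (Fin n)),
      (∀ l ∈ LL, ∀ a ∈ l, ∀ b ∈ l, R a b) →
      (LL.Pairwise fun l1 l2 => ∀ a ∈ l1, ∀ b ∈ l2, ¬ R a b) →
      ((Finset.range LL.flatten.length).filter (condW R P LL.flatten)).card
        = (LL.map (segCnt P)).sum := by
  intro LL
  induction LL with
  | nil => intro _ _; simp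
  | cons l LL ih =>
    intro h1 h2
    rw [List.pairwise_cons] at h2
    obtain ⟨h2a, h2b⟩ := h2
    have hIH := ih (fun l' hl' => h1 l' (List.mem_cons_of_mem _ hl')) h2b
    have hfl : (l :: LL).flatten = l ++ LL.flatten := rfl
    set a := l.length with ha
    set J := LL.flatten with hJ
    set w : List (Fin n) := l ++ J with hw
    have hW : w.length = a + J.length := by simp [hw, ha]
    -- claim A
    have claimA : ∀ i, i + 2 < a →
        (condW R P w i ↔ (i + 2 < a ∧ P (vN l i) (vN l (i + 1)) (vN l (i + 2)))) := by
      intro i hi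
      have hv : ∀ t, t < a → w[t]? = l[t]? := by
        intro t ht
        rw [hw, List.getElem?_append, if_pos ht]
      have hvN : ∀ t, t < a → vN w t = vN l t := fun t ht => vN_congr (hv t ht)
      have hadj : ∀ s t, s < a → t < a → adjR R w s t := by
        intro s t hs ht
        refine ⟨l[s], l[t], ?_, ?_, h1 l List.mem_cons_self _ (List.getElem_mem _) _
          (List.getElem_mem _)⟩
        · rw [hv s hs, List.getElem?_eq_getElem hs]
        · rw [hv t ht, List.getElem?_eq_getElem ht]
      constructor
      · rintro ⟨_, hP, _, _⟩
        exact ⟨hi, by rwa [hvN i (by omega), hvN (i+1) (by omega), hvN (i+2) (by omega)] at hP⟩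
      · rintro ⟨_, hP⟩
        refine ⟨by omega, ?_, hadj i (i+1) (by omega) (by omega),
          hadj (i+1) (i+2) (by omega) (by omega)⟩
        rwa [hvN i (by omega), hvN (i+1) (by omega), hvN (i+2) (by omega)]
    -- claim B
    have claimB : ∀ i, condW R P w i → i < a → i + 2 < a := by
      intro i hc hia
      by_contra hge
      have hcross : ∀ s t, s < a → a ≤ t → ¬ adjR R w s t := by
        rintro s t hs ht ⟨x, y, hx, hy, hR⟩
        rw [hw, List.getElem?_append, if_pos hs] at hx
        rw [hw, List.getElem?_append, if_neg (by omega)] at hy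
        have hxl : x ∈ l := by
          have := List.getElem?_eq_some_iff.1 hx
          obtain ⟨hlt, hEq⟩ := this
          rw [← hEq]; exact List.getElem_mem _
        have hyJ : y ∈ J := by
          have := List.getElem?_eq_some_iff.1 hy
          obtain ⟨hlt, hEq⟩ := this
          rw [← hEq]; exact List.getElem_mem _
        rw [hJ, List.mem_flatten] at hyJ
        obtain ⟨l', hl', hyl'⟩ := hyJ
        exact h2a l' hl' x hxl y hyl' hR
      obtain ⟨_, _, hadj1, hadj2⟩ := hc
      rcases le_or_gt a (i+1) with h' | h'
      · exact hcross i (i+1) hia h' hadj1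
      · exact hcross (i+1) (i+2) h' (by omega) hadj2
    -- claim C
    have claimC : ∀ i, condW R P w (a + i) ↔ condW R P J i := by
      intro i
      have hv : ∀ t, w[a + t]? = J[t]? := by
        intro t
        rw [hw, List.getElem?_append, if_neg (by omega)]
        congr 1; omega
      have hvN : ∀ t, vN w (a + t) = vN J t := fun t => vN_congr (hv t)
      have hadj : ∀ s t, (adjR R w (a + s) (a + t) ↔ adjR R J s t) := by
        intro s t
        unfold adjR
        rw [hv s, hv t]
      constructor
      · rintro ⟨hlen, hP, hA1, hA2⟩
        refine ⟨by omega, ?_, ?_, ?_⟩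
        · rwa [hvN i, show a + i + 1 = a + (i+1) by omega, hvN (i+1),
            show a + i + 2 = a + (i+2) by omega, hvN (i+2)] at hP
        · rw [show a + i + 1 = a + (i+1) by omega] at hA1; exact (hadj i (i+1)).1 hA1
        · rw [show a + i + 1 = a + (i+1) by omega, show a + i + 2 = a + (i+2) by omega] at hA2
          exact (hadj (i+1) (i+2)).1 hA2
      · rintro ⟨hlen, hP, hA1, hA2⟩
        refine ⟨by omega, ?_, ?_, ?_⟩
        · rw [hvN i, show a + i + 1 = a + (i+1) by omega, hvN (i+1),
            show a + i + 2 = a + (i+2) by omega, hvN (i+2)]; exact hP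
        · rw [show a + i + 1 = a + (i+1) by omega]; exact (hadj i (i+1)).2 hA1
        · rw [show a + i + 1 = a + (i+1) by omega, show a + i + 2 = a + (i+2) by omega]
          exact (hadj (i+1) (i+2)).2 hA2
    -- finset decomposition
    have hsplit :
        (Finset.range w.length).filter (condW R P w)
          = ((Finset.range a).filter fun j =>
              j + 2 < a ∧ P (vN l j) (vN l (j + 1)) (vN l (j + 2)))
            ∪ ((Finset.range J.length).filter (condW R P J)).map
                ⟨fun i => a + i, add_right_injective a⟩ := by
      ext i
      simp only [Finset.mem_filter, Finset.mem_range, Finset.mem_union, Finset.mem_map,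
        Function.Embedding.coeFn_mk]
      constructor
      · rintro ⟨hiW, hc⟩
        rcases lt_or_ge i a with hia | hia
        · have h3 := claimB i hc hia
          exact Or.inl ⟨by omega, (claimA i h3).1 hc⟩
        · right
          refine ⟨i - a, ⟨?_, ?_⟩, by omega⟩
          · rw [hW] at hiW; omega
          · have : condW R P w (a + (i - a)) := by rwa [show a + (i - a) = i by omega]
            exact (claimC (i - a)).1 this
      · rintro (⟨hia, hc⟩ | ⟨i', ⟨hi', hc⟩, rfl⟩)
        · exact ⟨by rw [hW]; omega, (claimA i (by omega)).2 ⟨by omega, hc.2⟩⟩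
        · exact ⟨by rw [hW]; omega, (claimC i').2 hc⟩
    rw [show (l :: LL).flatten = w from rfl, hsplit, Finset.card_union_of_disjoint,
      Finset.card_map]
    · rw [List.map_cons, List.sum_cons, hIH]
      rfl
    · rw [Finset.disjoint_left]
      rintro x hx hx'
      simp only [Finset.mem_filter, Finset.mem_range] at hx
      simp only [Finset.mem_map, Finset.mem_filter, Finset.mem_range,
        Function.Embedding.coeFn_mk] at hx'
      obtain ⟨i', _, rfl⟩ := hx'
      omega


lemma sameCycle_pow (π : Equiv.Perm (Fin n)) (m : Fin n) (t : ℕ) :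
    π.SameCycle m ((π ^ t) m) := ⟨(t : ℤ), by rw [zpow_natCast]⟩

lemma mcl_pow {π : Equiv.Perm (Fin n)} {m : Fin n} (hm : isCycMin π m) (t : ℕ) :
    mcl π ((π ^ t) m) = m := by
  rw [← mcl_eq_of_sameCycle (sameCycle_pow π m t), mcl_eq_self_of_isCycMin hm]

lemma pow_ne_min {π : Equiv.Perm (Fin n)} {m : Fin n} {t : ℕ} (h1 : 1 ≤ t)
    (h2 : t < cycLen π m) : (π ^ t) m ≠ m := by
  intro h
  have h0 : (0 : ℕ) < cycLen π m := lt_of_le_of_lt (Nat.zero_le _) h2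
  have := pow_inj_of_lt_cycLen h2 h0 (by simpa using h)
  omega

lemma min_lt_pow {π : Equiv.Perm (Fin n)} {m : Fin n} (hm : isCycMin π m) {t : ℕ}
    (h1 : 1 ≤ t) (h2 : t < cycLen π m) : m < (π ^ t) m :=
  lt_of_le_of_ne (hm _ (sameCycle_pow π m t)) (Ne.symm (pow_ne_min h1 h2))

lemma vN_seg {π : Equiv.Perm (Fin n)} {m : Fin n} {t : ℕ} (ht : t < cycLen π m) :
    vN (seg π m) t = (((π ^ t) m : Fin n) : ℕ) :=
  vN_eq_of_getElem? (seg_getElem π m ht)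

lemma wordN_eq_vN (π : Equiv.Perm (Fin n)) (i : ℕ) : wordN π i = vN (psiList π) i := by
  unfold wordN vN
  rw [coe_list_eq]

lemma consecC_eq_card (π : Equiv.Perm (Fin n)) (P : ℕ → ℕ → ℕ → Prop) :
    consecC π P
      = ((Finset.range (psiList π).length).filter (condW π.SameCycle P (psiList π))).card := by
  have hn := length_psiList π
  have hiff : ∀ i : ℕ,
      (i + 2 < n ∧ P (wordN π i) (wordN π (i + 1)) (wordN π (i + 2)) ∧
        sameCycleAt π i (i + 1) ∧ sameCycleAt π (i + 1) (i + 2))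
      ↔ i ∈ (Finset.range (psiList π).length).filter (condW π.SameCycle P (psiList π)) := by
    intro i
    rw [Finset.mem_filter, Finset.mem_range]
    unfold condW
    rw [hn, wordN_eq_vN, wordN_eq_vN, wordN_eq_vN]
    constructor
    · rintro ⟨h1, h2, h3, h4⟩
      exact ⟨by omega, h1, h2, h3, h4⟩
    · rintro ⟨_, h1, h2, h3, h4⟩
      exact ⟨h1, h2, h3, h4⟩
  rw [consecC, Nat.card_congr (Equiv.subtypeEquivRight hiff), Nat.card_eq_finsetCard]

lemma consecC_eq_sum (π : Equiv.Perm (Fin n)) (P : ℕ → ℕ → ℕ → Prop) :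
    consecC π P = ((cycMins π).map fun m => segCnt P (seg π m)).sum := by
  rw [consecC_eq_card, psiList_eq_flatten]
  rw [cnt_flatten π.SameCycle P _ ?h1 (pairwise_not_sameCycle π), List.map_map]
  · rfl
  case h1 =>
    intro l hl a ha b hb
    obtain ⟨mm, _, rfl⟩ := List.mem_map.1 hl
    exact (mem_seg.1 ha).symm.trans (mem_seg.1 hb)

lemma segCnt_cj {π : Equiv.Perm (Fin n)} {m : Fin n} (hm : isCycMin π m) :
    segCnt (fun a b c => c < a ∧ a < b) (seg (cj π) m)
      = segCnt (fun a b c => b < a ∧ a < c) (seg π m) := by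
  have hmm : mcl π m = m := mcl_eq_self_of_isCycMin hm
  have htm : tau π m = m := tau_eq_self_of_min hmm.symm
  have hLen : cycLen (cj π) m = cycLen π m := cycLen_cj π m
  set L := cycLen π m with hL
  unfold segCnt
  rw [length_seg, length_seg, hLen, ← hL]
  congr 1
  ext j
  simp only [Finset.mem_filter, Finset.mem_range]
  refine and_congr_right fun hj => ?_
  rcases Nat.lt_or_ge (j + 2) L with hjL | hjL
  swap
  · constructor
    · rintro ⟨h, _⟩; omega
    · rintro ⟨h, _⟩; omega
  have hne : ∀ t, 1 ≤ t → t < L → (π ^ t) m ≠ mcl π ((π ^ t) m) := by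
    intro t h1 h2
    rw [mcl_pow hm]; exact pow_ne_min h1 h2
  have e : ∀ t, t < L → vN (seg (cj π) m) t = ((tau π ((π ^ t) m) : Fin n) : ℕ) := by
    intro t ht
    rw [vN_seg (show t < cycLen (cj π) m by omega), cj_pow_apply, htm]
  have f : ∀ t, t < L → vN (seg π m) t = (((π ^ t) m : Fin n) : ℕ) := fun t ht => vN_seg ht
  refine and_congr_right fun _ => ?_
  rw [e j (by omega), e (j+1) (by omega), e (j+2) (by omega),
    f j (by omega), f (j+1) (by omega), f (j+2) (by omega)]
  rcases Nat.eq_zero_or_pos j with rfl | hj1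
  · -- both sides false
    rw [pow_zero, Equiv.Perm.one_apply, htm]
    constructor
    · rintro ⟨hc1, _⟩
      exfalso
      have h2 : tau π ((π ^ (0+2)) m) ≠ m := by
        have h' := tau_ne_mcl (hne (0+2) (by omega) (by omega))
        rwa [mcl_pow hm] at h'
      have hs : π.SameCycle m (tau π ((π ^ (0+2)) m)) :=
        (sameCycle_pow π m (0+2)).trans (sameCycle_tau π _)
      have hlt : m < tau π ((π ^ (0+2)) m) := lt_of_le_of_ne (hm _ hs) (Ne.symm h2)
      have : (m : ℕ) < ((tau π ((π ^ (0+2)) m) : Fin n) : ℕ) := hlt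
      omega
    · rintro ⟨hc1, _⟩
      exfalso
      have hlt : m < (π ^ (0+1)) m := min_lt_pow hm (by omega) (by omega)
      have : (m : ℕ) < (((π ^ (0+1)) m : Fin n) : ℕ) := hlt
      omega
  · have hA := hne j hj1 (by omega)
    have hB := hne (j+1) (by omega) (by omega)
    have hC := hne (j+2) (by omega) (by omega)
    have hAB : π.SameCycle ((π ^ j) m) ((π ^ (j+1)) m) :=
      (sameCycle_pow π m j).symm.trans (sameCycle_pow π m (j+1))
    have hAC : π.SameCycle ((π ^ j) m) ((π ^ (j+2)) m) :=
      (sameCycle_pow π m j).symm.trans (sameCycle_pow π m (j+2))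
    have i1 : (π ^ j) m < (π ^ (j+2)) m ↔ tau π ((π ^ (j+2)) m) < tau π ((π ^ j) m) :=
      tau_anti hAC hA hC
    have i2 : (π ^ (j+1)) m < (π ^ j) m ↔ tau π ((π ^ j) m) < tau π ((π ^ (j+1)) m) :=
      tau_anti hAB.symm hB hA
    constructor
    · rintro ⟨hc1, hc2⟩
      exact ⟨i2.2 hc2, i1.2 hc1⟩
    · rintro ⟨hc1, hc2⟩
      exact ⟨i1.1 hc2, i2.1 hc1⟩

lemma vN_seg_inv {π : Equiv.Perm (Fin n)} {m : Fin n} {t : ℕ} (ht : t < cycLen π m) :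
    vN (seg π⁻¹ m) t = (((π ^ (cycLen π m - t)) m : Fin n) : ℕ) := by
  rw [vN_seg (show t < cycLen π⁻¹ m by rw [cycLen_inv]; omega),
    inv_pow_apply π m (le_of_lt ht)]

lemma segCnt_inv {π : Equiv.Perm (Fin n)} {m : Fin n} (hm : isCycMin π m) :
    segCnt (fun a b c => b < c ∧ c < a) (seg π⁻¹ m)
      = segCnt (fun a b c => b < a ∧ a < c) (seg π m) := by
  set L := cycLen π m with hL
  unfold segCnt
  rw [length_seg, length_seg, cycLen_inv, ← hL]
  -- membership helpers
  have hmem1 : ∀ j, j + 2 < L →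
      (vN (seg π⁻¹ m) j = (((π ^ (L - j)) m : Fin n) : ℕ) ∧
       vN (seg π⁻¹ m) (j+1) = (((π ^ (L - (j+1))) m : Fin n) : ℕ) ∧
       vN (seg π⁻¹ m) (j+2) = (((π ^ (L - (j+2))) m : Fin n) : ℕ)) := by
    intro j hj
    exact ⟨vN_seg_inv (by omega), vN_seg_inv (by omega), vN_seg_inv (by omega)⟩
  have hpos1 : ∀ j, j + 2 < L →
      (vN (seg π⁻¹ m) (j+1) < vN (seg π⁻¹ m) (j+2) ∧
        vN (seg π⁻¹ m) (j+2) < vN (seg π⁻¹ m) j) → 1 ≤ j := by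
    intro j hj hP
    by_contra h0
    have hj0 : j = 0 := by omega
    subst hj0
    obtain ⟨e0, e1, e2⟩ := hmem1 0 hj
    rw [e0, e2] at hP
    have hL0 : L - 0 = L := by omega
    rw [hL0, pow_cycLen_apply_self] at hP
    have hlt : m < (π ^ (L - (0+2))) m := min_lt_pow hm (by omega) (by omega)
    have : (m : ℕ) < (((π ^ (L - (0+2))) m : Fin n) : ℕ) := hlt
    omega
  have hpos2 : ∀ j, j + 2 < L →
      (vN (seg π m) (j+1) < vN (seg π m) j ∧ vN (seg π m) j < vN (seg π m) (j+2)) → 1 ≤ j := by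
    intro j hj hP
    by_contra h0
    have hj0 : j = 0 := by omega
    subst hj0
    rw [vN_seg (show (0:ℕ) < L by omega), vN_seg (show (0:ℕ)+1 < L by omega), pow_zero,
      Equiv.Perm.one_apply] at hP
    have hlt : m < (π ^ (0+1)) m := min_lt_pow hm (by omega) (by omega)
    have : (m : ℕ) < (((π ^ (0+1)) m : Fin n) : ℕ) := hlt
    omega
  apply Finset.card_nbij' (i := fun j => L - 2 - j) (j := fun j => L - 2 - j)
  · -- forward maps into target
    rintro j hj
    simp only [Finset.mem_coe, Finset.mem_filter, Finset.mem_range] at hj ⊢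
    obtain ⟨hjR, hjL, hP⟩ := hj
    have hj1 : 1 ≤ j := hpos1 j hjL hP
    obtain ⟨e0, e1, e2⟩ := hmem1 j hjL
    rw [e0, e1, e2] at hP
    refine ⟨by omega, by omega, ?_⟩
    rw [vN_seg (show L - 2 - j < L by omega), vN_seg (show L - 2 - j + 1 < L by omega),
      vN_seg (show L - 2 - j + 2 < L by omega)]
    rw [show L - 2 - j + 1 = L - (j+1) by omega, show L - 2 - j + 2 = L - j by omega,
      show L - 2 - j = L - (j+2) by omega]
    exact ⟨hP.1, hP.2⟩
  · -- backward maps into source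
    rintro j hj
    simp only [Finset.mem_coe, Finset.mem_filter, Finset.mem_range] at hj ⊢
    obtain ⟨hjR, hjL, hP⟩ := hj
    have hj1 : 1 ≤ j := hpos2 j hjL hP
    rw [vN_seg (show j < L by omega), vN_seg (show j + 1 < L by omega),
      vN_seg (show j + 2 < L by omega)] at hP
    refine ⟨by omega, by omega, ?_⟩
    obtain ⟨e0, e1, e2⟩ := hmem1 (L - 2 - j) (by omega)
    rw [e0, e1, e2]
    rw [show L - (L - 2 - j) = j + 2 by omega, show L - (L - 2 - j + 1) = j + 1 by omega,
      show L - (L - 2 - j + 2) = j by omega]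
    exact ⟨hP.1, hP.2⟩
  · rintro j hj
    simp only [Finset.mem_coe, Finset.mem_filter, Finset.mem_range] at hj
    obtain ⟨hjR, hjL, hP⟩ := hj
    have hj1 : 1 ≤ j := hpos1 j hjL hP
    simp only [hL]
    omega
  · rintro j hj
    simp only [Finset.mem_coe, Finset.mem_filter, Finset.mem_range] at hj
    obtain ⟨hjR, hjL, hP⟩ := hj
    have hj1 : 1 ≤ j := hpos2 j hjL hP
    simp only [hL]
    omega

-- top-level transfer lemmas
lemma cyc_cj (π : Equiv.Perm (Fin n)) : cyc (cj π) = cyc π :=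
  cyc_congr_of_Cl (isCycMin_cj_iff π)

lemma cyc_inv (π : Equiv.Perm (Fin n)) : cyc π⁻¹ = cyc π :=
  cyc_congr_of_Cl (isCycMin_inv_iff π)

lemma consecC_cj (π : Equiv.Perm (Fin n)) :
    consecC (cj π) (fun a b c => c < a ∧ a < b) = consecC π (fun a b c => b < a ∧ a < c) := by
  rw [consecC_eq_sum, consecC_eq_sum, cycMins_cj]
  congr 1
  apply List.map_congr_left
  intro m hmem
  rw [segCnt_cj (mem_cycMins.1 hmem)]

lemma consecC_cj' (π : Equiv.Perm (Fin n)) :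
    consecC (cj π) (fun a b c => b < a ∧ a < c) = consecC π (fun a b c => c < a ∧ a < b) := by
  have h := consecC_cj (cj π)
  rw [cj_involutive π] at h
  exact h.symm

lemma consecC_inv (π : Equiv.Perm (Fin n)) :
    consecC π⁻¹ (fun a b c => b < c ∧ c < a) = consecC π (fun a b c => b < a ∧ a < c) := by
  rw [consecC_eq_sum, consecC_eq_sum, cycMins_inv]
  congr 1
  apply List.map_congr_left
  intro m hmem
  rw [segCnt_inv (mem_cycMins.1 hmem)]

lemma mcl_inv (π : Equiv.Perm (Fin n)) (x : Fin n) : mcl π⁻¹ x = mcl π x := by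
  unfold mcl; congr 1; exact Cl_inv π x

lemma Tl_inv (π : Equiv.Perm (Fin n)) (x : Fin n) : Tl π⁻¹ x = Tl π x := by
  unfold Tl; rw [Cl_inv, mcl_inv]

lemma tau_inv (π : Equiv.Perm (Fin n)) : tau π⁻¹ = tau π := by
  funext x
  unfold tau
  rw [mcl_inv, Tl_inv]

lemma tauPerm_inv_perm (π : Equiv.Perm (Fin n)) : tauPerm π⁻¹ = tauPerm π := by
  ext x; simp [tauPerm, Function.Involutive.toPerm, tau_inv]

lemma cj_inv_comm (π : Equiv.Perm (Fin n)) : cj π⁻¹ = (cj π)⁻¹ := by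
  have h : cj π⁻¹ = tauPerm π * π⁻¹ * tauPerm π := by
    rw [show cj π⁻¹ = tauPerm π⁻¹ * π⁻¹ * tauPerm π⁻¹ from rfl, tauPerm_inv_perm]
  rw [h, show cj π = tauPerm π * π * tauPerm π from rfl]
  rw [mul_inv_rev, mul_inv_rev, tauPerm_inv π]
  group

lemma cyc_phi (π : Equiv.Perm (Fin n)) : cyc ((cj π)⁻¹) = cyc π := by
  rw [cyc_inv, cyc_cj]

lemma consecC_phi (π : Equiv.Perm (Fin n)) :
    consecC ((cj π)⁻¹) (fun a b c => b < c ∧ c < a) = consecC π (fun a b c => c < a ∧ a < b) := by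
  rw [consecC_inv, consecC_cj']

lemma consecC_phi' (ρ : Equiv.Perm (Fin n)) :
    consecC ((cj ρ)⁻¹) (fun a b c => c < a ∧ a < b) = consecC ρ (fun a b c => b < c ∧ c < a) := by
  calc consecC ((cj ρ)⁻¹) (fun a b c => c < a ∧ a < b)
      = consecC (cj ((cj ρ)⁻¹)) (fun a b c => b < a ∧ a < c) := (consecC_cj' _).symm
    _ = consecC ((cj (cj ρ))⁻¹) (fun a b c => b < a ∧ a < c) := by rw [cj_inv_comm]
    _ = consecC (ρ⁻¹) (fun a b c => b < a ∧ a < c) := by rw [cj_involutive]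
    _ = consecC ρ (fun a b c => b < c ∧ c < a) := by
        have h := consecC_inv ρ⁻¹
        rw [inv_inv] at h
        exact h.symm

lemma phi_phi (π : Equiv.Perm (Fin n)) : (cj ((cj π)⁻¹))⁻¹ = π := by
  rw [cj_inv_comm, inv_inv, cj_involutive]

end EqOcc

/-- The consecutive patterns 213, 231 and 312 are equidistributed over permutations of
`[n]` with `m` cycles, with respect to cyclic occurrences. -/
theorem occ213_231_312_equidistributed (n m k : ℕ) :
    Nat.card {π : Equiv.Perm (Fin n) //
        cyc π = m ∧ consecC π (fun a b c => b < a ∧ a < c) = k}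
      = Nat.card {π : Equiv.Perm (Fin n) //
          cyc π = m ∧ consecC π (fun a b c => c < a ∧ a < b) = k} ∧
    Nat.card {π : Equiv.Perm (Fin n) //
        cyc π = m ∧ consecC π (fun a b c => c < a ∧ a < b) = k}
      = Nat.card {π : Equiv.Perm (Fin n) //
          cyc π = m ∧ consecC π (fun a b c => b < c ∧ c < a) = k} := by
  constructor
  · apply Nat.card_congr
    exact
      { toFun := fun p => ⟨EqOcc.cj p.1,
          by rw [EqOcc.cyc_cj]; exact p.2.1,
          by rw [EqOcc.consecC_cj]; exact p.2.2⟩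
        invFun := fun p => ⟨EqOcc.cj p.1,
          by rw [EqOcc.cyc_cj]; exact p.2.1,
          by rw [EqOcc.consecC_cj']; exact p.2.2⟩
        left_inv := fun p => Subtype.ext (EqOcc.cj_involutive p.1)
        right_inv := fun p => Subtype.ext (EqOcc.cj_involutive p.1) }
  · apply Nat.card_congr
    exact
      { toFun := fun p => ⟨(EqOcc.cj p.1)⁻¹,
          by rw [EqOcc.cyc_phi]; exact p.2.1,
          by rw [EqOcc.consecC_phi]; exact p.2.2⟩
        invFun := fun p => ⟨(EqOcc.cj p.1)⁻¹,
          by rw [EqOcc.cyc_phi]; exact p.2.1,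
          by rw [EqOcc.consecC_phi']; exact p.2.2⟩
        left_inv := fun p => Subtype.ext (EqOcc.phi_phi p.1)
        right_inv := fun p => Subtype.ext (EqOcc.phi_phi p.1) }
end
end

section
/- For each pattern p ∈ {213, 231, 312} and all n ≥ 1 and k, the number of permutations of [n] consisting of a single cycle with exactly k cyclic occurrences of the consecutive pattern p equals the number of permutations of [n−1] whose one-line notation has exactly k occurrences of p in consecutive positions. -/
open scoped Classical

noncomputable section

/-- The one-line notation of a permutation `σ` of `[m]`, as a function `ℕ → ℕ`
(0-indexed positions and values). -/
def oneLine {m : ℕ} (σ : Equiv.Perm (Fin m)) (i : ℕ) : ℕ :=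
  if h : i < m then (σ ⟨i, h⟩ : ℕ) else 0

-- Auxiliary machinery

namespace SingleCycleAux

open Equiv Function

open Fin.NatCast

variable {m : ℕ}

/-- Embed a permutation of `Fin m` into `Fin (m+1)` fixing `0` and acting on successors. -/
def toBig (σ : Equiv.Perm (Fin m)) : Equiv.Perm (Fin (m + 1)) :=
  Equiv.permCongr (finSuccEquiv m).symm (Equiv.optionCongr σ)

@[simp] lemma toBig_zero (σ : Equiv.Perm (Fin m)) : toBig σ 0 = 0 := by
  simp [toBig, Equiv.permCongr_apply]

@[simp] lemma toBig_succ (σ : Equiv.Perm (Fin m)) (i : Fin m) :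
    toBig σ i.succ = (σ i).succ := by
  simp [toBig, Equiv.permCongr_apply]

/-- The canonical long cycle conjugated by `toBig σ`. -/
def bigPerm (σ : Equiv.Perm (Fin m)) : Equiv.Perm (Fin (m + 1)) :=
  toBig σ * finRotate (m + 1) * (toBig σ)⁻¹

lemma rot_pow (j : ℕ) (x : Fin (m + 1)) :
    ((finRotate (m + 1)) ^ j) x = x + (j : Fin (m + 1)) := by
  induction j with
  | zero => simp
  | succ j ih =>
      rw [pow_succ', Equiv.Perm.mul_apply, ih, finRotate_succ_apply]
      push_cast
      rw [add_assoc]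

lemma conj_pow_apply (g : Equiv.Perm (Fin (m + 1))) (j : ℕ) (x : Fin (m + 1)) :
    ((g * finRotate (m + 1) * g⁻¹) ^ j) (g x) = g (x + (j : Fin (m + 1))) := by
  rw [conj_pow]
  simp [Equiv.Perm.mul_apply, rot_pow]

lemma conj_pow_zero (g : Equiv.Perm (Fin (m + 1))) (hg : g 0 = 0) (j : ℕ) :
    ((g * finRotate (m + 1) * g⁻¹) ^ j) 0 = g (j : Fin (m + 1)) := by
  conv_lhs => rw [← hg]
  rw [conj_pow_apply, zero_add]

lemma wordN_def {n : ℕ} (π : Equiv.Perm (Fin n)) (i : ℕ) :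
    wordN π i = ((psiList π).map Fin.val).getD i 0 := by
  simp only [wordN, List.map_id']
  rw [show (Bind.bind (psiList π) fun a => Pure.pure (Fin.val a) : List ℕ)
      = (psiList π).map Fin.val from List.map_eq_flatMap.symm]

lemma sameCycle_total (π : Equiv.Perm (Fin (m + 1)))
    (hsurj : ∀ y, ∃ j : ℕ, (π ^ j) 0 = y) : ∀ x y, π.SameCycle x y := by
  have h0 : ∀ y, π.SameCycle 0 y := by
    intro y
    obtain ⟨j, hj⟩ := hsurj y
    exact ⟨j, by simpa [zpow_natCast] using hj⟩
  intro x y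
  exact (h0 x).symm.trans (h0 y)

section Total

variable (π : Equiv.Perm (Fin (m + 1)))

lemma isCycMin_iff (htot : ∀ x y, π.SameCycle x y) (x : Fin (m + 1)) : isCycMin π x ↔ x = 0 := by
  constructor
  · intro h
    exact le_antisymm (h 0 (htot x 0)) (Fin.zero_le x)
  · rintro rfl y _
    exact Fin.zero_le y

lemma cyc_eq_one (htot : ∀ x y, π.SameCycle x y) : cyc π = 1 := by
  unfold cyc
  rw [Nat.card_congr (Equiv.subtypeEquivRight fun x => isCycMin_iff π htot x)]
  haveI : Nonempty {x : Fin (m + 1) // x = 0} := ⟨⟨0, rfl⟩⟩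
  haveI : Subsingleton {x : Fin (m + 1) // x = 0} :=
    ⟨fun a b => Subtype.ext (a.2.trans b.2.symm)⟩
  exact Nat.card_unique

lemma cycMins_eq (htot : ∀ x y, π.SameCycle x y) : cycMins π = [0] := by
  unfold cycMins
  have h1 : ((List.finRange (m + 1)).filter fun x => decide (isCycMin π x))
      = (List.finRange (m + 1)).filter fun x => decide (x = (0 : Fin (m + 1))) := by
    apply List.filter_congr
    intro x _
    simp [decide_eq_decide, isCycMin_iff π htot x]
  rw [h1, List.finRange_succ]
  have h2 : ((List.finRange m).map Fin.succ).filter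
      (fun x => decide (x = (0 : Fin (m + 1)))) = [] := by
    rw [List.filter_eq_nil_iff]
    intro a ha
    obtain ⟨b, _, rfl⟩ := List.mem_map.1 ha
    simp [Fin.succ_ne_zero]
  rw [List.filter_cons, h2]
  simp

lemma cycLen_eq (htot : ∀ x y, π.SameCycle x y) : cycLen π 0 = m + 1 := by
  unfold cycLen
  rw [Nat.card_congr (Equiv.subtypeUnivEquiv fun y => htot 0 y)]
  simp [Nat.card_eq_fintype_card]

lemma psiList_eq (htot : ∀ x y, π.SameCycle x y) : psiList π = (List.range (m + 1)).map fun j => (π ^ j) 0 := by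
  unfold psiList seg
  rw [cycMins_eq π htot]
  simp [cycLen_eq π htot]

lemma psiList_get (htot : ∀ x y, π.SameCycle x y) {i : ℕ} (hi : i < m + 1) : (psiList π)[i]? = some ((π ^ i) 0) := by
  rw [psiList_eq π htot]
  simp [List.getElem?_map, List.getElem?_range, hi]

lemma wordN_eq (htot : ∀ x y, π.SameCycle x y) {i : ℕ} (hi : i < m + 1) : wordN π i = (((π ^ i) 0 : Fin (m + 1)) : ℕ) := by
  rw [wordN_def, psiList_eq π htot, List.map_map, List.getD_eq_getElem?_getD]
  simp [List.getElem?_map, List.getElem?_range, hi]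

lemma sameCycleAt_all (htot : ∀ x y, π.SameCycle x y) {i j : ℕ} (hi : i < m + 1) (hj : j < m + 1) : sameCycleAt π i j :=
  ⟨_, _, psiList_get π htot hi, psiList_get π htot hj, htot _ _⟩

end Total

lemma bigPerm_surj_pow (σ : Equiv.Perm (Fin m)) (y : Fin (m + 1)) :
    ∃ j : ℕ, ((bigPerm σ) ^ j) 0 = y := by
  refine ⟨((toBig σ).symm y).val, ?_⟩
  rw [bigPerm, conj_pow_zero _ (toBig_zero σ), Fin.cast_val_eq_self]
  simp

lemma bigPerm_total (σ : Equiv.Perm (Fin m)) : ∀ x y, (bigPerm σ).SameCycle x y :=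
  sameCycle_total _ (bigPerm_surj_pow σ)

lemma wordN_bigPerm_zero (σ : Equiv.Perm (Fin m)) : wordN (bigPerm σ) 0 = 0 := by
  rw [wordN_eq _ (bigPerm_total σ) (Nat.succ_pos m)]
  simp

lemma wordN_bigPerm_succ (σ : Equiv.Perm (Fin m)) {i : ℕ} (hi : i < m) :
    wordN (bigPerm σ) (i + 1) = oneLine σ i + 1 := by
  rw [wordN_eq _ (bigPerm_total σ) (by omega)]
  rw [bigPerm, conj_pow_zero _ (toBig_zero σ)]
  have h1 : ((i + 1 : ℕ) : Fin (m + 1)) = (⟨i, hi⟩ : Fin m).succ := by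
    apply Fin.ext
    rw [Fin.val_cast_of_lt (show i + 1 < m + 1 by omega)]
    rfl
  rw [h1, toBig_succ]
  simp [oneLine, hi, Fin.val_succ]

lemma card_shift (Q R : ℕ → Prop) (hQ0 : ¬ Q 0) (hQR : ∀ i, Q (i + 1) ↔ R i) :
    Nat.card {i : ℕ // Q i} = Nat.card {i : ℕ // R i} := by
  refine Nat.card_congr ⟨fun x => ⟨x.1 - 1, ?_⟩, fun y => ⟨y.1 + 1, (hQR y.1).2 y.2⟩, ?_, ?_⟩
  · obtain ⟨i, hi⟩ := x
    match i with
    | 0 => exact absurd hi hQ0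
    | j + 1 => exact (hQR j).1 hi
  · rintro ⟨i, hi⟩
    have : i ≠ 0 := fun h => hQ0 (h ▸ hi)
    exact Subtype.ext (by simp; omega)
  · rintro ⟨i, hi⟩
    exact Subtype.ext (by simp)

lemma consec_eq (P : ℕ → ℕ → ℕ → Prop) (h0 : ∀ b c, ¬ P 0 b c)
    (hsh : ∀ a b c, P (a + 1) (b + 1) (c + 1) ↔ P a b c) (σ : Equiv.Perm (Fin m)) :
    consecC (bigPerm σ) P = consecLine m (oneLine σ) P := by
  unfold consecC consecLine
  apply card_shift
  · rintro ⟨h1, h2, -⟩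
    rw [wordN_bigPerm_zero σ] at h2
    exact h0 _ _ h2
  · intro i
    constructor
    · rintro ⟨h1, h2, -⟩
      have hi : i < m := by omega
      have hi1 : i + 1 < m := by omega
      have hi2 : i + 2 < m := by omega
      rw [wordN_bigPerm_succ σ hi, show i + 1 + 1 = (i + 1) + 1 from rfl,
        wordN_bigPerm_succ σ hi1, show i + 1 + 2 = (i + 2) + 1 by omega,
        wordN_bigPerm_succ σ hi2, hsh] at h2
      exact ⟨hi2, h2⟩
    · rintro ⟨h1, h2⟩
      refine ⟨by omega, ?_, sameCycleAt_all _ (bigPerm_total σ) (by omega) (by omega),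
        sameCycleAt_all _ (bigPerm_total σ) (by omega) (by omega)⟩
      rw [wordN_bigPerm_succ σ (by omega), show i + 1 + 1 = (i + 1) + 1 from rfl,
        wordN_bigPerm_succ σ (by omega), show i + 1 + 2 = (i + 2) + 1 by omega,
        wordN_bigPerm_succ σ (by omega), hsh]
      exact h2

lemma total_of_cyc_eq_one (π : Equiv.Perm (Fin (m + 1))) (h1 : cyc π = 1) :
    ∀ x y, π.SameCycle x y := by
  haveI hsub : Subsingleton {x : Fin (m + 1) // isCycMin π x} := by
    by_contra h
    rw [not_subsingleton_iff_nontrivial] at h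
    have h2 := Finite.one_lt_card_iff_nontrivial.2 h
    have h3 : Nat.card {x : Fin (m + 1) // isCycMin π x} = 1 := h1
    omega
  have hmin : ∀ x : Fin (m + 1), ∃ z : Fin (m + 1), π.SameCycle x z ∧ isCycMin π z := by
    intro x
    classical
    have hne : (Finset.univ.filter (fun y => π.SameCycle x y)).Nonempty :=
      ⟨x, Finset.mem_filter.2 ⟨Finset.mem_univ x, Equiv.Perm.SameCycle.refl π x⟩⟩
    refine ⟨(Finset.univ.filter (fun y => π.SameCycle x y)).min' hne, ?_, ?_⟩
    · have h := Finset.min'_mem _ hne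
      exact (Finset.mem_filter.1 h).2
    · intro y hy
      have hmem := Finset.min'_mem _ hne
      exact Finset.min'_le _ y (Finset.mem_filter.2
        ⟨Finset.mem_univ y, ((Finset.mem_filter.1 hmem).2).trans hy⟩)
  intro x y
  obtain ⟨zx, hzx, hminx⟩ := hmin x
  obtain ⟨zy, hzy, hminy⟩ := hmin y
  have : zx = zy := congrArg Subtype.val (hsub.allEq ⟨zx, hminx⟩ ⟨zy, hminy⟩)
  exact hzx.trans (this ▸ hzy.symm)

lemma pow_mod_period (π : Equiv.Perm (Fin (m + 1))) {p : ℕ} (hper : (π ^ p) 0 = 0)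
    (i : ℕ) : (π ^ (p * i)) 0 = 0 := by
  induction i with
  | zero => simp
  | succ i ih =>
      rw [Nat.mul_succ, pow_add, Equiv.Perm.mul_apply, hper, ih]

lemma surj_bounded (π : Equiv.Perm (Fin (m + 1))) (htot : ∀ x y, π.SameCycle x y) :
    ∀ y, ∃ j : ℕ, j ≤ m ∧ (π ^ j) 0 = y := by
  -- pigeonhole: find a positive period p ≤ m + 1
  obtain ⟨a, b, hab, heq⟩ := Fintype.exists_ne_map_eq_of_card_lt
    (fun i : Fin (m + 2) => (π ^ (i : ℕ)) 0) (by simp)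
  wlog hlt : (a : ℕ) < (b : ℕ) generalizing a b
  · have hne : (a : ℕ) ≠ (b : ℕ) := fun h => hab (Fin.ext h)
    exact this b a hab.symm heq.symm (by omega)
  set p : ℕ := (b : ℕ) - (a : ℕ) with hp
  have hp0 : 0 < p := by omega
  have hpm : p ≤ m + 1 := by omega
  have hper : (π ^ p) 0 = 0 := by
    have h1 : (π ^ ((a : ℕ) + p)) 0 = (π ^ (a : ℕ)) ((π ^ p) 0) := by
      rw [pow_add, Equiv.Perm.mul_apply]
    have h2 : (a : ℕ) + p = (b : ℕ) := by omega
    rw [h2] at h1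
    have h3 : (π ^ (a : ℕ)) ((π ^ p) 0) = (π ^ (a : ℕ)) 0 := by rw [← h1, heq]
    exact (π ^ (a : ℕ)).injective h3
  intro y
  obtain ⟨i, -, hi⟩ := (htot 0 y).exists_pow_eq'
  have hmod := Nat.mod_lt i hp0
  refine ⟨i % p, by omega, ?_⟩
  have : (π ^ i) 0 = (π ^ (i % p)) 0 := by
    conv_lhs => rw [← Nat.mod_add_div i p]
    rw [pow_add, Equiv.Perm.mul_apply, pow_mod_period π hper]
  rw [← this, hi]

lemma exists_sigma (π : Equiv.Perm (Fin (m + 1))) (h1 : cyc π = 1) :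
    ∃ σ : Equiv.Perm (Fin m), bigPerm σ = π := by
  have htot := total_of_cyc_eq_one π h1
  have hsurjB := surj_bounded π htot
  set h : Fin (m + 1) → Fin (m + 1) := fun j => (π ^ (j : ℕ)) 0 with hh
  have hsurj : Function.Surjective h := by
    intro y
    obtain ⟨j, hjm, hj⟩ := hsurjB y
    exact ⟨⟨j, by omega⟩, hj⟩
  have hbij : Function.Bijective h := ⟨Finite.injective_iff_surjective.2 hsurj, hsurj⟩
  set g : Equiv.Perm (Fin (m + 1)) := Equiv.ofBijective h hbij with hg
  have hgapp : ∀ j : Fin (m + 1), g j = (π ^ (j : ℕ)) 0 := fun j => rfl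
  have hg0 : g 0 = 0 := by rw [hgapp]; simp
  -- the full period
  have hperiod : (π ^ (m + 1)) 0 = 0 := by
    obtain ⟨j, hjm, hj⟩ := hsurjB ((π ^ (m + 1)) 0)
    have hkey : (π ^ (m + 1 - j)) 0 = 0 := by
      apply (π ^ j).injective
      have : (π ^ (j + (m + 1 - j))) 0 = (π ^ j) ((π ^ (m + 1 - j)) 0) := by
        rw [pow_add, Equiv.Perm.mul_apply]
      rw [show j + (m + 1 - j) = m + 1 by omega] at this
      rw [← this, hj]
    by_cases ht : m + 1 - j ≤ m
    · have : g ⟨m + 1 - j, by omega⟩ = g 0 := by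
        rw [hgapp, hgapp]
        simpa using hkey
      have := g.injective this
      have : m + 1 - j = 0 := congrArg Fin.val this
      omega
    · have : j = 0 := by omega
      rw [this] at hj
      simpa using hj.symm
  -- π = g * c * g⁻¹
  have hconj : π = g * finRotate (m + 1) * g⁻¹ := by
    rw [eq_mul_inv_iff_mul_eq]
    apply Equiv.ext
    intro x
    rw [Equiv.Perm.mul_apply, Equiv.Perm.mul_apply, finRotate_succ_apply, hgapp, hgapp]
    by_cases hx : (x : ℕ) < m
    · have hval : ((x + 1 : Fin (m + 1)) : ℕ) = (x : ℕ) + 1 := by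
        rw [Fin.val_add_one_of_lt]
        exact Fin.lt_last_iff_ne_last.2 (fun hl => by rw [hl] at hx; simp at hx)
      rw [hval, pow_succ', Equiv.Perm.mul_apply]
    · have hxm : (x : ℕ) = m := by omega
      have hxlast : x = Fin.last m := Fin.ext hxm
      have hstep : π ((π ^ m) 0) = (π ^ (m + 1)) 0 := by
        conv_rhs => rw [pow_succ']
        rfl
      rw [hxlast]
      simp only [Fin.last_add_one, Fin.val_zero, pow_zero, Equiv.Perm.one_apply, Fin.val_last]
      rw [hstep]
      exact hperiod
  -- extract σ
  set G : Equiv.Perm (Option (Fin m)) := Equiv.permCongr (finSuccEquiv m) g with hG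
  have hGnone : G none = none := by
    simp [hG, Equiv.permCongr_apply, finSuccEquiv_symm_none, hg0, finSuccEquiv_zero]
  set σ : Equiv.Perm (Fin m) := Equiv.removeNone G with hσ
  have hsome : ∀ i : Fin m, some (σ i) = G (some i) := by
    intro i
    apply Equiv.removeNone_some
    rcases hGi : G (some i) with _ | a
    · exfalso
      have := G.injective (hGi.trans hGnone.symm)
      simp at this
    · exact ⟨a, rfl⟩
  have htb : toBig σ = g := by
    apply Equiv.ext
    intro x
    induction x using Fin.cases with
    | zero => rw [toBig_zero, hg0]
    | succ i =>
        rw [toBig_succ]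
        have h2 := hsome i
        rw [hG, Equiv.permCongr_apply, finSuccEquiv_symm_some] at h2
        have := congrArg (finSuccEquiv m).symm h2
        rw [finSuccEquiv_symm_some, Equiv.symm_apply_apply] at this
        exact this
  exact ⟨σ, by rw [bigPerm, htb, ← hconj]⟩

lemma key (m k : ℕ) (P : ℕ → ℕ → ℕ → Prop) (h0 : ∀ b c, ¬ P 0 b c)
    (hsh : ∀ a b c, P (a + 1) (b + 1) (c + 1) ↔ P a b c) :
    Nat.card {π : Equiv.Perm (Fin (m + 1)) // cyc π = 1 ∧ consecC π P = k}
      = Nat.card {σ : Equiv.Perm (Fin m) // consecLine m (oneLine σ) P = k} := by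
  have hprop : ∀ σ : Equiv.Perm (Fin m), consecLine m (oneLine σ) P = k →
      cyc (bigPerm σ) = 1 ∧ consecC (bigPerm σ) P = k := by
    intro σ hσ
    exact ⟨cyc_eq_one _ (bigPerm_total σ), by rw [consec_eq P h0 hsh σ]; exact hσ⟩
  set F : {σ : Equiv.Perm (Fin m) // consecLine m (oneLine σ) P = k} →
      {π : Equiv.Perm (Fin (m + 1)) // cyc π = 1 ∧ consecC π P = k} :=
    fun s => ⟨bigPerm s.1, hprop s.1 s.2⟩ with hF
  have hinj : Function.Injective F := by
    rintro ⟨σ, hσ⟩ ⟨τ, hτ⟩ hst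
    have hbp : bigPerm σ = bigPerm τ := congrArg Subtype.val hst
    apply Subtype.ext
    apply Equiv.ext
    intro i
    have h1 := wordN_bigPerm_succ σ i.2
    have h2 := wordN_bigPerm_succ τ i.2
    rw [hbp] at h1
    have h3 : oneLine σ (i : ℕ) = oneLine τ (i : ℕ) := by omega
    simp only [oneLine, dif_pos i.2] at h3
    exact Fin.ext (by simpa using h3)
  have hsurj : Function.Surjective F := by
    rintro ⟨π, h1, h2⟩
    obtain ⟨σ, hσ⟩ := exists_sigma π h1
    refine ⟨⟨σ, ?_⟩, Subtype.ext hσ⟩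
    rw [← consec_eq P h0 hsh σ, hσ]
    exact h2
  exact (Nat.card_eq_of_bijective F ⟨hinj, hsurj⟩).symm

end SingleCycleAux

/-- For each `p ∈ {213, 231, 312}`: the number of single-cycle permutations of `[n]` with
`k` cyclic occurrences of the consecutive pattern `p` equals the number of permutations of
`[n-1]` with `k` occurrences of `p` in consecutive positions of their one-line notation. -/
theorem single_cycle_consec_patterns (n : ℕ) (hn : 1 ≤ n) (k : ℕ) :
    (Nat.card {π : Equiv.Perm (Fin n) //
        cyc π = 1 ∧ consecC π (fun a b c => b < a ∧ a < c) = k}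
      = Nat.card {σ : Equiv.Perm (Fin (n - 1)) //
          consecLine (n - 1) (oneLine σ) (fun a b c => b < a ∧ a < c) = k}) ∧
    (Nat.card {π : Equiv.Perm (Fin n) //
        cyc π = 1 ∧ consecC π (fun a b c => c < a ∧ a < b) = k}
      = Nat.card {σ : Equiv.Perm (Fin (n - 1)) //
          consecLine (n - 1) (oneLine σ) (fun a b c => c < a ∧ a < b) = k}) ∧
    (Nat.card {π : Equiv.Perm (Fin n) //
        cyc π = 1 ∧ consecC π (fun a b c => b < c ∧ c < a) = k}
      = Nat.card {σ : Equiv.Perm (Fin (n - 1)) //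
          consecLine (n - 1) (oneLine σ) (fun a b c => b < c ∧ c < a) = k}) := by
  obtain ⟨m, rfl⟩ : ∃ m, n = m + 1 := ⟨n - 1, by omega⟩
  simp only [Nat.add_sub_cancel]
  refine ⟨SingleCycleAux.key m k _ ?_ ?_, SingleCycleAux.key m k _ ?_ ?_,
    SingleCycleAux.key m k _ ?_ ?_⟩ <;> intros <;> omega
end
end

section
/- For all n ≥ 1 and k, the number of permutations of [n] consisting of a single cycle with exactly k cyclic occurrences of the consecutive pattern 321 equals the number of permutations of [n−1] whose one-line notation has exactly k positions i with σ(i) > σ(i+1) > σ(i+2). -/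
open scoped Classical

noncomputable section

namespace Aux

open Equiv Equiv.Perm

variable {m : ℕ}

lemma conj_pow_eq {G : Type*} [Group G] (a b : G) (j : ℕ) :
    (a * b * a⁻¹) ^ j = a * b ^ j * a⁻¹ := by
  induction j with
  | zero => simp
  | succ j ih => rw [pow_succ, pow_succ, ih]; group

def wmap (σ : Perm (Fin m)) : Perm (Fin (m + 1)) := decomposeFin.symm (0, σ)

lemma wmap_zero (σ : Perm (Fin m)) : wmap σ 0 = 0 := decomposeFin_symm_apply_zero 0 σ

lemma wmap_succ (σ : Perm (Fin m)) (j : Fin m) : wmap σ j.succ = (σ j).succ := by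
  simp [wmap, decomposeFin_symm_apply_succ]

lemma wmap_inv_zero (σ : Perm (Fin m)) : (wmap σ)⁻¹ 0 = 0 := by
  conv_lhs => rw [← wmap_zero σ]
  exact Equiv.symm_apply_apply _ _

def Phi (σ : Perm (Fin m)) : Perm (Fin (m + 1)) := wmap σ * finRotate (m + 1) * (wmap σ)⁻¹

lemma rot_pow_zero (j : ℕ) (hj : j < m + 1) : ((finRotate (m + 1)) ^ j) 0 = ⟨j, hj⟩ := by
  induction j with
  | zero => rfl
  | succ j ih =>
    have hj' : j < m + 1 := by omega
    rw [pow_succ', Equiv.Perm.mul_apply, ih hj', finRotate_succ_apply]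
    apply Fin.ext
    rw [Fin.val_add_one]
    have : (⟨j, hj'⟩ : Fin (m + 1)) ≠ Fin.last m := by
      intro h
      have := congrArg Fin.val h
      simp at this
      omega
    simp [this]

lemma Phi_pow_zero (σ : Perm (Fin m)) (j : ℕ) (hj : j < m + 1) :
    ((Phi σ) ^ j) 0 = wmap σ ⟨j, hj⟩ := by
  rw [Phi, conj_pow_eq]
  rw [Equiv.Perm.mul_apply, Equiv.Perm.mul_apply, wmap_inv_zero, rot_pow_zero j hj]

lemma phi_single (σ : Perm (Fin m)) : ∀ y, (Phi σ).SameCycle 0 y := by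
  intro y
  refine ⟨(((wmap σ)⁻¹ y : Fin (m + 1)) : ℕ), ?_⟩
  rw [zpow_natCast, Phi_pow_zero σ _ (Fin.is_lt _), Fin.eta]
  exact Equiv.apply_symm_apply _ _


lemma isCycMin_iff {π : Perm (Fin (m + 1))} (h1 : ∀ y, π.SameCycle 0 y) (x : Fin (m + 1)) :
    isCycMin π x ↔ x = 0 := by
  constructor
  · intro hx
    have := hx 0 (h1 x).symm
    exact le_antisymm this (Fin.zero_le x)
  · rintro rfl
    exact fun y _ => Fin.zero_le y

lemma cyc_eq_one {π : Perm (Fin (m + 1))} (h1 : ∀ y, π.SameCycle 0 y) : cyc π = 1 := by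
  rw [cyc, Nat.card_eq_one_iff_exists]
  refine ⟨⟨0, (isCycMin_iff h1 0).2 rfl⟩, ?_⟩
  rintro ⟨y, hy⟩
  exact Subtype.ext ((isCycMin_iff h1 y).1 hy)

lemma exists_cycMin {N : ℕ} (π : Perm (Fin N)) (x : Fin N) :
    ∃ z, π.SameCycle x z ∧ isCycMin π z := by
  set S : Finset (Fin N) := Finset.univ.filter (fun y => π.SameCycle x y) with hS
  have hxS : x ∈ S := Finset.mem_filter.2 ⟨Finset.mem_univ x, Equiv.Perm.SameCycle.refl π x⟩
  have hne : S.Nonempty := ⟨x, hxS⟩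
  refine ⟨S.min' hne, ?_, ?_⟩
  · have := S.min'_mem hne
    simp [hS] at this
    exact this
  · intro y hy
    have hzS : π.SameCycle x (S.min' hne) := by
      have := S.min'_mem hne
      simp [hS] at this
      exact this
    have hyS : y ∈ S := by simp [hS]; exact hzS.trans hy
    exact S.min'_le y hyS

lemma single_of_cyc_eq_one {π : Perm (Fin (m + 1))} (h : cyc π = 1) :
    ∀ y, π.SameCycle 0 y := by
  intro y
  by_contra hy
  obtain ⟨z0, hz0, hmin0⟩ := exists_cycMin π 0
  obtain ⟨zy, hzy, hminy⟩ := exists_cycMin π y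
  have hne : z0 ≠ zy := by
    intro he
    exact hy (hz0.trans (by rw [he]; exact hzy.symm))
  rw [cyc, Nat.card_eq_one_iff_exists] at h
  obtain ⟨⟨w, hw⟩, hall⟩ := h
  have e0 : z0 = w := congrArg Subtype.val (hall ⟨z0, hmin0⟩)
  have ey : zy = w := congrArg Subtype.val (hall ⟨zy, hminy⟩)
  exact hne (e0.trans ey.symm)

lemma cycLen_zero {π : Perm (Fin (m + 1))} (h1 : ∀ y, π.SameCycle 0 y) :
    cycLen π 0 = m + 1 := by
  rw [cycLen]
  rw [Nat.card_congr (Equiv.subtypeUnivEquiv h1)]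
  simp

lemma cycMins_eq {π : Perm (Fin (m + 1))} (h1 : ∀ y, π.SameCycle 0 y) :
    cycMins π = [0] := by
  unfold cycMins
  rw [List.finRange_succ, List.filter_cons]
  have h0 : (decide (isCycMin π 0)) = true := by
    simp only [decide_eq_true_eq]
    exact (isCycMin_iff h1 0).2 rfl
  rw [if_pos h0]
  have hnil : ((List.finRange m).map Fin.succ).filter (fun x => decide (isCycMin π x)) = [] := by
    rw [List.filter_eq_nil_iff]
    intro a ha
    obtain ⟨j, -, rfl⟩ := List.mem_map.1 ha
    simp only [decide_eq_true_eq, isCycMin_iff h1]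
    exact Fin.succ_ne_zero j
  rw [hnil]
  rfl

lemma psiList_eq {π : Perm (Fin (m + 1))} (h1 : ∀ y, π.SameCycle 0 y) :
    psiList π = (List.range (m + 1)).map fun j => (π ^ j) 0 := by
  rw [psiList, cycMins_eq h1]
  simp [seg, cycLen_zero h1]

lemma psi_get {π : Perm (Fin (m + 1))} (h1 : ∀ y, π.SameCycle 0 y) (i : ℕ) (hi : i < m + 1) :
    (psiList π)[i]? = some ((π ^ i) 0) := by
  rw [psiList_eq h1, List.getElem?_map, List.getElem?_range hi]
  rfl

lemma wordN_eq {π : Perm (Fin (m + 1))} (h1 : ∀ y, π.SameCycle 0 y) (i : ℕ) (hi : i < m + 1) :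
    wordN π i = (((π ^ i) 0 : Fin (m + 1)) : ℕ) := by
  have hdef : wordN π i = ((psiList π).map (fun x : Fin (m + 1) => (x : ℕ))).getD i 0 := by
    rw [wordN]
    simp only [bind_pure_comp, List.map_eq_map, List.map_id']
  rw [hdef, psiList_eq h1, List.map_map, List.getD_eq_getElem?_getD, List.getElem?_map,
    List.getElem?_range hi]
  rfl

lemma sameCycleAt_of {π : Perm (Fin (m + 1))} (h1 : ∀ y, π.SameCycle 0 y) {i j : ℕ}
    (hi : i < m + 1) (hj : j < m + 1) : sameCycleAt π i j :=
  ⟨(π ^ i) 0, (π ^ j) 0, psi_get h1 i hi, psi_get h1 j hj, ((h1 _).symm.trans (h1 _))⟩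

lemma consecC_eq {π : Perm (Fin (m + 1))} (h1 : ∀ y, π.SameCycle 0 y) (P : ℕ → ℕ → ℕ → Prop) :
    consecC π P =
      Nat.card {i : ℕ // i + 2 < m + 1 ∧ P (wordN π i) (wordN π (i + 1)) (wordN π (i + 2))} := by
  rw [consecC]
  apply Nat.card_congr
  apply Equiv.subtypeEquivRight
  intro i
  constructor
  · rintro ⟨h, hp, -, -⟩; exact ⟨h, hp⟩
  · rintro ⟨h, hp⟩
    exact ⟨h, hp, sameCycleAt_of h1 (by omega) (by omega), sameCycleAt_of h1 (by omega) (by omega)⟩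


lemma word_Phi_zero (σ : Perm (Fin m)) : wordN (Phi σ) 0 = 0 := by
  rw [wordN_eq (phi_single σ) 0 (by omega)]
  simp

lemma word_Phi_succ (σ : Perm (Fin m)) (i : ℕ) (hi : i < m) :
    wordN (Phi σ) (i + 1) = (σ ⟨i, hi⟩ : ℕ) + 1 := by
  rw [wordN_eq (phi_single σ) (i + 1) (by omega)]
  rw [Phi_pow_zero σ (i + 1) (by omega)]
  have : (⟨i + 1, by omega⟩ : Fin (m + 1)) = Fin.succ ⟨i, hi⟩ := rfl
  rw [this, wmap_succ]
  simp

lemma consec_Phi (σ : Perm (Fin m)) :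
    consecC (Phi σ) (fun a b c => c < b ∧ b < a)
      = consecLine m (oneLine σ) (fun a b c => c < b ∧ b < a) := by
  rw [consecC_eq (phi_single σ), consecLine]
  have key : ∀ i : ℕ, (i + 1 + 2 < m + 1 ∧
      (wordN (Phi σ) (i + 1 + 2) < wordN (Phi σ) (i + 1 + 1) ∧
        wordN (Phi σ) (i + 1 + 1) < wordN (Phi σ) (i + 1)))
      ↔ (i + 2 < m ∧ (oneLine σ (i + 2) < oneLine σ (i + 1) ∧ oneLine σ (i + 1) < oneLine σ i)) := by
    intro i
    by_cases hb : i + 2 < m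
    · have h0 : i < m := by omega
      have h1 : i + 1 < m := by omega
      have h2 : i + 2 < m := hb
      have e1 : wordN (Phi σ) (i + 1) = (σ ⟨i, h0⟩ : ℕ) + 1 := word_Phi_succ σ i h0
      have e2 : wordN (Phi σ) (i + 1 + 1) = (σ ⟨i + 1, h1⟩ : ℕ) + 1 := word_Phi_succ σ (i + 1) h1
      have e3 : wordN (Phi σ) (i + 1 + 2) = (σ ⟨i + 2, h2⟩ : ℕ) + 1 := word_Phi_succ σ (i + 2) h2
      have o1 : oneLine σ i = (σ ⟨i, h0⟩ : ℕ) := by rw [oneLine, dif_pos h0]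
      have o2 : oneLine σ (i + 1) = (σ ⟨i + 1, h1⟩ : ℕ) := by rw [oneLine, dif_pos h1]
      have o3 : oneLine σ (i + 2) = (σ ⟨i + 2, h2⟩ : ℕ) := by rw [oneLine, dif_pos h2]
      rw [e1, e2, e3, o1, o2, o3]
      omega
    · constructor
      · rintro ⟨h, -⟩; omega
      · rintro ⟨h, -⟩; omega
  have not0 : ¬ (0 + 2 < m + 1 ∧
      (wordN (Phi σ) (0 + 2) < wordN (Phi σ) (0 + 1) ∧ wordN (Phi σ) (0 + 1) < wordN (Phi σ) 0)) := by
    rintro ⟨-, -, h⟩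
    rw [word_Phi_zero σ] at h
    omega
  apply Nat.card_congr
  exact Equiv.symm {
    toFun := fun x => ⟨x.1 + 1, (key x.1).2 x.2⟩
    invFun := fun x => ⟨x.1 - 1, by
      obtain ⟨i, h⟩ := x
      cases i with
      | zero => exact absurd h not0
      | succ i => exact (key i).1 h⟩
    left_inv := fun x => Subtype.ext rfl
    right_inv := fun x => by
      obtain ⟨i, h⟩ := x
      cases i with
      | zero => exact absurd h not0
      | succ i => exact Subtype.ext rfl }

lemma Phi_injective : Function.Injective (Phi : Perm (Fin m) → Perm (Fin (m + 1))) := by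
  intro σ τ h
  have h2 : wmap σ = wmap τ := by
    apply Equiv.ext
    intro x
    have hx := congrArg (fun f : Perm (Fin (m + 1)) => (f ^ (x : ℕ)) 0) h
    rw [Phi_pow_zero σ _ x.isLt, Phi_pow_zero τ _ x.isLt, Fin.eta] at hx
    exact hx
  have h3 : ((0 : Fin (m + 1)), σ) = ((0 : Fin (m + 1)), τ) :=
    Equiv.Perm.decomposeFin.symm.injective h2
  exact (Prod.ext_iff.1 h3).2

lemma Phi_surjective {π : Perm (Fin (m + 1))} (h1 : ∀ y, π.SameCycle 0 y) :
    ∃ σ : Perm (Fin m), Phi σ = π := by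
  have hexists : ∀ y : Fin (m + 1), ∃ k : ℕ, (π ^ k) 0 = y := by
    intro y
    obtain ⟨i, -, hi⟩ := (h1 y).exists_pow_eq'
    exact ⟨i, hi⟩
  set u : Fin (m + 1) → Fin (m + 1) := fun i => (π ^ (i : ℕ)) 0 with hu
  -- injectivity of u
  have hinj_le : ∀ i j : Fin (m + 1), i ≤ j → u i = u j → i = j := by
    intro i j hle he
    set d : ℕ := (j : ℕ) - (i : ℕ) with hd
    have hfix : (π ^ d) 0 = 0 := by
      have h3 : (π ^ ((i : ℕ) + d)) 0 = (π ^ (i : ℕ)) 0 := by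
        have : (i : ℕ) + d = (j : ℕ) := by omega
        rw [this]; exact he.symm
      rw [pow_add, Equiv.Perm.mul_apply] at h3
      -- h3 : π^i (π^d 0) = π^i 0
      exact (Equiv.injective (π ^ (i : ℕ))) h3
    by_cases hd0 : d = 0
    · apply Fin.le_antisymm hle
      have : (j : ℕ) ≤ (i : ℕ) := by omega
      exact this
    · exfalso
      have hdpos : 0 < d := Nat.pos_of_ne_zero hd0
      have hdm : d ≤ m := by omega
      have hfixq : ∀ q : ℕ, (π ^ (d * q)) 0 = 0 := by
        intro q
        induction q with
        | zero => simp
        | succ q ih =>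
          have : d * (q + 1) = d * q + d := by ring
          rw [this, pow_add, Equiv.Perm.mul_apply, hfix, ih]
      have hsurj : Function.Surjective (fun t : Fin d => (π ^ (t : ℕ)) 0) := by
        intro y
        obtain ⟨k, hk⟩ := hexists y
        refine ⟨⟨k % d, Nat.mod_lt _ hdpos⟩, ?_⟩
        show (π ^ (k % d)) 0 = y
        rw [← hk]
        conv_rhs => rw [← Nat.mod_add_div k d]
        rw [pow_add, Equiv.Perm.mul_apply, hfixq]
      have := Fintype.card_le_of_surjective _ hsurj
      simp only [Fintype.card_fin] at this
      omega
  have hinj : Function.Injective u := by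
    intro i j he
    rcases le_total i j with hle | hle
    · exact hinj_le i j hle he
    · exact (hinj_le j i hle he.symm).symm
  have hbij : Function.Bijective u := (Finite.injective_iff_bijective).1 hinj
  set w : Perm (Fin (m + 1)) := Equiv.ofBijective u hbij with hwdef
  have hwa : ∀ j : Fin (m + 1), w j = (π ^ (j : ℕ)) 0 := fun j => rfl
  have hw0 : w 0 = 0 := by
    rw [hwa]
    simp
  -- π^(m+1) fixes 0
  have hm1 : (π ^ (m + 1)) 0 = 0 := by
    obtain ⟨j, hj⟩ := hbij.2 ((π ^ (m + 1)) 0)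
    rcases Nat.eq_zero_or_pos (j : ℕ) with h0 | hpos
    · rw [hu] at hj
      simp only [h0, pow_zero] at hj
      rw [← hj]
      rfl
    · exfalso
      obtain ⟨t, ht⟩ := Nat.exists_eq_add_of_lt hpos
      -- (j : ℕ) = 0 + t + 1 = t + 1
      have hjt : (j : ℕ) = t + 1 := by omega
      have hcan : (π ^ (t : ℕ)) 0 = (π ^ m) 0 := by
        have h3 : (π ^ ((j : ℕ))) 0 = (π ^ (m + 1)) 0 := hj
        rw [hjt, pow_succ', pow_succ', Equiv.Perm.mul_apply, Equiv.Perm.mul_apply] at h3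
        exact (Equiv.injective π) h3
      have htm : t < m := by
        have := j.isLt
        omega
      have he2 : u ⟨t, by omega⟩ = u ⟨m, by omega⟩ := hcan
      have := congrArg Fin.val (hinj he2)
      simp at this
      omega
  -- key commutation
  have key : ∀ i : Fin (m + 1), w (i + 1) = π (w i) := by
    intro i
    rw [hwa, hwa]
    by_cases hi : (i : ℕ) < m
    · have hlast : i ≠ Fin.last m := by
        intro h
        have := congrArg Fin.val h
        simp at this
        omega
      have hv : ((i + 1 : Fin (m + 1)) : ℕ) = (i : ℕ) + 1 := by
        rw [Fin.val_add_one, if_neg hlast]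
      rw [hv, pow_succ', Equiv.Perm.mul_apply]
    · have him : (i : ℕ) = m := by
        have := i.isLt
        omega
      have hlast : i = Fin.last m := by
        apply Fin.ext
        simpa using him
      have hv : ((i + 1 : Fin (m + 1)) : ℕ) = 0 := by
        rw [Fin.val_add_one, if_pos hlast]
      rw [hv, him]
      have : π ((π ^ m) 0) = (π ^ (m + 1)) 0 := by
        rw [pow_succ', Equiv.Perm.mul_apply]
      rw [this, hm1]
      rfl
  -- recover σ
  have hfst : (Equiv.Perm.decomposeFin w).1 = 0 := by
    have h4 := Equiv.Perm.decomposeFin_symm_apply_zero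
      (Equiv.Perm.decomposeFin w).1 (Equiv.Perm.decomposeFin w).2
    rw [Prod.mk.eta, Equiv.symm_apply_apply] at h4
    rw [← h4, hw0]
  refine ⟨(Equiv.Perm.decomposeFin w).2, ?_⟩
  have hwm : wmap (Equiv.Perm.decomposeFin w).2 = w := by
    rw [wmap, ← hfst, Prod.mk.eta, Equiv.symm_apply_apply]
  apply Equiv.ext
  intro x
  rw [Phi, Equiv.Perm.mul_apply, Equiv.Perm.mul_apply, hwm]
  have hx : x = w (w⁻¹ x) := (Equiv.apply_symm_apply w x).symm
  conv_rhs => rw [hx]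
  rw [← key (w⁻¹ x), finRotate_succ_apply]

end Aux

/-- The number of single-cycle permutations of `[n]` with `k` cyclic occurrences of the
consecutive pattern 321 equals the number of permutations of `[n-1]` with `k` occurrences
of 321 in consecutive positions of their one-line notation. -/
theorem single_cycle_consec_321 (n : ℕ) (hn : 1 ≤ n) (k : ℕ) :
    Nat.card {π : Equiv.Perm (Fin n) //
        cyc π = 1 ∧ consecC π (fun a b c => c < b ∧ b < a) = k}
      = Nat.card {σ : Equiv.Perm (Fin (n - 1)) //
          consecLine (n - 1) (oneLine σ) (fun a b c => c < b ∧ b < a) = k} := by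
  obtain ⟨m, rfl⟩ : ∃ m, n = m + 1 := ⟨n - 1, (Nat.succ_pred_eq_of_pos hn).symm⟩
  simp only [Nat.add_sub_cancel]
  symm
  apply Nat.card_congr
  refine Equiv.ofBijective (fun σ => ⟨Aux.Phi σ.1, Aux.cyc_eq_one (Aux.phi_single σ.1), by
      rw [Aux.consec_Phi]; exact σ.2⟩) ⟨?_, ?_⟩
  · intro a b hab
    apply Subtype.ext
    apply Aux.Phi_injective
    exact congrArg Subtype.val hab
  · rintro ⟨π, hc, hk⟩
    obtain ⟨σ, hσ⟩ := Aux.Phi_surjective (Aux.single_of_cyc_eq_one hc)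
    refine ⟨⟨σ, ?_⟩, ?_⟩
    · rw [← Aux.consec_Phi, hσ]; exact hk
    · exact Subtype.ext hσ
end
end

section
/- For all n and k, the number of permutations of [n] whose one-line notation has exactly k valleys (positions i with π(i) > π(i+1) < π(i+2)) equals the number of permutations of [n+1] consisting of a single cycle that have exactly k cyclic valleys. -/
open scoped Classical

noncomputable section

-- ==================== auxiliary development ====================

namespace ValleyAux

open Equiv
open Fin.NatCast Fin.CommRing

variable {n : ℕ}

/-- fixed points are fixed by all integer powers -/
lemma zpow_fix {α : Type*} (f : Equiv.Perm α) (x : α) (h : f x = x) :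
    ∀ m : ℤ, (f ^ m) x = x := by
  have hn : ∀ m : ℕ, (f ^ m) x = x := by
    intro m
    induction m with
    | zero => rfl
    | succ k ih => rw [pow_succ, Equiv.Perm.mul_apply, h, ih]
  intro m
  cases m with
  | ofNat m => simpa using hn m
  | negSucc m =>
    have h1 : (f ^ (m + 1)) x = x := hn (m + 1)
    have h2 : (f ^ (m + 1))⁻¹ ((f ^ (m + 1)) x) = x := Equiv.symm_apply_apply _ _
    rw [h1] at h2
    simpa [zpow_negSucc] using h2

lemma isCycMin_zero (π : Equiv.Perm (Fin (n + 1))) : isCycMin π 0 :=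
  fun y _ => Fin.zero_le y

lemma isCycMin_iff (π : Equiv.Perm (Fin (n + 1))) (h : ∀ y, π.SameCycle 0 y) (x : Fin (n + 1)) :
    isCycMin π x ↔ x = 0 := by
  constructor
  · intro hm
    exact le_antisymm (hm 0 (h x).symm) (Fin.zero_le x)
  · rintro rfl
    exact isCycMin_zero π

lemma cyc_eq_one_iff (π : Equiv.Perm (Fin (n + 1))) :
    cyc π = 1 ↔ ∀ y, π.SameCycle 0 y := by
  constructor
  · intro h1 y
    rw [cyc, Nat.card_eq_one_iff_unique] at h1
    obtain ⟨hs, -⟩ := h1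
    obtain ⟨m, hm, hmin⟩ := Set.exists_min_image {z | π.SameCycle y z} id
      (Set.toFinite _) ⟨y, Equiv.Perm.SameCycle.refl π y⟩
    have hmmin : isCycMin π m := fun z hz => hmin z (Set.mem_setOf_eq ▸ (hm.trans hz))
    have heq : (⟨0, isCycMin_zero π⟩ : {x // isCycMin π x}) = ⟨m, hmmin⟩ :=
      hs.elim _ _
    have hm0 : m = 0 := (congrArg Subtype.val heq).symm
    exact ((hm0 ▸ hm : π.SameCycle y 0)).symm
  · intro h
    rw [cyc, Nat.card_eq_one_iff_unique]
    refine ⟨⟨fun a b => ?_⟩, ⟨0, isCycMin_zero π⟩⟩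
    ext
    rw [(isCycMin_iff π h a.1).1 a.2, (isCycMin_iff π h b.1).1 b.2]

lemma cycMins_eq (π : Equiv.Perm (Fin (n + 1))) (h : ∀ y, π.SameCycle 0 y) :
    cycMins π = [0] := by
  unfold cycMins
  have hc : (List.finRange (n + 1)).filter (fun x => decide (isCycMin π x)) =
      (List.finRange (n + 1)).filter (fun x => decide (x = 0)) :=
    List.filter_congr (fun x _ => decide_eq_decide.2 (isCycMin_iff π h x))
  rw [hc, List.finRange_succ]
  rw [List.filter_cons]
  simp only [decide_eq_true_eq]
  rw [if_pos trivial]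
  have : (List.map Fin.succ (List.finRange n)).filter (fun x => decide (x = 0)) = [] := by
    rw [List.filter_eq_nil_iff]
    intro a ha
    simp only [List.mem_map] at ha
    obtain ⟨b, -, rfl⟩ := ha
    simp [Fin.succ_ne_zero]
  rw [this]
  rfl

lemma cycLen_zero (π : Equiv.Perm (Fin (n + 1))) (h : ∀ y, π.SameCycle 0 y) :
    cycLen π 0 = n + 1 := by
  rw [cycLen, Nat.card_congr (Equiv.subtypeUnivEquiv h), Nat.card_eq_fintype_card,
    Fintype.card_fin]

lemma psiList_eq (π : Equiv.Perm (Fin (n + 1))) (h : ∀ y, π.SameCycle 0 y) :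
    psiList π = (List.range (n + 1)).map fun j => (π ^ j) 0 := by
  rw [psiList, cycMins_eq π h]
  simp [seg, cycLen_zero π h]

lemma psiList_get (π : Equiv.Perm (Fin (n + 1))) (h : ∀ y, π.SameCycle 0 y)
    (i : ℕ) (hi : i < n + 1) : (psiList π)[i]? = some ((π ^ i) 0) := by
  rw [psiList_eq π h, List.getElem?_map, List.getElem?_range hi]
  rfl

lemma bind_pure_val (l : List (Fin (n + 1))) :
    (do let a ← l; pure a.val : List ℕ) = l.map Fin.val := by
  induction l with
  | nil => rfl
  | cons a t ih => simp_all

lemma wordN_eq (π : Equiv.Perm (Fin (n + 1))) (h : ∀ y, π.SameCycle 0 y)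
    (i : ℕ) (hi : i < n + 1) : wordN π i = ((π ^ i) 0 : ℕ) := by
  rw [wordN, List.map_id', bind_pure_val, psiList_eq π h, List.map_map,
    List.getD_eq_getElem?_getD, List.getElem?_map, List.getElem?_range hi]
  rfl

lemma sameCycleAt_of (π : Equiv.Perm (Fin (n + 1))) (h : ∀ y, π.SameCycle 0 y)
    (i j : ℕ) (hi : i < n + 1) (hj : j < n + 1) : sameCycleAt π i j :=
  ⟨(π ^ i) 0, (π ^ j) 0, psiList_get π h i hi, psiList_get π h j hj,
    ((h ((π ^ i) 0)).symm).trans (h ((π ^ j) 0))⟩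

lemma consecC_eq (π : Equiv.Perm (Fin (n + 1))) (h : ∀ y, π.SameCycle 0 y)
    (P : ℕ → ℕ → ℕ → Prop) :
    consecC π P = Nat.card {i : ℕ // i + 2 < n + 1 ∧
      P (wordN π i) (wordN π (i + 1)) (wordN π (i + 2))} := by
  rw [consecC]
  apply Nat.card_congr
  apply Equiv.subtypeEquivRight
  intro i
  constructor
  · rintro ⟨h1, h2, -⟩; exact ⟨h1, h2⟩
  · rintro ⟨h1, h2⟩
    exact ⟨h1, h2, sameCycleAt_of π h _ _ (by omega) (by omega),
      sameCycleAt_of π h _ _ (by omega) (by omega)⟩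

/-- the lift of a permutation of `Fin n` to `Fin (n+1)` fixing `0`. -/
def lift (τ : Equiv.Perm (Fin n)) : Equiv.Perm (Fin (n + 1)) where
  toFun := Fin.cases 0 (fun i => (τ i).succ)
  invFun := Fin.cases 0 (fun i => (τ⁻¹ i).succ)
  left_inv := by
    intro x
    induction x using Fin.cases with
    | zero => simp
    | succ i => simp
  right_inv := by
    intro x
    induction x using Fin.cases with
    | zero => simp
    | succ i => simp

@[simp] lemma lift_zero (τ : Equiv.Perm (Fin n)) : lift τ 0 = 0 := rfl

@[simp] lemma lift_succ (τ : Equiv.Perm (Fin n)) (i : Fin n) :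
    lift τ i.succ = (τ i).succ := by
  simp [lift]

/-- conjugate of the rotation -/
def rotC (e : Equiv.Perm (Fin (n + 1))) : Equiv.Perm (Fin (n + 1)) :=
  e * finRotate (n + 1) * e⁻¹

lemma finRotate_pow_zero (m : ℕ) : ((finRotate (n + 1)) ^ m) 0 = (m : Fin (n + 1)) := by
  induction m with
  | zero => simp
  | succ k ih =>
    rw [pow_succ', Equiv.Perm.mul_apply, ih, finRotate_succ_apply]
    push_cast
    ring

lemma rotC_pow (e : Equiv.Perm (Fin (n + 1))) (he : e 0 = 0) (m : ℕ) :
    ((rotC e) ^ m) 0 = e (m : Fin (n + 1)) := by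
  have h1 : (rotC e) ^ m = e * (finRotate (n + 1)) ^ m * e⁻¹ := conj_pow
  have h2 : e⁻¹ 0 = 0 := by
    conv_lhs => rw [← he]
    exact Equiv.symm_apply_apply e 0
  rw [h1, Equiv.Perm.mul_apply, Equiv.Perm.mul_apply, h2, finRotate_pow_zero]

lemma rotC_full (e : Equiv.Perm (Fin (n + 1))) (he : e 0 = 0) :
    ∀ y, (rotC e).SameCycle 0 y := by
  intro y
  refine ⟨((e.symm y : Fin (n + 1)) : ℕ), ?_⟩
  rw [zpow_natCast, rotC_pow e he, Fin.cast_val_eq_self]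
  exact e.apply_symm_apply y

def Phi (τ : Equiv.Perm (Fin n)) : Equiv.Perm (Fin (n + 1)) := rotC (lift τ)

lemma Phi_full (τ : Equiv.Perm (Fin n)) : ∀ y, (Phi τ).SameCycle 0 y :=
  rotC_full (lift τ) (lift_zero τ)

lemma word_Phi_zero (τ : Equiv.Perm (Fin n)) : wordN (Phi τ) 0 = 0 := by
  rw [wordN_eq _ (Phi_full τ) 0 (by omega)]
  simp

lemma word_Phi_succ (τ : Equiv.Perm (Fin n)) (j : ℕ) (hj : j < n) :
    wordN (Phi τ) (j + 1) = (τ ⟨j, hj⟩ : ℕ) + 1 := by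
  rw [wordN_eq _ (Phi_full τ) (j + 1) (by omega), Phi, rotC_pow _ (lift_zero τ)]
  have hcast : ((j + 1 : ℕ) : Fin (n + 1)) = Fin.succ ⟨j, hj⟩ := by
    apply Fin.ext
    rw [Fin.val_cast_of_lt (by omega)]
    rfl
  rw [hcast, lift_succ]
  rfl

lemma oneLine_pos {m : ℕ} (σ : Equiv.Perm (Fin m)) (i : ℕ) (h : i < m) :
    oneLine σ i = (σ ⟨i, h⟩ : ℕ) := dif_pos h

lemma card_shift {A B : ℕ → Prop} (hB0 : ¬ B 0) (hAB : ∀ j, A j ↔ B (j + 1)) :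
    Nat.card {j // A j} = Nat.card {i // B i} := by
  apply Nat.card_congr
  refine ⟨fun x => ⟨x.1 + 1, (hAB x.1).1 x.2⟩,
    fun y => ⟨y.1 - 1, (hAB _).2 ?_⟩, ?_, ?_⟩
  · have hy : y.1 ≠ 0 := fun h => hB0 (h ▸ y.2)
    have hyy : y.1 - 1 + 1 = y.1 := by omega
    rw [hyy]
    exact y.2
  · intro x; apply Subtype.ext; simp
  · intro y
    apply Subtype.ext
    have hy : y.1 ≠ 0 := fun h => hB0 (h ▸ y.2)
    simp only
    omega

set_option maxHeartbeats 2000000 in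
lemma consecC_Phi (τ : Equiv.Perm (Fin n)) :
    consecC (Phi τ) (fun a b c => b < a ∧ b < c)
      = consecLine n (oneLine τ) (fun a b c => b < a ∧ b < c) := by
  rw [consecC_eq _ (Phi_full τ), consecLine]
  symm
  apply card_shift
  · rintro ⟨-, h2, -⟩
    rw [word_Phi_zero τ] at h2
    omega
  · intro j
    constructor
    · rintro ⟨h1, h2, h3⟩
      have hn1 : j < n := by omega
      have hn2 : j + 1 < n := by omega
      have hn3 : j + 2 < n := by omega
      have hg1 : j + 1 + 2 < n + 1 := by omega
      rw [oneLine_pos τ j hn1, oneLine_pos τ (j + 1) hn2] at h2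
      rw [oneLine_pos τ (j + 1) hn2, oneLine_pos τ (j + 2) hn3] at h3
      refine ⟨hg1, ?_, ?_⟩
      · rw [word_Phi_succ τ j hn1, word_Phi_succ τ (j + 1) hn2]
        omega
      · rw [Nat.add_right_comm j 1 2, word_Phi_succ τ (j + 1) hn2,
          word_Phi_succ τ (j + 2) hn3]
        omega
    · rintro ⟨h1, h2, h3⟩
      have hn1 : j < n := by omega
      have hn2 : j + 1 < n := by omega
      have hn3 : j + 2 < n := by omega
      rw [word_Phi_succ τ j hn1, word_Phi_succ τ (j + 1) hn2] at h2
      rw [Nat.add_right_comm j 1 2, word_Phi_succ τ (j + 1) hn2,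
        word_Phi_succ τ (j + 2) hn3] at h3
      refine ⟨by omega, ?_, ?_⟩
      · rw [oneLine_pos τ j hn1, oneLine_pos τ (j + 1) hn2]
        omega
      · rw [oneLine_pos τ (j + 1) hn2, oneLine_pos τ (j + 2) hn3]
        omega

lemma Phi_inj : Function.Injective (Phi (n := n)) := by
  intro τ σ h
  have key : ∀ j : Fin (n + 1), lift τ j = lift σ j := by
    intro j
    have h1 := rotC_pow (lift τ) (lift_zero τ) (j : ℕ)
    have h2 := rotC_pow (lift σ) (lift_zero σ) (j : ℕ)
    rw [Fin.cast_val_eq_self] at h1 h2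
    rw [← h1, ← h2]
    rw [Phi] at h
    rw [show rotC (lift τ) = rotC (lift σ) from h]
  apply Equiv.ext
  intro i
  have := key i.succ
  rw [lift_succ, lift_succ] at this
  exact Fin.succ_injective n this

lemma Phi_surj (π : Equiv.Perm (Fin (n + 1))) (h : ∀ y, π.SameCycle 0 y) :
    ∃ τ, Phi τ = π := by
  -- no early return to 0
  have key : ∀ d : ℕ, 0 < d → (π ^ d) 0 = 0 → n + 1 ≤ d := by
    intro d hd hfix
    have hsurj : Function.Surjective (fun j : Fin d => (π ^ (j : ℕ)) 0) := by
      intro y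
      obtain ⟨m, hm⟩ := h y
      have hd' : (d : ℤ) ≠ 0 := by exact_mod_cast hd.ne'
      have hr0 : 0 ≤ m % d := Int.emod_nonneg m hd'
      have hrd : m % d < d := Int.emod_lt_of_pos m (by exact_mod_cast hd)
      have hfixz : ∀ q : ℤ, ((π ^ (d : ℤ)) ^ q) 0 = 0 :=
        zpow_fix _ _ (by rw [zpow_natCast]; exact hfix)
      have hmr : (π ^ m) 0 = (π ^ (m % d)) 0 := by
        conv_lhs => rw [show m = m % d + d * (m / d) from (Int.emod_add_mul_ediv m d).symm]
        rw [zpow_add, Equiv.Perm.mul_apply, zpow_mul, hfixz]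
      refine ⟨⟨(m % d).toNat, by omega⟩, ?_⟩
      simp only
      rw [← zpow_natCast, Int.toNat_of_nonneg hr0, ← hmr, hm]
    have := Nat.card_le_card_of_surjective _ hsurj
    simpa [Nat.card_eq_fintype_card] using this
  -- the enumeration map
  set g : Fin (n + 1) → Fin (n + 1) := fun j => (π ^ (j : ℕ)) 0 with hg
  have gleinj : ∀ a b : Fin (n + 1), (a : ℕ) ≤ (b : ℕ) → g a = g b → a = b := by
    intro a b hab heq
    have hpow : (π ^ (a : ℕ)) ((π ^ ((b : ℕ) - (a : ℕ))) 0) = (π ^ (a : ℕ)) 0 := by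
      rw [← Equiv.Perm.mul_apply, ← pow_add,
        show (a : ℕ) + ((b : ℕ) - (a : ℕ)) = (b : ℕ) by omega]
      exact heq.symm
    have hz : (π ^ ((b : ℕ) - (a : ℕ))) 0 = 0 := (π ^ (a : ℕ)).injective hpow
    rcases Nat.eq_zero_or_pos ((b : ℕ) - (a : ℕ)) with h0 | hpos
    · exact Fin.ext (by omega)
    · have := key _ hpos hz
      have hb := b.isLt
      omega
  have ginj : Function.Injective g := by
    intro a b heq
    rcases le_total (a : ℕ) (b : ℕ) with hab | hab
    · exact gleinj a b hab heq
    · exact (gleinj b a hab heq.symm).symm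
  have gbij : Function.Bijective g := Finite.injective_iff_bijective.mp ginj
  set e : Equiv.Perm (Fin (n + 1)) := Equiv.ofBijective g gbij with he
  have he_apply : ∀ j, e j = (π ^ (j : ℕ)) 0 := fun j => rfl
  have he0 : e 0 = 0 := by rw [he_apply]; simp
  -- π^(n+1) 0 = 0
  have hret : (π ^ (n + 1)) 0 = 0 := by
    obtain ⟨a, ha⟩ := gbij.2 ((π ^ (n + 1)) 0)
    have hpow : (π ^ (a : ℕ)) ((π ^ (n + 1 - (a : ℕ))) 0) = (π ^ (a : ℕ)) 0 := by
      rw [← Equiv.Perm.mul_apply, ← pow_add,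
        show (a : ℕ) + (n + 1 - (a : ℕ)) = n + 1 by have := a.isLt; omega]
      exact ha.symm
    have hz : (π ^ (n + 1 - (a : ℕ))) 0 = 0 := (π ^ (a : ℕ)).injective hpow
    have hpos : 0 < n + 1 - (a : ℕ) := by have := a.isLt; omega
    have := key _ hpos hz
    have ha0 : (a : ℕ) = 0 := by omega
    rw [← ha]
    show (π ^ (a : ℕ)) 0 = 0
    rw [ha0, pow_zero, Equiv.Perm.one_apply]
  -- construct τ
  have hne : ∀ i : Fin n, e i.succ ≠ 0 := by
    intro i hcon
    rw [← he0] at hcon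
    exact Fin.succ_ne_zero i (e.injective hcon)
  set t : Fin n → Fin n := fun i => (e i.succ).pred (hne i) with ht
  have tinj : Function.Injective t := by
    intro i j hij
    have h2 : ((e i.succ).pred (hne i)).succ = ((e j.succ).pred (hne j)).succ :=
      congrArg Fin.succ hij
    rw [Fin.succ_pred, Fin.succ_pred] at h2
    exact Fin.succ_injective n (e.injective h2)
  set τ : Equiv.Perm (Fin n) := Equiv.ofBijective t (Finite.injective_iff_bijective.mp tinj)
    with hτ
  refine ⟨τ, ?_⟩
  have hlift : lift τ = e := by
    apply Equiv.ext
    intro x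
    induction x using Fin.cases with
    | zero => rw [lift_zero, he0]
    | succ i =>
      rw [lift_succ]
      show (t i).succ = e i.succ
      rw [ht]
      exact Fin.succ_pred _ _
  rw [Phi, hlift]
  apply Equiv.ext
  intro x
  obtain ⟨j, rfl⟩ := e.surjective x
  rw [rotC, Equiv.Perm.mul_apply, Equiv.Perm.mul_apply, Equiv.Perm.inv_def, Equiv.symm_apply_apply,
    finRotate_succ_apply]
  rw [he_apply, he_apply, ← Equiv.Perm.mul_apply, ← pow_succ']
  rcases eq_or_lt_of_le (Nat.lt_succ_iff.mp j.isLt) with hj | hj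
  · -- j = last
    have hval : ((j + 1 : Fin (n + 1)) : ℕ) = 0 := by
      rw [Fin.val_add_one]
      rw [if_pos (Fin.ext hj)]
    rw [hval, pow_zero, Equiv.Perm.one_apply]
    rw [hj]
    exact hret.symm
  · have hval : ((j + 1 : Fin (n + 1)) : ℕ) = (j : ℕ) + 1 :=
      Fin.val_add_one_of_lt (by rwa [Fin.lt_iff_val_lt_val, Fin.val_last])
    rw [hval]

end ValleyAux


open ValleyAux in
/-- The number of permutations of `[n]` with `k` valleys in one-line notation equals the
number of single-cycle permutations of `[n+1]` with `k` cyclic valleys. -/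
theorem valleys_eq_single_cycle_valleys (n k : ℕ) :
    Nat.card {τ : Equiv.Perm (Fin n) //
        consecLine n (oneLine τ) (fun a b c => b < a ∧ b < c) = k}
      = Nat.card {π : Equiv.Perm (Fin (n + 1)) //
          cyc π = 1 ∧ consecC π (fun a b c => b < a ∧ b < c) = k} := by
  apply Nat.card_congr
  refine Equiv.ofBijective
    (fun τ => ⟨Phi τ.1, (cyc_eq_one_iff _).2 (Phi_full τ.1),
      by rw [consecC_Phi]; exact τ.2⟩) ⟨?_, ?_⟩
  · intro a b hab
    apply Subtype.ext
    exact Phi_inj (congrArg Subtype.val hab)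
  · rintro ⟨π, h1, h2⟩
    obtain ⟨τ, hτ⟩ := Phi_surj π ((cyc_eq_one_iff π).1 h1)
    refine ⟨⟨τ, ?_⟩, Subtype.ext hτ⟩
    rw [← consecC_Phi, hτ]
    exact h2
end
end

section
/- Define Δ on permutations of [n] by Δ(π) = Ψ⁻¹((Ψ(π))⁻¹), i.e. Δ(π) is the unique permutation with Ψ(Δ(π)) equal to the group inverse of the permutation Ψ(π). Then Δ is an involution on the set of permutations of [n]; for every π, cyc(Δ(π)) = cyc(π); and the number of cyclic occurrences of the classical pattern 3–1–2 in π equals the number of cyclic occurrences of the classical pattern 2–3–1 in Δ(π). -/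
open scoped Classical

noncomputable section

/-- The number of occurrences of the length-3 pattern described by `P` at triples of
positions `i < j < k` (all `< n`) in the word `w`. -/
def occ3 (n : ℕ) (w : ℕ → ℕ) (P : ℕ → ℕ → ℕ → Prop) : ℕ :=
  Nat.card {t : ℕ × ℕ × ℕ //
    t.1 < t.2.1 ∧ t.2.1 < t.2.2 ∧ t.2.2 < n ∧ P (w t.1) (w t.2.1) (w t.2.2)}

/-- `Ψ(π)` as a function `Fin n → Fin n` (0-indexed positions). -/
def psiFun {n : ℕ} (π : Equiv.Perm (Fin n)) : Fin n → Fin n :=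
  fun i => (psiList π).getD (i : ℕ) i

namespace DeltaAux

open Equiv Equiv.Perm List

variable {n : ℕ} (π : Equiv.Perm (Fin n))

theorem sameCycle_iff_of_fixed {x : Fin n} (hx : π x = x) {y : Fin n} :
    π.SameCycle x y ↔ y = x := by
  constructor
  · rintro ⟨k, rfl⟩
    rw [zpow_apply_eq_self_of_apply_eq_self hx]
  · rintro rfl; exact Equiv.Perm.SameCycle.refl _ _

theorem cycLen_eq_of_fixed {x : Fin n} (hx : π x = x) : cycLen π x = 1 := by
  rw [cycLen]
  rw [Nat.card_eq_one_iff_unique]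
  constructor
  · constructor
    rintro ⟨a, ha⟩ ⟨b, hb⟩
    have := (sameCycle_iff_of_fixed π hx).1 ha
    have := (sameCycle_iff_of_fixed π hx).1 hb
    subst this; subst this; rfl
  · exact ⟨⟨x, Equiv.Perm.SameCycle.refl _ _⟩⟩

theorem cycLen_eq_of_mem_support {x : Fin n} (hx : π x ≠ x) :
    cycLen π x = (π.cycleOf x).support.card := by
  rw [cycLen]
  have : ∀ y : Fin n, π.SameCycle x y ↔ y ∈ (π.cycleOf x).support := by
    intro y
    rw [Equiv.Perm.mem_support_cycleOf_iff]
    simp [Equiv.Perm.mem_support, hx]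
  rw [Nat.card_congr (Equiv.subtypeEquivRight this)]
  rw [Nat.card_eq_fintype_card, Fintype.card_coe]

theorem seg_eq_of_fixed {x : Fin n} (hx : π x = x) : seg π x = [x] := by
  rw [seg, cycLen_eq_of_fixed π hx, List.range_succ, List.range_zero]
  simp

theorem seg_eq_toList {x : Fin n} (hx : π x ≠ x) : seg π x = π.toList x := by
  rw [seg, Equiv.Perm.toList, cycLen_eq_of_mem_support π hx]
  exact List.range_map_iterate _ _ _

theorem cycLen_pos (x : Fin n) : 0 < cycLen π x := by
  rw [cycLen, Nat.card_pos_iff]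
  exact ⟨⟨⟨x, Equiv.Perm.SameCycle.refl _ _⟩⟩, inferInstance⟩

theorem length_seg (x : Fin n) : (seg π x).length = cycLen π x := by simp [seg]

theorem mem_seg {x y : Fin n} : y ∈ seg π x ↔ π.SameCycle x y := by
  by_cases hx : π x = x
  · rw [seg_eq_of_fixed π hx, sameCycle_iff_of_fixed π hx]; simp
  · rw [seg_eq_toList π hx, Equiv.Perm.mem_toList_iff]
    simp [Equiv.Perm.mem_support, hx]

theorem nodup_seg (x : Fin n) : (seg π x).Nodup := by
  by_cases hx : π x = x
  · rw [seg_eq_of_fixed π hx]; simp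
  · rw [seg_eq_toList π hx]; exact Equiv.Perm.nodup_toList _ _

theorem seg_get (x : Fin n) (j : ℕ) (hj : j < (seg π x).length) :
    (seg π x).get ⟨j, hj⟩ = (π ^ j) x := by simp [seg]

theorem pow_cycLen_apply (x : Fin n) : (π ^ cycLen π x) x = x := by
  by_cases hx : π x = x
  · rw [cycLen_eq_of_fixed π hx]; simpa
  · rw [cycLen_eq_of_mem_support π hx, ← Equiv.Perm.cycleOf_pow_apply_self,
      ← (π.isCycle_cycleOf hx).orderOf, pow_orderOf_eq_one]
    rfl

theorem pow_apply_inj {x : Fin n} {i j : ℕ} (hi : i < cycLen π x) (hj : j < cycLen π x)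
    (h : (π ^ i) x = (π ^ j) x) : i = j := by
  have hi' : i < (seg π x).length := by rwa [length_seg]
  have hj' : j < (seg π x).length := by rwa [length_seg]
  have := List.nodup_iff_injective_get.1 (nodup_seg π x)
  have := @this ⟨i, hi'⟩ ⟨j, hj'⟩ (by rw [seg_get, seg_get]; exact h)
  simpa using this

theorem exists_cycMin (y : Fin n) : ∃ m, isCycMin π m ∧ π.SameCycle m y := by
  classical
  have hne : (Finset.univ.filter fun z => π.SameCycle z y).Nonempty :=
    ⟨y, by simp [Equiv.Perm.SameCycle.refl]⟩
  set m := (Finset.univ.filter fun z => π.SameCycle z y).min' hne with hm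
  have hmem : m ∈ Finset.univ.filter fun z => π.SameCycle z y := Finset.min'_mem _ _
  have hmy : π.SameCycle m y := by simpa using hmem
  refine ⟨m, ?_, hmy⟩
  intro z hz
  apply Finset.min'_le
  simp only [Finset.mem_filter, Finset.mem_univ, true_and]
  exact (hz.symm.trans hmy)

theorem cycMin_unique {m m' : Fin n} (h : isCycMin π m) (h' : isCycMin π m')
    (hs : π.SameCycle m m') : m = m' :=
  le_antisymm (h _ hs) (h' _ hs.symm)

theorem mem_cycMins {m : Fin n} : m ∈ cycMins π ↔ isCycMin π m := by
  simp [cycMins, List.mem_filter, List.mem_finRange]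

theorem cycMins_sorted : (cycMins π).Pairwise (fun a b => b < a) := by
  rw [cycMins, List.pairwise_reverse]
  exact List.Pairwise.filter _ (List.pairwise_lt_finRange n)

theorem mem_foldr_seg {ms : List (Fin n)} {y : Fin n} :
    y ∈ ms.foldr (fun m acc => seg π m ++ acc) [] ↔ ∃ m ∈ ms, π.SameCycle m y := by
  induction ms with
  | nil => simp
  | cons m tl ih => simp [List.mem_append, ih, mem_seg]

theorem nodup_foldr_seg {ms : List (Fin n)} (hmin : ∀ m ∈ ms, isCycMin π m)
    (hnd : ms.Pairwise (· ≠ ·)) :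
    (ms.foldr (fun m acc => seg π m ++ acc) []).Nodup := by
  induction ms with
  | nil => simp
  | cons m tl ih =>
    simp only [List.foldr_cons, List.nodup_append]
    refine ⟨nodup_seg π m, ih (fun a ha => hmin a (List.mem_cons_of_mem _ ha))
      (List.Pairwise.sublist (List.sublist_cons_self _ _) hnd), ?_⟩
    intro y hy z hy' hyz
    subst hyz
    rw [mem_seg] at hy
    rw [mem_foldr_seg] at hy'
    obtain ⟨m', hm', hsm'⟩ := hy'
    have : m = m' := cycMin_unique π (hmin m (List.mem_cons_self))
      (hmin m' (List.mem_cons_of_mem _ hm')) (hy.trans hsm'.symm)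
    exact (List.rel_of_pairwise_cons hnd hm') this

theorem mem_psiList (y : Fin n) : y ∈ psiList π := by
  rw [psiList, mem_foldr_seg]
  obtain ⟨m, hm, hsm⟩ := exists_cycMin π y
  exact ⟨m, (mem_cycMins π).2 hm, hsm⟩

theorem nodup_psiList : (psiList π).Nodup := by
  refine nodup_foldr_seg π (fun m hm => (mem_cycMins π).1 hm) ?_
  exact (cycMins_sorted π).imp (fun h => ne_of_gt h)

theorem length_psiList : (psiList π).length = n := by
  have h1 : (psiList π).toFinset = Finset.univ :=
    Finset.eq_univ_iff_forall.2 fun y => List.mem_toFinset.2 (mem_psiList π y)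
  have h2 := List.toFinset_card_of_nodup (nodup_psiList π)
  rw [h1] at h2
  simpa using h2.symm

theorem seg_ne_nil (x : Fin n) : seg π x ≠ [] := by
  have := cycLen_pos π x
  intro h
  rw [← length_seg π x, h] at this
  simp at this

theorem head_seg (x : Fin n) (h : seg π x ≠ []) : (seg π x).head h = x := by
  rw [List.head_eq_getElem]
  have h0 : 0 < (seg π x).length := List.length_pos_iff.mpr h
  have := seg_get π x 0 h0
  simpa using this

theorem getElem_middle {A B : List (Fin n)} {m : Fin n} {j : ℕ} (hj : j < cycLen π m)
    (h : A.length + j < (A ++ (seg π m ++ B)).length) :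
    (A ++ (seg π m ++ B))[A.length + j] = (π ^ j) m := by
  have hj' : j < (seg π m).length := by rwa [length_seg]
  rw [List.getElem_append_right (Nat.le_add_right _ _)]
  simp only [Nat.add_sub_cancel_left]
  rw [List.getElem_append_left hj']
  have := seg_get π m j hj'
  simpa using this

/-- Master location lemma: every position in the concatenation of segments lies in
a well-described block. -/
theorem loc {ms : List (Fin n)} (hsort : ms.Pairwise (fun a b => b < a))
    (hmin : ∀ m ∈ ms, isCycMin π m) {i : ℕ}
    (hi : i < (ms.foldr (fun m acc => seg π m ++ acc) []).length) :
    ∃ (m : Fin n) (A B : List (Fin n)),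
      isCycMin π m ∧
      ms.foldr (fun m acc => seg π m ++ acc) [] = A ++ (seg π m ++ B) ∧
      A.length ≤ i ∧ i < A.length + cycLen π m ∧
      (∀ y ∈ A, m < y) ∧
      (∀ h : B ≠ [], ∃ m', isCycMin π m' ∧ m' < m ∧ B.head h = m') := by
  induction ms generalizing i with
  | nil => simp at hi
  | cons m₁ tl ih =>
    simp only [List.foldr_cons] at hi ⊢
    by_cases hcase : i < cycLen π m₁
    · refine ⟨m₁, [], tl.foldr (fun m acc => seg π m ++ acc) [],
        hmin m₁ (List.mem_cons_self), by simp, by simp, by simpa using hcase,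
        by simp, ?_⟩
      intro hB
      cases tl with
      | nil => simp at hB
      | cons m₂ tl' =>
        refine ⟨m₂, hmin m₂ (by simp), List.rel_of_pairwise_cons hsort (by simp), ?_⟩
        simp only [List.foldr_cons]
        rw [List.head_append_left (seg_ne_nil π m₂)]
        exact head_seg π m₂ _
    · push_neg at hcase
      have hi' : i - cycLen π m₁ < (tl.foldr (fun m acc => seg π m ++ acc) []).length := by
        rw [List.length_append, length_seg] at hi
        omega
      obtain ⟨m, A', B, hm, heq, hA1, hA2, hAgt, hB⟩ :=
        ih (List.Pairwise.sublist (List.sublist_cons_self _ _) hsort)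
          (fun a ha => hmin a (List.mem_cons_of_mem _ ha)) hi'
      have hmem : m ∈ tl := by
        have : m ∈ tl.foldr (fun m acc => seg π m ++ acc) [] := by
          rw [heq]
          simp only [List.mem_append, mem_seg]
          exact Or.inr (Or.inl (Equiv.Perm.SameCycle.refl _ _))
        rw [mem_foldr_seg] at this
        obtain ⟨m', hm', hsm'⟩ := this
        rwa [cycMin_unique π hm (hmin m' (List.mem_cons_of_mem _ hm')) hsm'.symm]
      refine ⟨m, seg π m₁ ++ A', B, hm, ?_, ?_, ?_, ?_, hB⟩
      · rw [List.append_assoc, heq]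
      · rw [List.length_append, length_seg]; omega
      · rw [List.length_append, length_seg]; omega
      · intro y hy
        rcases List.mem_append.1 hy with hy | hy
        · have h1 : m₁ ≤ y := hmin m₁ (List.mem_cons_self) y ((mem_seg π).1 hy)
          exact lt_of_lt_of_le (List.rel_of_pairwise_cons hsort hmem) h1
        · exact hAgt y hy

theorem sameCycle_pow (x : Fin n) (j : ℕ) : π.SameCycle x ((π ^ j) x) :=
  ⟨(j : ℤ), by simp [zpow_natCast]⟩

/-- Position `j` of list `l` is a (strict) left-to-right minimum. -/
def isLR (l : List (Fin n)) (j : ℕ) : Prop :=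
  ∀ p, ∀ hp : p < j, ∀ hj : j < l.length, l[j]'hj < l[p]'(lt_trans hp hj)

section claims

variable {π}

theorem getElem_congr_list {α : Type*} {l l' : List α} (h : l = l') {i j : ℕ} (hij : i = j)
    {hi : i < l.length} : l[i]'hi = l'[j]'(by subst h hij; exact hi) := by
  subst h; subst hij; rfl

/-- The value of `psiList` inside a block. -/
theorem block_get {A B : List (Fin n)} {m : Fin n}
    (heq : psiList π = A ++ (seg π m ++ B)) {j : ℕ}
    (hj1 : A.length ≤ j) (hj2 : j < A.length + cycLen π m) (hj : j < (psiList π).length) :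
    (psiList π)[j]'hj = (π ^ (j - A.length)) m := by
  have hjlt : j - A.length < cycLen π m := by omega
  have hlen : (psiList π).length = A.length + (cycLen π m + B.length) := by
    rw [heq]; simp [length_seg]
  rw [getElem_congr_list heq (show j = A.length + (j - A.length) by omega)]
  exact getElem_middle π hjlt _

/-- Dichotomy at the end of a block. -/
theorem block_end {A B : List (Fin n)} {m : Fin n} {i : ℕ}
    (hm : isCycMin π m)
    (heq : psiList π = A ++ (seg π m ++ B))
    (hA1 : A.length ≤ i) (hA2 : i < A.length + cycLen π m)
    (hAgt : ∀ y ∈ A, m < y)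
    (hB : ∀ h : B ≠ [], ∃ m', isCycMin π m' ∧ m' < m ∧ B.head h = m') :
    ((i + 1 = (psiList π).length ∨ isLR (psiList π) (i + 1)) ↔ i + 1 = A.length + cycLen π m)
    := by
  have hlen : (psiList π).length = A.length + (cycLen π m + B.length) := by
    rw [heq]; simp [length_seg]
  have hia : i + 1 ≤ A.length + cycLen π m := by omega
  constructor
  · intro h
    by_contra hne
    have hlt : i + 1 < A.length + cycLen π m := by omega
    have h1n : i + 1 < (psiList π).length := by omega
    rcases h with h | h
    · omega
    · have hA : A.length < i + 1 := by omega
      have hAlen : A.length < (psiList π).length := by omega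
      have hval := block_get heq (show A.length ≤ i+1 by omega) hlt h1n
      have hm0 := block_get heq le_rfl (show A.length < A.length + cycLen π m by
        have := cycLen_pos π m; omega) hAlen
      have hm0' : (psiList π)[A.length]'hAlen = m := by simpa using hm0
      have hLR := h A.length hA h1n
      rw [hval, hm0'] at hLR
      exact absurd hLR (not_lt.2 (hm _ (sameCycle_pow π m _)))
  · intro h
    by_cases hend : i + 1 = (psiList π).length
    · exact Or.inl hend
    · right
      have h1n : i + 1 < (psiList π).length := by omega
      have hBne : B ≠ [] := by
        intro hBnil
        rw [hBnil] at hlen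
        simp at hlen
        omega
      obtain ⟨m', hm', hm'lt, hm'head⟩ := hB hBne
      have hB0 : 0 < B.length := by rw [hlen] at h1n; omega
      have hval : (psiList π)[i+1]'h1n = m' := by
        rw [getElem_congr_list heq (rfl : i+1 = i+1)]
        rw [List.getElem_append_right (by omega),
          List.getElem_append_right (by rw [length_seg]; omega)]
        rw [← hm'head, List.head_eq_getElem]
        exact getElem_congr_list rfl (by rw [length_seg]; omega)
      intro p hp hj
      rw [hval]
      by_cases hpA : p < A.length
      · have hmem : (psiList π)[p]'(lt_trans hp hj) ∈ A := by
          rw [getElem_congr_list heq (rfl : p = p), List.getElem_append_left hpA]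
          exact List.getElem_mem _
        exact lt_trans hm'lt (hAgt _ hmem)
      · have hpval := block_get heq (by omega) (by omega) (lt_trans hp hj)
        rw [hpval]
        exact lt_of_lt_of_le hm'lt (hm _ (sameCycle_pow π m _))

/-- Location lemma specialized to `psiList`. -/
theorem loc' {i : ℕ} (hi : i < (psiList π).length) :
    ∃ (m : Fin n) (A B : List (Fin n)),
      isCycMin π m ∧
      psiList π = A ++ (seg π m ++ B) ∧
      A.length ≤ i ∧ i < A.length + cycLen π m ∧
      (∀ y ∈ A, m < y) ∧
      (∀ h : B ≠ [], ∃ m', isCycMin π m' ∧ m' < m ∧ B.head h = m') :=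
  loc π (cycMins_sorted π) (fun m hm => (mem_cycMins π).1 hm) hi

/-- Claim A: inside a block, `π` maps each letter to the next letter. -/
theorem claimA {i : ℕ} (hi : i < (psiList π).length) (hi1 : i + 1 < (psiList π).length)
    (hnotLR : ¬ isLR (psiList π) (i+1)) :
    π ((psiList π)[i]'hi) = (psiList π)[i+1]'hi1 := by
  obtain ⟨m, A, B, hm, heq, hA1, hA2, hAgt, hB⟩ := loc' hi
  have hdich := block_end hm heq hA1 hA2 hAgt hB
  have hne : i + 1 ≠ A.length + cycLen π m := by
    intro hcontr
    rcases hdich.2 hcontr with h | h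
    · omega
    · exact hnotLR h
  have hlt : i + 1 < A.length + cycLen π m := by omega
  rw [block_get heq hA1 (by omega) hi, block_get heq (by omega) hlt hi1]
  rw [show i + 1 - A.length = (i - A.length) + 1 by omega, pow_succ']
  rfl

/-- Claim B: at the end of a block, `π` maps the letter to the prefix minimum. -/
theorem claimB {i : ℕ} (hi : i < (psiList π).length)
    (hend : i + 1 = (psiList π).length ∨ isLR (psiList π) (i+1)) (x : Fin n)
    (hx : ∃ p, ∃ hp : p ≤ i, (psiList π)[p]'(lt_of_le_of_lt hp hi) = x)
    (hxle : ∀ p, ∀ hp : p ≤ i, x ≤ (psiList π)[p]'(lt_of_le_of_lt hp hi)) :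
    π ((psiList π)[i]'hi) = x := by
  obtain ⟨m, A, B, hm, heq, hA1, hA2, hAgt, hB⟩ := loc' hi
  have hdich := block_end hm heq hA1 hA2 hAgt hB
  have hblockend : i + 1 = A.length + cycLen π m := hdich.1 hend
  have hAi : A.length ≤ i := hA1
  have hxm : x = m := by
    have hmval : (psiList π)[A.length]'(lt_of_le_of_lt hAi hi) = m := by
      have := block_get heq le_rfl (by have := cycLen_pos π m; omega) (lt_of_le_of_lt hAi hi)
      simpa using this
    have h1 : x ≤ m := by
      have := hxle A.length hAi
      rwa [hmval] at this
    obtain ⟨p, hp, hpx⟩ := hx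
    by_cases hpA : p < A.length
    · exfalso
      have hmem : (psiList π)[p]'(lt_of_le_of_lt hp hi) ∈ A := by
        rw [getElem_congr_list heq (rfl : p = p), List.getElem_append_left hpA]
        exact List.getElem_mem _
      have := hAgt _ hmem
      rw [hpx] at this
      exact absurd h1 (not_le.2 this)
    · have := block_get heq (by omega) (by omega) (lt_of_le_of_lt hp hi)
      rw [hpx] at this
      have h2 : m ≤ x := this ▸ hm _ (sameCycle_pow π m _)
      exact le_antisymm h1 h2
  rw [block_get heq hA1 hA2 hi, hxm]
  have : i - A.length = cycLen π m - 1 := by omega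
  rw [this, ← Equiv.Perm.mul_apply, ← pow_succ']
  rw [show cycLen π m - 1 + 1 = cycLen π m by have := cycLen_pos π m; omega]
  exact pow_cycLen_apply π m

/-- The prefix minimum is attained. -/
theorem prefixMin_exists {i : ℕ} (hi : i < (psiList π).length) :
    ∃ x : Fin n, (∃ p, ∃ hp : p ≤ i, (psiList π)[p]'(lt_of_le_of_lt hp hi) = x) ∧
      (∀ p, ∀ hp : p ≤ i, x ≤ (psiList π)[p]'(lt_of_le_of_lt hp hi)) := by
  obtain ⟨m, A, B, hm, heq, hA1, hA2, hAgt, hB⟩ := loc' hi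
  refine ⟨m, ⟨A.length, hA1, ?_⟩, ?_⟩
  · have := block_get heq le_rfl (by have := cycLen_pos π m; omega)
      (lt_of_le_of_lt hA1 hi)
    simpa using this
  · intro p hp
    by_cases hpA : p < A.length
    · have hmem : (psiList π)[p]'(lt_of_le_of_lt hp hi) ∈ A := by
        rw [getElem_congr_list heq (rfl : p = p), List.getElem_append_left hpA]
        exact List.getElem_mem _
      exact le_of_lt (hAgt _ hmem)
    · have := block_get heq (by omega) (by omega) (lt_of_le_of_lt hp hi)
      rw [this]
      exact hm _ (sameCycle_pow π m _)

theorem claimA' {l : List (Fin n)} (hl : psiList π = l) {i : ℕ}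
    (hi : i < l.length) (hi1 : i + 1 < l.length) (hnotLR : ¬ isLR l (i+1)) :
    π (l[i]'hi) = l[i+1]'hi1 := by
  subst hl; exact claimA hi hi1 hnotLR

theorem claimB' {l : List (Fin n)} (hl : psiList π = l) {i : ℕ} (hi : i < l.length)
    (hend : i + 1 = l.length ∨ isLR l (i+1)) (x : Fin n)
    (hx : ∃ p, ∃ hp : p ≤ i, l[p]'(lt_of_le_of_lt hp hi) = x)
    (hxle : ∀ p, ∀ hp : p ≤ i, x ≤ l[p]'(lt_of_le_of_lt hp hi)) :
    π (l[i]'hi) = x := by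
  subst hl; exact claimB hi hend x hx hxle

end claims

theorem psiList_injective {π σ : Equiv.Perm (Fin n)} (h : psiList π = psiList σ) :
    π = σ := by
  apply Equiv.ext
  intro x
  obtain ⟨i, hi, hx⟩ := List.mem_iff_getElem.1 (mem_psiList π x)
  rw [← hx]
  by_cases hcase : i + 1 = (psiList π).length ∨ isLR (psiList π) (i+1)
  · obtain ⟨x₀, hx₀, hx₀le⟩ := prefixMin_exists hi
    rw [claimB' rfl hi hcase x₀ hx₀ hx₀le, claimB' h.symm hi hcase x₀ hx₀ hx₀le]
  · push_neg at hcase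
    have hi1 : i + 1 < (psiList π).length := by omega
    rw [claimA' rfl hi hi1 hcase.2, claimA' h.symm hi hi1 hcase.2]

section equiv

variable {n : ℕ}

theorem psiFun_eq (π : Equiv.Perm (Fin n)) (i : Fin n) :
    psiFun π i = (psiList π)[(i : ℕ)]'(by rw [length_psiList]; exact i.isLt) := by
  rw [psiFun, List.getD_eq_getElem]

theorem psiFun_injective (π : Equiv.Perm (Fin n)) : Function.Injective (psiFun π) := by
  intro i j h
  rw [psiFun_eq, psiFun_eq] at h
  have := List.nodup_iff_injective_get.1 (nodup_psiList π)
  have h2 := @this ⟨(i : ℕ), by rw [length_psiList]; exact i.isLt⟩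
    ⟨(j : ℕ), by rw [length_psiList]; exact j.isLt⟩ (by simpa [List.get_eq_getElem] using h)
  exact Fin.ext (by simpa using congrArg Fin.val h2)

theorem psiFun_bijective (π : Equiv.Perm (Fin n)) : Function.Bijective (psiFun π) :=
  Finite.injective_iff_bijective.1 (psiFun_injective π)

/-- `Ψ(π)` as an equivalence. -/
def psiEquiv (π : Equiv.Perm (Fin n)) : Equiv.Perm (Fin n) :=
  Equiv.ofBijective (psiFun π) (psiFun_bijective π)

@[simp] theorem psiEquiv_apply (π : Equiv.Perm (Fin n)) (i : Fin n) :
    psiEquiv π i = psiFun π i := rfl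

theorem psiEquiv_injective : Function.Injective (psiEquiv (n := n)) := by
  intro π σ h
  apply psiList_injective
  have hfun : ∀ i : Fin n, psiFun π i = psiFun σ i := fun i => Equiv.ext_iff.1 h i
  apply List.ext_getElem (by rw [length_psiList, length_psiList])
  intro i h1 h2
  have hi : i < n := by rwa [length_psiList] at h1
  have := hfun ⟨i, hi⟩
  rwa [psiFun_eq, psiFun_eq] at this

theorem psiEquiv_surjective : Function.Surjective (psiEquiv (n := n)) :=
  (Finite.injective_iff_surjective.1 psiEquiv_injective)

/-- Existence and uniqueness of `Δ(π)`. -/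
theorem delta_exists_unique (π : Equiv.Perm (Fin n)) :
    ∃! δ : Equiv.Perm (Fin n),
      (∀ i : Fin n, psiFun δ (psiFun π i) = i) ∧
      (∀ i : Fin n, psiFun π (psiFun δ i) = i) := by
  obtain ⟨δ, hδ⟩ := psiEquiv_surjective (psiEquiv π)⁻¹
  refine ⟨δ, ⟨?_, ?_⟩, ?_⟩
  · intro i
    rw [show psiFun δ (psiFun π i) = psiEquiv δ (psiEquiv π i) from rfl, hδ]
    exact (psiEquiv π).symm_apply_apply _
  · intro i
    rw [show psiFun π (psiFun δ i) = psiEquiv π (psiEquiv δ i) from rfl, hδ]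
    exact (psiEquiv π).apply_symm_apply _
  · intro δ' ⟨h1, h2⟩
    apply psiEquiv_injective
    rw [hδ, Equiv.Perm.inv_def]
    apply Equiv.ext
    intro x
    apply (psiEquiv π).injective
    rw [Equiv.apply_symm_apply]
    exact h2 x

/-- Left-to-right minima of a word. -/
def LRF (w : Fin n → Fin n) (i : Fin n) : Prop := ∀ j : Fin n, j < i → w i < w j

theorem isLR_iff_cycMin (π : Equiv.Perm (Fin n)) {i : ℕ} (hi : i < (psiList π).length) :
    isLR (psiList π) i ↔ isCycMin π ((psiList π)[i]'hi) := by
  obtain ⟨m, A, B, hm, heq, hA1, hA2, hAgt, hB⟩ := loc' hi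
  have hval := block_get heq hA1 hA2 hi
  have hAlt : A.length < (psiList π).length := lt_of_le_of_lt hA1 hi
  have hm0 : (psiList π)[A.length]'hAlt = m := by
    have := block_get heq le_rfl (by have := cycLen_pos π m; omega) hAlt
    simpa using this
  constructor
  · intro h
    have hia : i = A.length := by
      by_contra hne
      have hlt : A.length < i := by omega
      have := h A.length hlt hi
      rw [hval, hm0] at this
      exact absurd this (not_lt.2 (hm _ (sameCycle_pow π m _)))
    rw [hval, hia]
    simpa using hm
  · intro h
    have hmeq : m = (psiList π)[i]'hi := by
      apply cycMin_unique π hm h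
      rw [hval]
      exact sameCycle_pow π m _
    have hia : i = A.length := by
      have : (π ^ (i - A.length)) m = (π ^ 0) m := by
        rw [pow_zero]
        rw [hval] at hmeq
        simpa using hmeq.symm
      have := pow_apply_inj π (x := m) (by omega) (cycLen_pos π m) this
      omega
    intro p hp hj
    have hpA : p < A.length := by omega
    have hmem : (psiList π)[p]'(lt_trans hp hj) ∈ A := by
      rw [getElem_congr_list heq (rfl : p = p), List.getElem_append_left hpA]
      exact List.getElem_mem _
    rw [hval, show i - A.length = 0 by omega, pow_zero]
    exact hAgt _ hmem

theorem cyc_eq_card_isLR (π : Equiv.Perm (Fin n)) :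
    cyc π = Nat.card {i : Fin n // isLR (psiList π) (i : ℕ)} := by
  rw [cyc]
  apply Nat.card_congr
  apply Equiv.symm
  refine Equiv.ofBijective (fun i => ⟨(psiList π)[(i : ℕ)]'
    (by rw [length_psiList]; exact i.1.isLt),
    (isLR_iff_cycMin π _).1 i.2⟩) ⟨?_, ?_⟩
  · rintro ⟨i, hi⟩ ⟨j, hj⟩ h
    simp only [Subtype.mk.injEq] at h ⊢
    have := List.nodup_iff_injective_get.1 (nodup_psiList π)
    have h2 := @this ⟨(i : ℕ), by rw [length_psiList]; exact i.isLt⟩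
      ⟨(j : ℕ), by rw [length_psiList]; exact j.isLt⟩ (by simpa [List.get_eq_getElem] using h)
    exact Fin.ext (by simpa using congrArg Fin.val h2)
  · rintro ⟨x, hx⟩
    obtain ⟨i, hi, hix⟩ := List.mem_iff_getElem.1 (mem_psiList π x)
    have hin : i < n := by rwa [length_psiList] at hi
    refine ⟨⟨⟨i, hin⟩, ?_⟩, ?_⟩
    · rw [isLR_iff_cycMin π (by simpa using hi)]
      simpa [hix] using hx
    · simp only [Subtype.mk.injEq]
      simpa using hix

theorem LRF_iff_isLR (π : Equiv.Perm (Fin n)) (i : Fin n) :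
    LRF (psiFun π) i ↔ isLR (psiList π) (i : ℕ) := by
  constructor
  · intro h p hp hj
    have hpn : p < n := lt_trans hp i.isLt
    have := h ⟨p, hpn⟩ hp
    rwa [psiFun_eq, psiFun_eq] at this
  · intro h j hj
    have := h (j : ℕ) hj (by rw [length_psiList]; exact i.isLt)
    rw [psiFun_eq, psiFun_eq]
    exact this

theorem cyc_eq_card_LRF (π : Equiv.Perm (Fin n)) :
    cyc π = Nat.card {i : Fin n // LRF (psiFun π) i} := by
  rw [cyc_eq_card_isLR]
  exact (Nat.card_congr (Equiv.subtypeEquivRight fun i => (LRF_iff_isLR π i))).symm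

theorem LRF_inv (w : Equiv.Perm (Fin n)) (i : Fin n) :
    LRF (⇑w) i ↔ LRF (⇑w.symm) (w i) := by
  constructor
  · intro h q hq
    rw [Equiv.symm_apply_apply]
    rcases lt_trichotomy i (w.symm q) with hlt | heq | hgt
    · exact hlt
    · exfalso
      rw [heq, Equiv.apply_symm_apply] at hq
      exact lt_irrefl _ hq
    · exfalso
      have := h (w.symm q) hgt
      rw [Equiv.apply_symm_apply] at this
      exact absurd hq (not_lt.2 (le_of_lt this))
  · intro h j hj
    rcases lt_trichotomy (w i) (w j) with hlt | heq | hgt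
    · exact hlt
    · exact absurd (w.injective heq) (ne_of_gt hj)
    · exfalso
      have := h (w j) hgt
      rw [Equiv.symm_apply_apply, Equiv.symm_apply_apply] at this
      exact absurd hj (not_lt.2 (le_of_lt this))

theorem cyc_delta {π δ : Equiv.Perm (Fin n)}
    (h2 : ∀ i : Fin n, psiFun π (psiFun δ i) = i) : cyc δ = cyc π := by
  have hδ : psiFun δ = ⇑(psiEquiv π).symm := by
    funext x
    apply (psiEquiv π).injective
    rw [Equiv.apply_symm_apply]
    exact h2 x
  rw [cyc_eq_card_LRF δ, cyc_eq_card_LRF π, hδ]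
  apply (Nat.card_congr _).symm
  exact Equiv.subtypeEquiv (psiEquiv π) (fun i => LRF_inv (psiEquiv π) i)

theorem mapcast (l : List (Fin n)) : (l.map fun x => (x : ℕ)) = List.map Fin.val l := by
  induction l with
  | nil => rfl
  | cons a tl ih => simpa using ih

theorem wordN_eq (π : Equiv.Perm (Fin n)) {i : ℕ} (hi : i < n) :
    wordN π i = ((psiFun π ⟨i, hi⟩ : Fin n) : ℕ) := by
  rw [wordN, mapcast, List.getD_eq_getElem _ _
    (show i < (List.map Fin.val (psiList π)).length by
      rw [List.length_map, length_psiList]; exact hi),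
    List.getElem_map, psiFun_eq]

theorem wordN_lt (π : Equiv.Perm (Fin n)) {i : ℕ} (hi : i < n) : wordN π i < n := by
  rw [wordN_eq π hi]
  exact (psiFun π ⟨i, hi⟩).isLt

set_option maxHeartbeats 1000000 in
theorem occ_delta {π δ : Equiv.Perm (Fin n)}
    (h1 : ∀ i : Fin n, psiFun δ (psiFun π i) = i)
    (h2 : ∀ i : Fin n, psiFun π (psiFun δ i) = i) :
    occ3 n (wordN δ) (fun a b c => c < a ∧ a < b)
      = occ3 n (wordN π) (fun a b c => b < c ∧ c < a) := by
  have c1 : ∀ i : ℕ, ∀ hi : i < n, wordN δ (wordN π i) = i := by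
    intro i hi
    rw [wordN_eq π hi, wordN_eq δ (psiFun π ⟨i, hi⟩).isLt]
    rw [show (⟨((psiFun π ⟨i, hi⟩ : Fin n) : ℕ), (psiFun π ⟨i, hi⟩).isLt⟩ : Fin n)
      = psiFun π ⟨i, hi⟩ from Fin.eta _ _, h1]
  have c2 : ∀ i : ℕ, ∀ hi : i < n, wordN π (wordN δ i) = i := by
    intro i hi
    rw [wordN_eq δ hi, wordN_eq π (psiFun δ ⟨i, hi⟩).isLt]
    rw [show (⟨((psiFun δ ⟨i, hi⟩ : Fin n) : ℕ), (psiFun δ ⟨i, hi⟩).isLt⟩ : Fin n)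
      = psiFun δ ⟨i, hi⟩ from Fin.eta _ _, h2]
  rw [occ3, occ3]
  apply Nat.card_congr
  refine ⟨fun t => ⟨(wordN δ t.1.2.2, wordN δ t.1.1, wordN δ t.1.2.1), ?_⟩,
          fun t => ⟨(wordN π t.1.2.1, wordN π t.1.2.2, wordN π t.1.1), ?_⟩, ?_, ?_⟩
  · obtain ⟨⟨p, q, r⟩, hpq, hqr, hrn, hP1, hP2⟩ := t
    have hpq' : p < q := hpq
    have hqr' : q < r := hqr
    have hrn' : r < n := hrn
    have hP1' : wordN δ r < wordN δ p := hP1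
    have hP2' : wordN δ p < wordN δ q := hP2
    have hpn : p < n := by omega
    have hqn : q < n := by omega
    exact ⟨hP1', hP2', wordN_lt δ hqn,
      lt_of_eq_of_lt (c2 p hpn) (lt_of_lt_of_eq hpq' (c2 q hqn).symm),
      lt_of_eq_of_lt (c2 q hqn) (lt_of_lt_of_eq hqr' (c2 r hrn').symm)⟩
  · obtain ⟨⟨i, j, k⟩, hij, hjk, hkn, hP1, hP2⟩ := t
    have hij' : i < j := hij
    have hjk' : j < k := hjk
    have hkn' : k < n := hkn
    have hP1' : wordN π j < wordN π k := hP1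
    have hP2' : wordN π k < wordN π i := hP2
    have hin : i < n := by omega
    have hjn : j < n := by omega
    exact ⟨hP1', hP2', wordN_lt π hin,
      lt_of_eq_of_lt (c1 i hin) (lt_of_lt_of_eq hij' (c1 j hjn).symm),
      lt_of_eq_of_lt (c1 j hjn) (lt_of_lt_of_eq hjk' (c1 k hkn').symm)⟩
  · rintro ⟨⟨p, q, r⟩, hpq, hqr, hrn, hP1, hP2⟩
    have hpq' : p < q := hpq
    have hqr' : q < r := hqr
    have hrn' : r < n := hrn
    have hpn : p < n := by omega
    have hqn : q < n := by omega
    exact Subtype.ext (Prod.ext (c2 p hpn) (Prod.ext (c2 q hqn) (c2 r hrn')))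
  · rintro ⟨⟨i, j, k⟩, hij, hjk, hkn, hP1, hP2⟩
    have hij' : i < j := hij
    have hjk' : j < k := hjk
    have hkn' : k < n := hkn
    have hin : i < n := by omega
    have hjn : j < n := by omega
    exact Subtype.ext (Prod.ext (c1 i hin) (Prod.ext (c1 j hjn) (c1 k hkn')))

end equiv

end DeltaAux

/-- `Δ(π) = Ψ⁻¹((Ψ(π))⁻¹)` is a well-defined involution on permutations of `[n]`
(here `δ = Δ(π)` is characterized by `Ψ(δ)` being the two-sided inverse function of
`Ψ(π)`); it preserves the number of cycles, and the number of cyclic occurrences of the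
classical pattern 3-1-2 in `π` equals the number of cyclic occurrences of the classical
pattern 2-3-1 in `Δ(π)`. -/
theorem delta_involution (n : ℕ) :
    (∀ π : Equiv.Perm (Fin n), ∃! δ : Equiv.Perm (Fin n),
        (∀ i : Fin n, psiFun δ (psiFun π i) = i) ∧
        (∀ i : Fin n, psiFun π (psiFun δ i) = i)) ∧
    (∀ π δ : Equiv.Perm (Fin n),
        ((∀ i : Fin n, psiFun δ (psiFun π i) = i) ∧
         (∀ i : Fin n, psiFun π (psiFun δ i) = i)) →
        ((∀ i : Fin n, psiFun π (psiFun δ i) = i) ∧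
         (∀ i : Fin n, psiFun δ (psiFun π i) = i)) ∧
        cyc δ = cyc π ∧
        occ3 n (wordN δ) (fun a b c => c < a ∧ a < b)
          = occ3 n (wordN π) (fun a b c => b < c ∧ c < a)) := by
  constructor
  · exact fun π => DeltaAux.delta_exists_unique π
  · rintro π δ ⟨h1, h2⟩
    exact ⟨⟨h2, h1⟩, DeltaAux.cyc_delta h2, DeltaAux.occ_delta h1 h2⟩
end
end

section
/- For all n ≥ 1 and 1 ≤ k ≤ n, the number of permutations of [n] with k cycles and no occurrence of the partially ordered pattern 1–2–1′ equals the binomial coefficient C(n−1, k−1). -/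
open scoped Classical

noncomputable section

namespace AuxAvoid

open Equiv List Function

variable {n : ℕ}

/-! ### Generic facts about cycles, `cycLen`, `seg`, `cycMins`, `psiList` -/

lemma mem_periodicPts (π : Equiv.Perm (Fin n)) (x : Fin n) :
    x ∈ Function.periodicPts ⇑π := by
  refine ⟨orderOf π, orderOf_pos π, ?_⟩
  simp [Function.IsPeriodicPt, Function.IsFixedPt, Equiv.Perm.iterate_eq_pow,
    pow_orderOf_eq_one]

lemma minPos (π : Equiv.Perm (Fin n)) (x : Fin n) : 0 < Function.minimalPeriod ⇑π x :=
  Function.minimalPeriod_pos_of_mem_periodicPts (mem_periodicPts π x)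

lemma sameCycle_iff_lt (π : Equiv.Perm (Fin n)) (x y : Fin n) :
    π.SameCycle x y ↔ ∃ j < Function.minimalPeriod ⇑π x, (π ^ j) x = y := by
  constructor
  · intro h
    obtain ⟨i, _, rfl⟩ := h.exists_pow_eq'
    refine ⟨i % Function.minimalPeriod ⇑π x, Nat.mod_lt _ (minPos π x), ?_⟩
    exact Function.iterate_mod_minimalPeriod_eq (f := ⇑π) (x := x) (n := i)
  · rintro ⟨j, _, rfl⟩
    exact ⟨j, by rw [zpow_natCast]⟩

lemma cycLen_eq (π : Equiv.Perm (Fin n)) (x : Fin n) :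
    cycLen π x = Function.minimalPeriod ⇑π x := by
  have e : Fin (Function.minimalPeriod ⇑π x) ≃ {y : Fin n // π.SameCycle x y} := by
    apply Equiv.ofBijective (fun j => ⟨(π ^ (j : ℕ)) x, j, by rw [zpow_natCast]⟩)
    constructor
    · intro a b hab
      have h := congrArg Subtype.val hab
      simp only at h
      have := Function.iterate_injOn_Iio_minimalPeriod (f := ⇑π) (x := x)
        (Set.mem_Iio.mpr a.2) (Set.mem_Iio.mpr b.2)
        h
      exact Fin.ext this
    · rintro ⟨y, hy⟩
      obtain ⟨j, hj, hji⟩ := (sameCycle_iff_lt π x y).1 hy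
      exact ⟨⟨j, hj⟩, Subtype.ext hji⟩
  rw [cycLen, ← Nat.card_congr e, Nat.card_eq_fintype_card, Fintype.card_fin]

lemma cycLen_pos (π : Equiv.Perm (Fin n)) (x : Fin n) : 0 < cycLen π x := by
  rw [cycLen_eq]; exact minPos π x

lemma length_seg (π : Equiv.Perm (Fin n)) (x : Fin n) :
    (seg π x).length = cycLen π x := by simp [seg]

lemma seg_getElem (π : Equiv.Perm (Fin n)) (x : Fin n) {j : ℕ} (h : j < (seg π x).length) :
    (seg π x)[j] = (π ^ j) x := by
  simp [seg]

lemma mem_seg (π : Equiv.Perm (Fin n)) (x y : Fin n) :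
    y ∈ seg π x ↔ π.SameCycle x y := by
  rw [sameCycle_iff_lt]
  simp [seg, List.mem_map, List.mem_range, cycLen_eq]

lemma nodup_seg (π : Equiv.Perm (Fin n)) (x : Fin n) : (seg π x).Nodup := by
  rw [seg]
  refine List.Nodup.map_on ?_ List.nodup_range
  intro a ha b hb hab
  rw [List.mem_range, cycLen_eq] at ha hb
  exact Function.iterate_injOn_Iio_minimalPeriod (f := ⇑π) (x := x)
    (Set.mem_Iio.mpr ha) (Set.mem_Iio.mpr hb)
    hab

lemma sameCycle_fixed {π : Equiv.Perm (Fin n)} {x : Fin n} (h : π x = x) (y : Fin n) :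
    π.SameCycle x y ↔ y = x := by
  constructor
  · rintro ⟨i, rfl⟩
    exact Function.IsFixedPt.perm_zpow h i
  · rintro rfl
    exact Equiv.Perm.SameCycle.refl _ _

lemma cycLen_fixed {π : Equiv.Perm (Fin n)} {x : Fin n} (h : π x = x) :
    cycLen π x = 1 := by
  haveI : Unique {y : Fin n // π.SameCycle x y} :=
    ⟨⟨⟨x, Equiv.Perm.SameCycle.refl _ _⟩⟩, by
      rintro ⟨y, hy⟩
      exact Subtype.ext ((sameCycle_fixed h y).1 hy)⟩
  exact Nat.card_unique

lemma fixed_of_cycLen_one {π : Equiv.Perm (Fin n)} {x : Fin n} (h : cycLen π x = 1) :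
    π x = x := by
  have h2 : π.SameCycle x (π x) := ⟨1, by simp⟩
  rw [sameCycle_iff_lt, ← cycLen_eq, h] at h2
  obtain ⟨j, hj, hje⟩ := h2
  interval_cases j
  simpa using hje.symm

lemma mem_cycMins {π : Equiv.Perm (Fin n)} {m : Fin n} :
    m ∈ cycMins π ↔ isCycMin π m := by
  simp [cycMins, List.mem_filter, List.mem_reverse, List.mem_finRange]

lemma cycMins_pairwise (π : Equiv.Perm (Fin n)) :
    (cycMins π).Pairwise (fun a b => b < a) := by
  rw [cycMins, List.pairwise_reverse]
  exact List.Pairwise.filter _ (List.pairwise_lt_finRange n)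

lemma fin_zero_le [NeZero n] (y : Fin n) : (0 : Fin n) ≤ y := by
  simp [Fin.le_def]

lemma isCycMin_zero [NeZero n] (π : Equiv.Perm (Fin n)) : isCycMin π 0 :=
  fun y _ => fin_zero_le y

lemma cycMins_eq_concat [NeZero n] (π : Equiv.Perm (Fin n)) :
    ∃ C, cycMins π = C ++ [(0 : Fin n)] := by
  have h0 : (0 : Fin n) ∈ cycMins π := mem_cycMins.mpr (isCycMin_zero π)
  obtain ⟨C, B, hCB⟩ := List.append_of_mem h0
  refine ⟨C, ?_⟩
  have hp := cycMins_pairwise π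
  rw [hCB] at hp ⊢
  rw [List.pairwise_append] at hp
  have hB : B = [] := by
    rw [List.eq_nil_iff_forall_not_mem]
    intro b hb
    have := (List.pairwise_cons.mp hp.2.1).1 b hb
    exact absurd this (not_lt.mpr (fin_zero_le b))
  rw [hB]

lemma exists_cycMin (π : Equiv.Perm (Fin n)) (y : Fin n) :
    ∃ m, isCycMin π m ∧ π.SameCycle m y := by
  have hne : (Finset.univ.filter (fun z => π.SameCycle y z)).Nonempty :=
    ⟨y, by simp [Equiv.Perm.SameCycle.refl]⟩
  have hmem := Finset.min'_mem _ hne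
  simp only [Finset.mem_filter, Finset.mem_univ, true_and] at hmem
  refine ⟨Finset.min' _ hne, ?_, hmem.symm⟩
  intro z hz
  apply Finset.min'_le
  simp only [Finset.mem_filter, Finset.mem_univ, true_and]
  exact hmem.trans hz

lemma psiList_eq (π : Equiv.Perm (Fin n)) :
    psiList π = ((cycMins π).map (seg π)).flatten := by
  rw [psiList]
  induction cycMins π with
  | nil => rfl
  | cons a l ih => simp [ih]

lemma mem_psiList (π : Equiv.Perm (Fin n)) (y : Fin n) : y ∈ psiList π := by
  rw [psiList_eq, List.mem_flatten]
  obtain ⟨m, hm, hmy⟩ := exists_cycMin π y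
  exact ⟨seg π m, List.mem_map_of_mem (mem_cycMins.mpr hm), (mem_seg π m y).mpr hmy⟩

lemma nodup_psiList (π : Equiv.Perm (Fin n)) : (psiList π).Nodup := by
  rw [psiList_eq, List.nodup_flatten]
  constructor
  · intro l hl
    rw [List.mem_map] at hl
    obtain ⟨m, _, rfl⟩ := hl
    exact nodup_seg π m
  · rw [List.pairwise_map]
    refine (cycMins_pairwise π).imp_of_mem ?_
    intro a b ha hb hba y hy1 hy2
    rw [mem_seg] at hy1 hy2
    have hab : π.SameCycle a b := hy1.trans hy2.symm
    have h1 : a ≤ b := mem_cycMins.mp ha b hab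
    have h2 : b ≤ a := mem_cycMins.mp hb a hab.symm
    exact absurd (le_antisymm h1 h2) (ne_of_gt hba)

lemma length_psiList (π : Equiv.Perm (Fin n)) : (psiList π).length = n := by
  have h1 := nodup_psiList π
  have h2 : (psiList π).toFinset = Finset.univ :=
    Finset.eq_univ_iff_forall.mpr fun y => List.mem_toFinset.mpr (mem_psiList π y)
  have h3 := List.toFinset_card_of_nodup h1
  rw [h2] at h3
  simpa using h3.symm

lemma wordN_eq (π : Equiv.Perm (Fin n)) {i : ℕ} (h : i < n) :
    wordN π i = (((psiList π)[i]'(by rw [length_psiList]; exact h) : Fin n) : ℕ) := by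
  have e : wordN π i = ((psiList π).map Fin.val).getD i 0 := by
    unfold wordN
    simp only [bind_pure_comp, List.map_eq_map, List.map_map, List.map_id]
    rfl
  rw [e]
  have hl : i < ((psiList π).map Fin.val).length := by
    rw [List.length_map, length_psiList]; exact h
  have key : ((psiList π).map Fin.val).getD i 0
      = (((psiList π)[i]'(by rw [length_psiList]; exact h) : Fin n) : ℕ) := by
    rw [List.getD_eq_getElem _ _ hl, List.getElem_map]
  exact key

/-! ### `occ3` helpers -/

lemma finite_occ3 (m : ℕ) (w : ℕ → ℕ) (P : ℕ → ℕ → ℕ → Prop) :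
    Finite {t : ℕ × ℕ × ℕ //
      t.1 < t.2.1 ∧ t.2.1 < t.2.2 ∧ t.2.2 < m ∧ P (w t.1) (w t.2.1) (w t.2.2)} := by
  have hsub : {t : ℕ × ℕ × ℕ |
      t.1 < t.2.1 ∧ t.2.1 < t.2.2 ∧ t.2.2 < m ∧ P (w t.1) (w t.2.1) (w t.2.2)} ⊆
      (Set.Iio m ×ˢ (Set.Iio m ×ˢ Set.Iio m)) := by
    rintro ⟨a, b, c⟩ ⟨h1, h2, h3, -⟩
    simp only [Set.mem_prod, Set.mem_Iio]
    exact ⟨h1.trans (h2.trans h3), h2.trans h3, h3⟩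
  have hf : ((Set.Iio m ×ˢ (Set.Iio m ×ˢ Set.Iio m)) : Set (ℕ × ℕ × ℕ)).Finite :=
    (Set.finite_Iio m).prod ((Set.finite_Iio m).prod (Set.finite_Iio m))
  exact (hf.subset hsub).to_subtype

lemma occ3_ne_zero {m : ℕ} {w : ℕ → ℕ} {P : ℕ → ℕ → ℕ → Prop} {i j k : ℕ}
    (hij : i < j) (hjk : j < k) (hk : k < m) (hP : P (w i) (w j) (w k)) :
    occ3 m w P ≠ 0 := by
  rw [occ3]
  haveI := finite_occ3 m w P
  haveI : Nonempty {t : ℕ × ℕ × ℕ //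
      t.1 < t.2.1 ∧ t.2.1 < t.2.2 ∧ t.2.2 < m ∧ P (w t.1) (w t.2.1) (w t.2.2)} :=
    ⟨⟨(i, j, k), hij, hjk, hk, hP⟩⟩
  exact Nat.card_pos.ne'

lemma occ3_eq_zero {m : ℕ} {w : ℕ → ℕ} {P : ℕ → ℕ → ℕ → Prop}
    (h : ∀ i j k, i < j → j < k → k < m → ¬ P (w i) (w j) (w k)) :
    occ3 m w P = 0 := by
  rw [occ3, Nat.card_eq_zero]
  exact Or.inl ⟨fun t => h _ _ _ t.2.1 t.2.2.1 t.2.2.2.1 t.2.2.2.2⟩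

lemma occ_ne_zero_of_sublist (π : Equiv.Perm (Fin n)) {a b c : Fin n}
    (h : [a, b, c] <+ psiList π) (h1 : a < b) (h2 : c < b) :
    occ3 n (wordN π) (fun x y z => x < y ∧ z < y) ≠ 0 := by
  rw [List.sublist_iff_exists_fin_orderEmbedding_get_eq] at h
  obtain ⟨f, hf⟩ := h
  have hlen := length_psiList π
  have e0 := hf ⟨0, by norm_num⟩
  have e1 := hf ⟨1, by norm_num⟩
  have e2 := hf ⟨2, by norm_num⟩
  simp only [List.get_eq_getElem] at e0 e1 e2
  have h01 : ((f ⟨0, by norm_num⟩ : Fin _) : ℕ) < ((f ⟨1, by norm_num⟩ : Fin _) : ℕ) :=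
    f.strictMono (show (⟨0, by norm_num⟩ : Fin ([a, b, c] : List (Fin n)).length)
      < ⟨1, by norm_num⟩ by simp [Fin.lt_def])
  have h12 : ((f ⟨1, by norm_num⟩ : Fin _) : ℕ) < ((f ⟨2, by norm_num⟩ : Fin _) : ℕ) :=
    f.strictMono (show (⟨1, by norm_num⟩ : Fin ([a, b, c] : List (Fin n)).length)
      < ⟨2, by norm_num⟩ by simp [Fin.lt_def])
  have hk : ((f ⟨2, by norm_num⟩ : Fin _) : ℕ) < n := by
    have := (f ⟨2, by norm_num⟩).2; omega
  apply occ3_ne_zero h01 h12 hk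
  have b0 : ((f ⟨0, by norm_num⟩ : Fin _) : ℕ) < n := by
    have := (f ⟨0, by norm_num⟩).2; omega
  have b1 : ((f ⟨1, by norm_num⟩ : Fin _) : ℕ) < n := by
    have := (f ⟨1, by norm_num⟩).2; omega
  have w0 : wordN π ((f ⟨0, by norm_num⟩ : Fin _) : ℕ) = (a : ℕ) := by
    rw [wordN_eq π b0]
    exact congrArg Fin.val (by simpa using e0.symm)
  have w1 : wordN π ((f ⟨1, by norm_num⟩ : Fin _) : ℕ) = (b : ℕ) := by
    rw [wordN_eq π b1]
    exact congrArg Fin.val (by simpa using e1.symm)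
  have w2 : wordN π ((f ⟨2, by norm_num⟩ : Fin _) : ℕ) = (c : ℕ) := by
    rw [wordN_eq π hk]
    exact congrArg Fin.val (by simpa using e2.symm)
  rw [w0, w1, w2]
  exact ⟨h1, h2⟩

/-! ### sublists from indices -/

lemma getElem_pair_sublist {α : Type*} {l : List α} {i j : ℕ} (hij : i < j)
    (hj : j < l.length) :
    [l[i]'(lt_trans hij hj), l[j]] <+ l := by
  have hi : i < l.length := lt_trans hij hj
  have hdi : l.drop i = l[i] :: l.drop (i + 1) := List.drop_eq_getElem_cons hi
  have hmem : l[j] ∈ l.drop (i + 1) := by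
    rw [List.mem_iff_getElem]
    refine ⟨j - (i + 1), by simp [List.length_drop]; omega, ?_⟩
    rw [List.getElem_drop]
    congr 1
    omega
  have hsub : [l[i], l[j]] <+ l.drop i := by
    rw [hdi]
    exact List.Sublist.cons₂ _ (List.singleton_sublist.mpr hmem)
  exact hsub.trans (List.drop_sublist i l)

lemma getElem_triple_sublist {α : Type*} {l : List α} {i j k : ℕ} (hij : i < j)
    (hjk : j < k) (hk : k < l.length) :
    [l[i]'(by omega), l[j]'(by omega), l[k]] <+ l := by
  have hi : i < l.length := by omega
  have hdi : l.drop i = l[i] :: l.drop (i + 1) := List.drop_eq_getElem_cons hi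
  have hj' : j - (i + 1) < (l.drop (i + 1)).length := by simp [List.length_drop]; omega
  have hk' : k - (i + 1) < (l.drop (i + 1)).length := by simp [List.length_drop]; omega
  have e1 : (l.drop (i + 1))[j - (i + 1)]'hj' = l[j]'(by omega) := by
    rw [List.getElem_drop]; congr 1; omega
  have e2 : (l.drop (i + 1))[k - (i + 1)]'hk' = l[k] := by
    rw [List.getElem_drop]; congr 1; omega
  have hsub2 : [l[j]'(by omega), l[k]] <+ l.drop (i + 1) := by
    have := getElem_pair_sublist (l := l.drop (i + 1)) (i := j - (i + 1))
      (j := k - (i + 1)) (by omega) hk'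
    rwa [e1, e2] at this
  have hsub : [l[i], l[j]'(by omega), l[k]] <+ l.drop i := by
    rw [hdi]
    exact List.Sublist.cons₂ _ hsub2
  exact hsub.trans (List.drop_sublist i l)

/-! ### the candidate permutations -/

/-- The permutation cycling through `s` in increasing order and fixing everything else. -/
def cand (s : Finset (Fin n)) : Equiv.Perm (Fin n) := (s.sort (· ≤ ·)).formPerm

lemma sort_getElem_zero [NeZero n] {s : Finset (Fin n)} (h0 : (0 : Fin n) ∈ s)
    (hpos : 0 < (s.sort (· ≤ ·)).length) : (s.sort (· ≤ ·))[0]'hpos = (0 : Fin n) := by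
  have hmem : (0 : Fin n) ∈ s.sort (· ≤ ·) := (Finset.mem_sort _).mpr h0
  obtain ⟨t, ht, hte⟩ := List.mem_iff_getElem.mp hmem
  rcases Nat.eq_zero_or_pos t with rfl | htpos
  · exact hte
  · have hs := Finset.pairwise_sort s (· ≤ ·)
    have hle := List.pairwise_iff_getElem.mp hs 0 t hpos ht htpos
    rw [hte] at hle
    exact le_antisymm hle (fin_zero_le _)

lemma sort_length_pos [NeZero n] {s : Finset (Fin n)} (h0 : (0 : Fin n) ∈ s) :
    0 < (s.sort (· ≤ ·)).length := by
  rw [Finset.length_sort]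
  exact Finset.card_pos.mpr ⟨0, h0⟩

lemma cand_pow_apply_zero [NeZero n] {s : Finset (Fin n)} (h0 : (0 : Fin n) ∈ s) (j : ℕ) :
    (cand s ^ j) 0 = (s.sort (· ≤ ·))[j % (s.sort (· ≤ ·)).length]'
      (Nat.mod_lt _ (sort_length_pos h0)) := by
  have h := List.formPerm_pow_apply_getElem (s.sort (· ≤ ·)) (Finset.sort_nodup _ _) j 0
    (sort_length_pos h0)
  rw [sort_getElem_zero h0 (sort_length_pos h0)] at h
  simpa [cand] using h

lemma cand_fixed {s : Finset (Fin n)} {x : Fin n} (hx : x ∉ s) : cand s x = x :=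
  List.formPerm_apply_of_notMem (by simp [Finset.mem_sort, hx])

lemma sameCycle_zero_cand [NeZero n] {s : Finset (Fin n)} (h0 : (0 : Fin n) ∈ s)
    (y : Fin n) : (cand s).SameCycle 0 y ↔ y ∈ s := by
  constructor
  · intro h
    obtain ⟨i, _, rfl⟩ := h.exists_pow_eq'
    rw [cand_pow_apply_zero h0]
    rw [← Finset.mem_sort (α := Fin n) (· ≤ ·)]
    exact List.getElem_mem _
  · intro hy
    have hy' : y ∈ s.sort (· ≤ ·) := (Finset.mem_sort _).mpr hy
    obtain ⟨t, ht, rfl⟩ := List.mem_iff_getElem.mp hy'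
    refine ⟨t, ?_⟩
    rw [zpow_natCast, cand_pow_apply_zero h0]
    congr 1
    exact Nat.mod_eq_of_lt ht

lemma isCycMin_cand [NeZero n] {s : Finset (Fin n)} (h0 : (0 : Fin n) ∈ s) (x : Fin n) :
    isCycMin (cand s) x ↔ (x ∉ s ∨ x = 0) := by
  constructor
  · intro h
    by_cases hx : x ∈ s
    · right
      have hsc : (cand s).SameCycle x 0 := ((sameCycle_zero_cand h0 x).mpr hx).symm
      have hle := h 0 hsc
      exact le_antisymm hle (fin_zero_le _)
    · exact Or.inl hx
  · rintro (hx | rfl)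
    · intro y hy
      have := (sameCycle_fixed (cand_fixed hx) y).1 hy
      exact this ▸ le_refl _
    · exact isCycMin_zero _

lemma cycLen_cand_zero [NeZero n] {s : Finset (Fin n)} (h0 : (0 : Fin n) ∈ s) :
    cycLen (cand s) 0 = s.card := by
  rw [cycLen, Nat.card_congr (Equiv.subtypeEquivRight (sameCycle_zero_cand h0))]
  simp [Nat.card_eq_fintype_card]

lemma seg_cand_zero [NeZero n] {s : Finset (Fin n)} (h0 : (0 : Fin n) ∈ s) :
    seg (cand s) 0 = s.sort (· ≤ ·) := by
  have hlen : (seg (cand s) 0).length = (s.sort (· ≤ ·)).length := by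
    rw [length_seg, cycLen_cand_zero h0, Finset.length_sort]
  apply List.ext_getElem hlen
  intro i h1 h2
  rw [seg_getElem _ _ h1, cand_pow_apply_zero h0]
  congr 1
  exact Nat.mod_eq_of_lt h2

lemma seg_cand_fixed {s : Finset (Fin n)} {x : Fin n} (hx : x ∉ s) :
    seg (cand s) x = [x] := by
  have h1 : cycLen (cand s) x = 1 := cycLen_fixed (cand_fixed hx)
  simp [seg, h1, List.range_succ, pow_zero]

lemma cycMins_cand [NeZero n] {s : Finset (Fin n)} (h0 : (0 : Fin n) ∈ s) :
    cycMins (cand s) =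
      ((List.finRange n).filter fun x => decide (x ∉ s)).reverse ++ [(0 : Fin n)] := by
  obtain ⟨m, rfl⟩ : ∃ m, n = m + 1 := ⟨n - 1, by have := NeZero.pos n; omega⟩
  rw [cycMins]
  have key : (List.finRange (m + 1)).filter (fun x => decide (isCycMin (cand s) x))
      = (0 : Fin (m + 1)) :: (List.finRange (m + 1)).filter (fun x => decide (x ∉ s)) := by
    rw [List.finRange_succ]
    rw [List.filter_cons_of_pos (by simp [isCycMin_zero]),
      List.filter_cons_of_neg (by simp [h0])]
    congr 1
    apply List.filter_congr
    intro x hx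
    rw [List.mem_map] at hx
    obtain ⟨y, -, rfl⟩ := hx
    have hne : (Fin.succ y : Fin (m + 1)) ≠ 0 := Fin.succ_ne_zero y
    apply decide_eq_decide.mpr
    rw [isCycMin_cand h0]
    constructor
    · rintro (h | h)
      · exact h
      · exact absurd h hne
    · exact Or.inl
  rw [key, List.reverse_cons]

lemma flatten_map_singleton {α : Type*} (l : List α) (f : α → List α)
    (h : ∀ a ∈ l, f a = [a]) : (l.map f).flatten = l := by
  induction l with
  | nil => rfl
  | cons a t ih => simp [h a (by simp), ih fun b hb => h b (by simp [hb])]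

lemma psiList_cand [NeZero n] {s : Finset (Fin n)} (h0 : (0 : Fin n) ∈ s) :
    psiList (cand s) =
      ((List.finRange n).filter fun x => decide (x ∉ s)).reverse ++ s.sort (· ≤ ·) := by
  rw [psiList_eq, cycMins_cand h0, List.map_append, List.flatten_append]
  congr 1
  · apply flatten_map_singleton
    intro a ha
    apply seg_cand_fixed
    rw [List.mem_reverse, List.mem_filter] at ha
    simpa using ha.2
  · simp [seg_cand_zero h0]

lemma occ3_cand [NeZero n] {s : Finset (Fin n)} (h0 : (0 : Fin n) ∈ s) :
    occ3 n (wordN (cand s)) (fun a b c => a < b ∧ c < b) = 0 := by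
  apply occ3_eq_zero
  intro i j k hij hjk hk hP
  obtain ⟨hab, hcb⟩ := hP
  set A := ((List.finRange n).filter fun x => decide (x ∉ s)).reverse with hA
  set B := s.sort (· ≤ ·) with hB
  have hpsi : psiList (cand s) = A ++ B := psiList_cand h0
  have hlen : (psiList (cand s)).length = n := length_psiList _
  have hlenAB : A.length + B.length = n := by
    rw [hpsi, List.length_append] at hlen; exact hlen
  have hAnotmem : ∀ a ∈ A, a ∉ s := by
    intro a ha
    rw [hA, List.mem_reverse, List.mem_filter] at ha
    simpa using ha.2
  have hApair : A.Pairwise (fun a b => b < a) := by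
    rw [hA, List.pairwise_reverse]
    exact List.Pairwise.filter _ (List.pairwise_lt_finRange n)
  have hBsort : B.Pairwise (· < ·) := (Finset.sortedLT_sort s).pairwise
  have hB0 : ∀ (h : 0 < B.length), B[0]'h = (0 : Fin n) := fun h =>
    sort_getElem_zero h0 h
  -- values of the word
  have hw : ∀ (i : ℕ) (h : i < n),
      wordN (cand s) i = ((psiList (cand s))[i]'(by rw [hlen]; exact h) : ℕ) :=
    fun i h => wordN_eq _ h
  -- the two monotonicity claims
  have claimDec : ∀ (i j : ℕ) (hi : i < n) (hj : j < n), i < j → j ≤ A.length →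
      ((psiList (cand s))[j]'(by rw [hlen]; exact hj) : Fin n) <
      ((psiList (cand s))[i]'(by rw [hlen]; exact hi) : Fin n) := by
    intro i j hi hj hij hjA
    have hiA : i < A.length := by omega
    have hpi : (psiList (cand s))[i]'(by rw [hlen]; exact hi) = A[i]'hiA := by
      simp only [hpsi]
      exact List.getElem_append_left hiA
    rcases lt_or_eq_of_le hjA with hjlt | hjeq
    · have hpj : (psiList (cand s))[j]'(by rw [hlen]; exact hj) = A[j]'hjlt := by
        simp only [hpsi]
        exact List.getElem_append_left hjlt
      rw [hpi, hpj]
      exact List.pairwise_iff_getElem.mp hApair i j hiA hjlt hij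
    · have hBpos : 0 < B.length := by omega
      have hpj : (psiList (cand s))[j]'(by rw [hlen]; exact hj) = B[0]'hBpos := by
        simp only [hpsi]
        rw [List.getElem_append_right (by omega)]
        congr 1
        omega
      rw [hpi, hpj, hB0 hBpos]
      have hne : A[i]'hiA ≠ 0 := by
        intro hcontra
        exact hAnotmem _ (List.getElem_mem hiA) (hcontra ▸ h0)
      exact (Fin.pos_iff_ne_zero' _).mpr hne
  have claimInc : ∀ (i j : ℕ) (hi : i < n) (hj : j < n), A.length ≤ i → i < j →
      ((psiList (cand s))[i]'(by rw [hlen]; exact hi) : Fin n) <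
      ((psiList (cand s))[j]'(by rw [hlen]; exact hj) : Fin n) := by
    intro i j hi hj hAi hij
    have hiB : i - A.length < B.length := by omega
    have hjB : j - A.length < B.length := by omega
    have hpi : (psiList (cand s))[i]'(by rw [hlen]; exact hi) = B[i - A.length]'hiB := by
      simp only [hpsi]
      exact List.getElem_append_right hAi
    have hpj : (psiList (cand s))[j]'(by rw [hlen]; exact hj) = B[j - A.length]'hjB := by
      simp only [hpsi]
      exact List.getElem_append_right (by omega)
    rw [hpi, hpj]
    exact List.pairwise_iff_getElem.mp hBsort _ _ hiB hjB (by omega)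
  -- conclude
  have hi : i < n := by omega
  have hj : j < n := by omega
  rw [hw i hi, hw j hj] at hab
  rw [hw k hk, hw j hj] at hcb
  by_cases hcase : j ≤ A.length
  · have := claimDec i j hi hj hij hcase
    rw [Fin.lt_def] at this
    omega
  · have := claimInc j k hj hk (by omega) hjk
    rw [Fin.lt_def] at this
    omega

lemma cyc_eq_length_cycMins (π : Equiv.Perm (Fin n)) :
    cyc π = (cycMins π).length := by
  rw [cyc, Nat.card_eq_fintype_card, Fintype.card_subtype]
  rw [cycMins, List.length_reverse]
  have hnd : ((List.finRange n).filter fun x => decide (isCycMin π x)).Nodup :=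
    (List.nodup_finRange n).filter _
  rw [← List.toFinset_card_of_nodup hnd, List.toFinset_filter, List.toFinset_finRange]
  congr 1
  apply Finset.filter_congr
  intro x _
  simp

lemma cyc_cand [NeZero n] {s : Finset (Fin n)} (h0 : (0 : Fin n) ∈ s) :
    cyc (cand s) = n - s.card + 1 := by
  rw [cyc_eq_length_cycMins, cycMins_cand h0, List.length_append, List.length_reverse]
  have hnd : ((List.finRange n).filter fun x => decide (¬ x ∈ s)).Nodup :=
    (List.nodup_finRange n).filter _
  have htf : ((List.finRange n).filter fun x => decide (¬ x ∈ s)).toFinset = sᶜ := by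
    rw [List.toFinset_filter, List.toFinset_finRange]
    ext x
    simp
  have hcard := List.toFinset_card_of_nodup hnd
  rw [htf] at hcard
  rw [← hcard, Finset.card_compl]
  simp

/-! ### every avoiding permutation is a candidate -/

lemma eq_cand_of_avoid [NeZero n] {π : Equiv.Perm (Fin n)}
    (hocc : occ3 n (wordN π) (fun a b c => a < b ∧ c < b) = 0) :
    π = cand (Finset.univ.filter fun z => π.SameCycle 0 z) := by
  set s : Finset (Fin n) := Finset.univ.filter fun z => π.SameCycle 0 z with hs
  have h0 : (0 : Fin n) ∈ s := by simp [hs, Equiv.Perm.SameCycle.refl]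
  have hmem_s : ∀ y, y ∈ s ↔ π.SameCycle 0 y := by intro y; simp [hs]
  -- Step A: every nonzero cycle minimum is a fixed point
  have stepA : ∀ m : Fin n, isCycMin π m → m ≠ 0 → π m = m := by
    intro m hmin hm0
    by_contra hfix
    have hlen2 : 2 ≤ cycLen π m := by
      have hpos := cycLen_pos π m
      have hne1 : cycLen π m ≠ 1 := fun h' => hfix (fixed_of_cycLen_one h')
      omega
    have hseg0 : ∀ (h : 0 < (seg π m).length), (seg π m)[0]'h = m := by
      intro h; rw [seg_getElem _ _ h]; simp
    have hseg1 : ∀ (h : 1 < (seg π m).length), (seg π m)[1]'h = π m := by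
      intro h; rw [seg_getElem _ _ h]; simp
    have hsc : π.SameCycle m (π m) := ⟨1, by simp⟩
    have hm_le : m ≤ π m := hmin (π m) hsc
    have hm_lt : m < π m := lt_of_le_of_ne hm_le (Ne.symm hfix)
    have hπm0 : π m ≠ 0 := by
      intro hc
      have : π.SameCycle m 0 := hc ▸ hsc
      have := hmin 0 this
      exact hm0 (le_antisymm this (fin_zero_le _))
    have h0lt : (0 : Fin n) < π m := (Fin.pos_iff_ne_zero' _).mpr hπm0
    -- decompose cycMins
    have hmmem : m ∈ cycMins π := mem_cycMins.mpr hmin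
    obtain ⟨C, B, hCB⟩ := List.append_of_mem hmmem
    have h0mem : (0 : Fin n) ∈ cycMins π := mem_cycMins.mpr (isCycMin_zero π)
    have hp := cycMins_pairwise π
    rw [hCB] at hp h0mem
    rw [List.pairwise_append] at hp
    have h0B : (0 : Fin n) ∈ B := by
      rcases List.mem_append.mp h0mem with h | h
      · have := hp.2.2 0 h m (by simp)
        exact absurd this (not_lt.mpr (fin_zero_le m))
      · rcases List.mem_cons.mp h with h | h
        · exact absurd h.symm hm0
        · exact h
    -- build the sublist [m, π m, 0]
    have hpsi : psiList π = ((C.map (seg π)).flatten) ++ (seg π m ++ (B.map (seg π)).flatten) := by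
      rw [psiList_eq, hCB, List.map_append, List.flatten_append, List.map_cons,
        List.flatten_cons]
    have hlen1 : 1 < (seg π m).length := by rw [length_seg]; omega
    have sub1 : [m, π m] <+ seg π m := by
      have := getElem_pair_sublist (l := seg π m) (i := 0) (j := 1) (by omega) hlen1
      rwa [hseg0, hseg1] at this
    have sub2 : [(0 : Fin n)] <+ (B.map (seg π)).flatten :=
      List.singleton_sublist.mpr (List.mem_flatten.mpr
        ⟨seg π 0, List.mem_map_of_mem h0B, (mem_seg π 0 0).mpr (Equiv.Perm.SameCycle.refl _ _)⟩)
    have subtotal : [m, π m, (0 : Fin n)] <+ psiList π := by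
      rw [hpsi]
      have := List.Sublist.append (List.nil_sublist ((C.map (seg π)).flatten))
        (List.Sublist.append sub1 sub2)
      simpa using this
    exact occ_ne_zero_of_sublist π subtotal hm_lt h0lt hocc
  -- Step B: the cycle of 0 is listed in increasing order
  have stepB : (seg π 0).Pairwise (· < ·) := by
    by_contra hsort
    rw [List.pairwise_iff_getElem] at hsort
    push_neg at hsort
    obtain ⟨i, j, hi, hj, hij, hnot⟩ := hsort
    have hnd := nodup_seg π 0
    have hne : (seg π 0)[i] ≠ (seg π 0)[j] := by
      intro hc
      rw [hnd.getElem_inj_iff] at hc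
      omega
    have hji : (seg π 0)[j] < (seg π 0)[i] := lt_of_le_of_ne hnot (Ne.symm hne)
    have hseg00 : ∀ (h : 0 < (seg π 0).length), (seg π 0)[0]'h = (0 : Fin n) := by
      intro h
      rw [seg_getElem _ _ h]; simp
    have hi0 : 0 < i := by
      rcases Nat.eq_zero_or_pos i with rfl | h
      · rw [hseg00 hi] at hji
        exact absurd hji (not_lt.mpr (fin_zero_le _))
      · exact h
    have htriple : [(seg π 0)[0]'(by omega), (seg π 0)[i], (seg π 0)[j]] <+ seg π 0 :=
      getElem_triple_sublist (l := seg π 0) hi0 hij hj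
    obtain ⟨C, hC⟩ := cycMins_eq_concat π
    have hpsi : psiList π = ((C.map (seg π)).flatten) ++ seg π 0 := by
      rw [psiList_eq, hC, List.map_append, List.flatten_append]
      simp
    have subtotal : [(seg π 0)[0]'(by omega), (seg π 0)[i], (seg π 0)[j]] <+ psiList π := by
      rw [hpsi]
      have := List.Sublist.append (List.nil_sublist ((C.map (seg π)).flatten)) htriple
      simpa using this
    have h0i : (seg π 0)[0]'(by omega) < (seg π 0)[i] := by
      rw [hseg00 (by omega)]
      have hnei : (seg π 0)[i] ≠ 0 := by
        intro hc
        have : (seg π 0)[i] = (seg π 0)[0]'(by omega) := by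
          rw [hc]; exact (hseg00 (by omega)).symm
        rw [hnd.getElem_inj_iff] at this
        omega
      exact (Fin.pos_iff_ne_zero' _).mpr hnei
    exact occ_ne_zero_of_sublist π subtotal h0i hji hocc
  -- Step C: conclude
  apply Equiv.ext
  intro x
  by_cases hx : x ∈ s
  · -- x lies in the cycle of 0
    have hx' : π.SameCycle 0 x := (hmem_s x).mp hx
    set L : List (Fin n) := s.sort (· ≤ ·) with hL
    have hsegL : seg π 0 = L := by
      haveI : IsAntisymm (Fin n) (· < ·) := ⟨fun a b h1 h2 => absurd h2 (asymm h1)⟩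
      apply List.Perm.eq_of_pairwise' stepB (Finset.sortedLT_sort s).pairwise
      rw [List.perm_ext_iff_of_nodup (nodup_seg π 0) (Finset.sort_nodup _ _)]
      intro y
      rw [mem_seg, Finset.mem_sort, hmem_s]
    obtain ⟨j, hj, hxe⟩ := List.mem_iff_getElem.mp ((mem_seg π 0 x).mpr hx')
    have hLlen : L.length = cycLen π 0 := by rw [← hsegL, length_seg]
    have hjlen : j < cycLen π 0 := by rw [length_seg] at hj; exact hj
    -- π x = (π ^ (j+1)) 0
    have hx2 : x = (π ^ j) 0 := by rw [← hxe, seg_getElem _ _ hj]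
    have hπx : π x = (π ^ (j + 1)) 0 := by
      rw [hx2, pow_succ']
      simp [Equiv.Perm.mul_apply]
    have hmod : (π ^ ((j + 1) % cycLen π 0)) 0 = (π ^ (j + 1)) 0 := by
      rw [cycLen_eq]
      exact Function.iterate_mod_minimalPeriod_eq (f := ⇑π) (x := (0 : Fin n)) (n := j + 1)
    have hmodlt : (j + 1) % cycLen π 0 < (seg π 0).length := by
      rw [length_seg]
      exact Nat.mod_lt _ (cycLen_pos π 0)
    have hπx2 : π x = (seg π 0)[(j + 1) % cycLen π 0]'hmodlt := by
      rw [seg_getElem _ _ hmodlt, hmod, hπx]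
    -- now compute cand s x
    have hxL : x = L[j]'(by rw [← hsegL]; exact hj) := by
      rw [← hxe]
      exact List.getElem_of_eq hsegL hj
    have hcand : cand s x = L[(j + 1) % L.length]'(Nat.mod_lt _ (by omega)) := by
      rw [hxL, cand]
      exact List.formPerm_apply_getElem L (Finset.sort_nodup _ _) j (by rw [← hsegL]; exact hj)
    rw [hπx2, hcand]
    have : (seg π 0)[(j + 1) % cycLen π 0]'hmodlt
        = L[(j + 1) % cycLen π 0]'(by rw [← hsegL]; exact hmodlt) :=
      List.getElem_of_eq hsegL hmodlt
    rw [this]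
    congr 1
    rw [hLlen]
  · -- x is a fixed point of both
    have hx' : ¬ π.SameCycle 0 x := fun h => hx ((hmem_s x).mpr h)
    obtain ⟨m, hmin, hmc⟩ := exists_cycMin π x
    have hm0 : m ≠ 0 := by
      intro hc
      exact hx' (hc ▸ hmc)
    have hfix : π m = m := stepA m hmin hm0
    have hxm : x = m := (sameCycle_fixed hfix x).mp hmc
    have hπx : π x = x := by rw [hxm, hfix]
    rw [hπx, cand_fixed hx]

/-! ### counting -/

lemma card_subsets [NeZero n] (k : ℕ) (hk : 1 ≤ k) (hkn : k ≤ n) :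
    Nat.card {s : Finset (Fin n) // (0 : Fin n) ∈ s ∧ s.card = n + 1 - k}
      = (n - 1).choose (k - 1) := by
  have e : {s : Finset (Fin n) // (0 : Fin n) ∈ s ∧ s.card = n + 1 - k}
      ≃ {t : Finset (Fin n) // t ∈ Finset.powersetCard (n - k) (Finset.univ.erase 0)} := by
    refine ⟨fun s => ⟨s.1.erase 0, ?_⟩, fun t => ⟨insert 0 t.1, ?_, ?_⟩, ?_, ?_⟩
    · rw [Finset.mem_powersetCard]
      refine ⟨Finset.erase_subset_erase 0 (Finset.subset_univ _), ?_⟩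
      rw [Finset.card_erase_of_mem s.2.1, s.2.2]
      omega
    · exact Finset.mem_insert_self 0 t.1
    · have ht := Finset.mem_powersetCard.mp t.2
      have h0 : (0 : Fin n) ∉ t.1 := by
        intro hc
        have := ht.1 hc
        simp at this
      rw [Finset.card_insert_of_notMem h0, ht.2]
      omega
    · rintro ⟨s, hs1, hs2⟩
      exact Subtype.ext (Finset.insert_erase hs1)
    · rintro ⟨t, ht⟩
      have h0 : (0 : Fin n) ∉ t := by
        intro hc
        have := (Finset.mem_powersetCard.mp ht).1 hc
        simp at this
      exact Subtype.ext (Finset.erase_insert h0)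
  rw [Nat.card_congr e, Nat.card_eq_fintype_card, Fintype.card_coe,
    Finset.card_powersetCard, Finset.card_erase_of_mem (Finset.mem_univ _)]
  simp only [Finset.card_univ, Fintype.card_fin]
  rw [show n - k = (n - 1) - (k - 1) by omega]
  exact Nat.choose_symm (by omega)

end AuxAvoid

/-- For `n ≥ 1` and `1 ≤ k ≤ n`, the number of permutations of `[n]` with `k` cycles
avoiding the partially ordered pattern 1-2-1' (positions `i < j < k` of `Ψ(π)` with
`w i < w j` and `w k < w j`) is the binomial coefficient `C(n-1, k-1)`. -/
theorem avoid121'_count (n k : ℕ) (hn : 1 ≤ n) (hk : 1 ≤ k) (hkn : k ≤ n) :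
    Nat.card {π : Equiv.Perm (Fin n) //
        cyc π = k ∧ occ3 n (wordN π) (fun a b c => a < b ∧ c < b) = 0}
      = (n - 1).choose (k - 1) := by
  haveI : NeZero n := ⟨by omega⟩
  open AuxAvoid in
  have key : Nat.card {π : Equiv.Perm (Fin n) //
        cyc π = k ∧ occ3 n (wordN π) (fun a b c => a < b ∧ c < b) = 0}
      = Nat.card {s : Finset (Fin n) // (0 : Fin n) ∈ s ∧ s.card = n + 1 - k} := by
    apply Nat.card_congr
    refine ⟨fun p => ⟨Finset.univ.filter fun z => (p.1).SameCycle 0 z, ?_, ?_⟩,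
      fun s => ⟨AuxAvoid.cand s.1, ?_, ?_⟩, ?_, ?_⟩
    · simp [Equiv.Perm.SameCycle.refl]
    · -- card of orbit is n + 1 - k
      obtain ⟨π, hcyc, hocc⟩ := p
      have hπ := AuxAvoid.eq_cand_of_avoid hocc
      set s := Finset.univ.filter fun z => π.SameCycle 0 z with hs
      have h0 : (0 : Fin n) ∈ s := by simp [hs, Equiv.Perm.SameCycle.refl]
      have hcc : cyc (AuxAvoid.cand s) = k := by rw [← hπ]; exact hcyc
      rw [AuxAvoid.cyc_cand h0] at hcc
      have hc1 : 1 ≤ s.card := Finset.card_pos.mpr ⟨0, h0⟩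
      have hc2 : s.card ≤ n := by
        have := Finset.card_le_card (Finset.subset_univ s)
        simpa using this
      omega
    · -- cyc of cand
      obtain ⟨s, h0, hcard⟩ := s
      rw [AuxAvoid.cyc_cand h0, hcard]
      omega
    · -- occ3 of cand
      obtain ⟨s, h0, hcard⟩ := s
      exact AuxAvoid.occ3_cand h0
    · -- left inverse
      rintro ⟨π, hcyc, hocc⟩
      exact Subtype.ext (AuxAvoid.eq_cand_of_avoid hocc).symm
    · -- right inverse
      rintro ⟨s, h0, hcard⟩
      apply Subtype.ext
      simp only
      ext y
      simp only [Finset.mem_filter, Finset.mem_univ, true_and]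
      exact AuxAvoid.sameCycle_zero_cand h0 y
  rw [key]
  exact AuxAvoid.card_subsets k hk hkn
end
end
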